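/- arXiv:1801.06947 — 4 statements merged into one kernel-verified Lean document; each statement's English description precedes it below -/
import Mathlib

section
/- Let k ≤ n be positive integers. Let σ be an ordered set partition of [n] = {1,…,n} into k blocks, let g = g_1⋯g_n be the word obtained by writing the blocks of σ in order with the elements of each block listed increasingly, and call a position 1 ≤ i ≤ n−1 a starred ascent if g_i < g_{i+1} and g_i, g_{i+1} lie in the same block of σ, an unstarred ascent if g_i < g_{i+1} and they lie in different blocks, and a descent if g_i > g_{i+1}. Set maj(g) = Σ_{i descent} i, comaj(σ) = maj(g) + #{(i,i′) : i < i′, i a starred ascent, i′ an unstarred ascent}, and maj_HRS(σ) = Σ_{i ascent of g} w_i, where w_i is the number of blocks of σ entirely contained in {g_1,…,g_i}. Then comaj(σ) = (n−k)(k−1) + k(k−1)/2 − maj_HRS(σ). -/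
open scoped Classical
open Finset

noncomputable section

lemma aux_swap {α β : Type*} (s : Finset α) (t : Finset β) (r : α → β → Prop)
    [∀ a b, Decidable (r a b)] :
    ∑ a ∈ s, (t.filter (fun b => r a b)).card = ∑ b ∈ t, (s.filter (fun a => r a b)).card := by
  simp only [Finset.card_filter]
  rw [Finset.sum_comm]

lemma aux_choose_two (m : ℕ) : 2 * Nat.choose m 2 = m * (m - 1) := by
  induction m with
  | zero => simp
  | succ p ih =>
    cases p with
    | zero => simp
    | succ q =>
      have h2 : Nat.succ 1 = 2 := rfl
      rw [Nat.choose_succ_succ, h2, Nat.mul_add, Nat.choose_one_right, ih]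
      simp only [Nat.succ_sub_one, Nat.add_sub_cancel]
      ring

lemma aux_card_lt (n m : ℕ) (h : m ≤ n) :
    ((univ : Finset (Fin n)).filter fun j : Fin n => (j : ℕ) < m).card = m := by
  induction m with
  | zero => simp
  | succ p ih =>
    have hp := ih (by omega)
    have he : ((univ : Finset (Fin n)).filter fun j : Fin n => (j : ℕ) < p + 1)
        = insert (⟨p, by omega⟩ : Fin n) ((univ : Finset (Fin n)).filter fun j : Fin n => (j : ℕ) < p) := by
      ext j
      simp only [mem_filter, mem_univ, true_and, mem_insert, Fin.ext_iff]
      omega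
    rw [he, card_insert_of_notMem (by simp), hp]


/-- The descent set of the word `w` (0-indexed positions `i` with `w i > w (i+1)`). -/
def desSet0 (n : ℕ) (w : Equiv.Perm (Fin n)) : Finset (Fin n) :=
  univ.filter fun i => ∃ j : Fin n, (j : ℕ) = (i : ℕ) + 1 ∧ w j < w i

/-- Starred ascents: positions `i` with `w i < w (i+1)` and both letters in the same block. -/
def starAsc (n k : ℕ) (w : Equiv.Perm (Fin n)) (blk : Fin n → Fin k) : Finset (Fin n) :=
  univ.filter fun i => ∃ j : Fin n, (j : ℕ) = (i : ℕ) + 1 ∧ w i < w j ∧ blk (w i) = blk (w j)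

/-- Unstarred ascents: positions `i` with `w i < w (i+1)` whose letters lie in different
blocks. -/
def unstarAsc (n k : ℕ) (w : Equiv.Perm (Fin n)) (blk : Fin n → Fin k) : Finset (Fin n) :=
  univ.filter fun i => ∃ j : Fin n, (j : ℕ) = (i : ℕ) + 1 ∧ w i < w j ∧ blk (w i) ≠ blk (w j)

/-- `maj(g) = Σ_{i descent} i` (1-based positions). -/
def maj0 (n : ℕ) (w : Equiv.Perm (Fin n)) : ℕ :=
  ∑ i ∈ desSet0 n w, ((i : ℕ) + 1)

/-- `comaj(σ) = maj(g) + #{(i,i') : i < i', i a starred ascent, i' an unstarred ascent}`. -/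
def comaj0 (n k : ℕ) (w : Equiv.Perm (Fin n)) (blk : Fin n → Fin k) : ℕ :=
  maj0 n w + (univ.filter fun p : Fin n × Fin n =>
    (p.1 : ℕ) < (p.2 : ℕ) ∧ p.1 ∈ starAsc n k w blk ∧ p.2 ∈ unstarAsc n k w blk).card

/-- The weight `w_i`: the number of blocks entirely contained in `{g_1, …, g_{i+1}}`
(the first `i+1` letters, `i` 0-indexed). -/
def weight0 (n k : ℕ) (B : Fin k → Finset (Fin n)) (w : Equiv.Perm (Fin n)) (i : Fin n) : ℕ :=
  (univ.filter fun b : Fin k =>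
    B b ⊆ univ.filter fun a : Fin n => ∃ l : Fin n, l ≤ i ∧ w l = a).card

/-- The Haglund–Rhoades–Shimozono major index: the sum of the weights `w_i` over all
ascents `i` of `g`. -/
def majHRS (n k : ℕ) (B : Fin k → Finset (Fin n)) (w : Equiv.Perm (Fin n))
    (blk : Fin n → Fin k) : ℕ :=
  ∑ i ∈ starAsc n k w blk ∪ unstarAsc n k w blk, weight0 n k B w i

/-- For an ordered set partition `σ` of `[n]` into `k` blocks, with
canonical word `g` (blocks in order, elements of each block increasing),
`comaj(σ) = (n-k)(k-1) + C(k,2) - maj_HRS(σ)`. Here `B` lists the blocks, `blk` assigns to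
each element its block, and `w` is the canonical word (position `i` holds the letter `w i`). -/
theorem comaj_eq_of_ordered_set_partition (n k : ℕ) (hk : 1 ≤ k) (hkn : k ≤ n)
    (B : Fin k → Finset (Fin n))
    (hne : ∀ b, (B b).Nonempty)
    (hdisj : ∀ b b', b ≠ b' → Disjoint (B b) (B b'))
    (hcover : ∀ x : Fin n, ∃ b, x ∈ B b)
    (blk : Fin n → Fin k) (hblk : ∀ x, x ∈ B (blk x))
    (w : Equiv.Perm (Fin n))
    (hword₁ : ∀ i j : Fin n, i ≤ j → blk (w i) ≤ blk (w j))
    (hword₂ : ∀ i j : Fin n, i ≤ j → blk (w i) = blk (w j) → w i ≤ w j) :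
    (comaj0 n k w blk : ℤ) =
      ((n : ℤ) - k) * ((k : ℤ) - 1) + (Nat.choose k 2 : ℤ) - majHRS n k B w blk := by
  classical
  set S := starAsc n k w blk with hSdef
  set U := unstarAsc n k w blk with hUdef
  set D := desSet0 n w with hDdef
  have hbu : ∀ (x : Fin n) (b : Fin k), x ∈ B b → blk x = b := by
    intro x b hx
    by_contra hne'
    exact (Finset.disjoint_left.mp (hdisj _ _ hne') (hblk x)) hx
  have hsurj : ∀ b : Fin k, ∃ i : Fin n, blk (w i) = b := by
    intro b
    obtain ⟨x, hx⟩ := hne b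
    refine ⟨w.symm x, ?_⟩
    rw [Equiv.apply_symm_apply]
    exact hbu x b hx
  -- membership characterizations
  have hmemS : ∀ i : Fin n, i ∈ S ↔
      ∃ hi : (i : ℕ) + 1 < n, w i < w ⟨(i : ℕ) + 1, hi⟩ ∧
        blk (w i) = blk (w ⟨(i : ℕ) + 1, hi⟩) := by
    intro i
    rw [hSdef]
    simp only [starAsc, mem_filter, mem_univ, true_and]
    constructor
    · rintro ⟨j, hj, h1, h2⟩
      have hi : (i : ℕ) + 1 < n := hj ▸ j.isLt
      have hje : j = ⟨(i : ℕ) + 1, hi⟩ := by rw [Fin.ext_iff]; exact hj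
      rw [hje] at h1 h2
      exact ⟨hi, h1, h2⟩
    · rintro ⟨hi, h1, h2⟩
      exact ⟨⟨(i : ℕ) + 1, hi⟩, rfl, h1, h2⟩
  have hmemU : ∀ i : Fin n, i ∈ U ↔
      ∃ hi : (i : ℕ) + 1 < n, w i < w ⟨(i : ℕ) + 1, hi⟩ ∧
        blk (w i) ≠ blk (w ⟨(i : ℕ) + 1, hi⟩) := by
    intro i
    rw [hUdef]
    simp only [unstarAsc, mem_filter, mem_univ, true_and]
    constructor
    · rintro ⟨j, hj, h1, h2⟩
      have hi : (i : ℕ) + 1 < n := hj ▸ j.isLt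
      have hje : j = ⟨(i : ℕ) + 1, hi⟩ := by rw [Fin.ext_iff]; exact hj
      rw [hje] at h1 h2
      exact ⟨hi, h1, h2⟩
    · rintro ⟨hi, h1, h2⟩
      exact ⟨⟨(i : ℕ) + 1, hi⟩, rfl, h1, h2⟩
  have hmemD : ∀ i : Fin n, i ∈ D ↔
      ∃ hi : (i : ℕ) + 1 < n, w ⟨(i : ℕ) + 1, hi⟩ < w i := by
    intro i
    rw [hDdef]
    simp only [desSet0, mem_filter, mem_univ, true_and]
    constructor
    · rintro ⟨j, hj, h1⟩
      have hi : (i : ℕ) + 1 < n := hj ▸ j.isLt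
      have hje : j = ⟨(i : ℕ) + 1, hi⟩ := by rw [Fin.ext_iff]; exact hj
      rw [hje] at h1
      exact ⟨hi, h1⟩
    · rintro ⟨hi, h1⟩
      exact ⟨⟨(i : ℕ) + 1, hi⟩, rfl, h1⟩
  have hPS : ∀ i ∈ S, (i : ℕ) + 1 < n := by
    intro i hi
    obtain ⟨h, -⟩ := (hmemS i).mp hi
    exact h
  have hBdP : ∀ i ∈ U ∪ D, (i : ℕ) + 1 < n := by
    intro i hi
    rcases mem_union.mp hi with h | h
    · obtain ⟨h2, -⟩ := (hmemU i).mp h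
      exact h2
    · obtain ⟨h2, -⟩ := (hmemD i).mp h
      exact h2
  -- disjointness
  have hdisjSU : Disjoint S U := by
    rw [Finset.disjoint_left]
    intro i h1 h2
    obtain ⟨hi, _, he1⟩ := (hmemS i).mp h1
    obtain ⟨hi2, _, he2⟩ := (hmemU i).mp h2
    exact he2 he1
  have hdisjSD : Disjoint S D := by
    rw [Finset.disjoint_left]
    intro i h1 h2
    obtain ⟨hi, hl1, _⟩ := (hmemS i).mp h1
    obtain ⟨hi2, hl2⟩ := (hmemD i).mp h2
    exact absurd hl1 (not_lt.mpr (le_of_lt hl2))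
  have hdisjUD : Disjoint U D := by
    rw [Finset.disjoint_left]
    intro i h1 h2
    obtain ⟨hi, hl1, _⟩ := (hmemU i).mp h1
    obtain ⟨hi2, hl2⟩ := (hmemD i).mp h2
    exact absurd hl1 (not_lt.mpr (le_of_lt hl2))
  have hdisjS_Bd : Disjoint S (U ∪ D) := by
    rw [Finset.disjoint_union_right]
    exact ⟨hdisjSU, hdisjSD⟩
  -- boundary characterization
  have hBd_iff : ∀ (i : Fin n) (hi : (i : ℕ) + 1 < n),
      (i ∈ U ∪ D ↔ blk (w i) < blk (w ⟨(i : ℕ) + 1, hi⟩)) := by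
    intro i hi
    have hle : i ≤ (⟨(i : ℕ) + 1, hi⟩ : Fin n) := by
      rw [Fin.le_def]; exact Nat.le_succ _
    constructor
    · intro hmem
      rcases mem_union.mp hmem with h | h
      · obtain ⟨hi', h1, h2⟩ := (hmemU i).mp h
        exact lt_of_le_of_ne (hword₁ _ _ hle) h2
      · obtain ⟨hi', h1⟩ := (hmemD i).mp h
        refine lt_of_le_of_ne (hword₁ _ _ hle) ?_
        intro heq
        exact absurd (hword₂ _ _ hle heq) (not_le.mpr h1)
    · intro hlt
      have hne2 : w i ≠ w ⟨(i : ℕ) + 1, hi⟩ := by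
        intro heq
        have h2 : (i : ℕ) = (i : ℕ) + 1 := congrArg Fin.val (w.injective heq)
        omega
      rcases lt_or_gt_of_ne hne2 with h | h
      · exact Finset.mem_union_left _ ((hmemU i).mpr ⟨hi, h, ne_of_lt hlt⟩)
      · exact Finset.mem_union_right _ ((hmemD i).mpr ⟨hi, h⟩)
  have htri : ∀ i : Fin n, (i : ℕ) + 1 < n → i ∈ S ∪ (U ∪ D) := by
    intro i hi
    by_cases hb : i ∈ U ∪ D
    · exact Finset.mem_union_right _ hb
    · apply Finset.mem_union_left
      have hle : i ≤ (⟨(i : ℕ) + 1, hi⟩ : Fin n) := by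
        rw [Fin.le_def]; exact Nat.le_succ _
      have heq : blk (w i) = blk (w ⟨(i : ℕ) + 1, hi⟩) :=
        le_antisymm (hword₁ _ _ hle) (not_lt.mp (fun h => hb ((hBd_iff i hi).mpr h)))
      have hlt2 : w i < w ⟨(i : ℕ) + 1, hi⟩ := by
        refine lt_of_le_of_ne (hword₂ _ _ hle heq) ?_
        intro heq2
        have h2 : (i : ℕ) = (i : ℕ) + 1 := congrArg Fin.val (w.injective heq2)
        omega
      exact (hmemS i).mpr ⟨hi, hlt2, heq⟩
  have hSBd : ∀ i : Fin n, i ∈ S ∪ (U ∪ D) ↔ (i : ℕ) + 1 < n := by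
    intro i
    constructor
    · intro h
      rcases mem_union.mp h with h1 | h1
      · exact hPS i h1
      · exact hBdP i h1
    · exact htri i
  -- the jump lemma
  have hjump : ∀ (i : Fin n) (hi : (i : ℕ) + 1 < n),
      blk (w i) < blk (w ⟨(i : ℕ) + 1, hi⟩) →
      (blk (w ⟨(i : ℕ) + 1, hi⟩) : ℕ) = (blk (w i) : ℕ) + 1 := by
    intro i hi hlt
    rw [Fin.lt_def] at hlt
    by_contra hne2
    have h1 : (blk (w i) : ℕ) + 1 < (blk (w ⟨(i : ℕ) + 1, hi⟩) : ℕ) := by omega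
    have hb : (blk (w i) : ℕ) + 1 < k := lt_trans h1 (blk (w ⟨(i : ℕ) + 1, hi⟩)).isLt
    obtain ⟨j, hj⟩ := hsurj ⟨(blk (w i) : ℕ) + 1, hb⟩
    have hjv : (blk (w j) : ℕ) = (blk (w i) : ℕ) + 1 := by rw [hj]
    rcases le_or_gt j i with h | h
    · have h2 := hword₁ j i h
      rw [Fin.le_def] at h2
      omega
    · have h3 : (⟨(i : ℕ) + 1, hi⟩ : Fin n) ≤ j := by
        rw [Fin.le_def]
        rw [Fin.lt_def] at h
        exact h
      have h2 := hword₁ _ j h3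
      rw [Fin.le_def] at h2
      omega
  -- cumulative count of boundaries
  have hcum : ∀ (t : ℕ) (ht : t < n),
      ((U ∪ D).filter fun j : Fin n => (j : ℕ) < t).card = (blk (w ⟨t, ht⟩) : ℕ) := by
    intro t
    induction t with
    | zero =>
      intro ht
      have h0 : ((U ∪ D).filter fun j : Fin n => (j : ℕ) < 0) = ∅ := by
        apply Finset.filter_false_of_mem
        intro j _
        omega
      rw [h0]
      obtain ⟨j, hj⟩ := hsurj ⟨0, hk⟩
      have h2 := hword₁ ⟨0, ht⟩ j (by rw [Fin.le_def]; exact Nat.zero_le _)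
      rw [hj, Fin.le_def] at h2
      simp only [Fin.val_mk] at h2
      simp only [card_empty]
      omega
    | succ t ih =>
      intro ht
      have ht' : t < n := by omega
      have hih := ih ht'
      by_cases hmem : (⟨t, ht'⟩ : Fin n) ∈ U ∪ D
      · have he : ((U ∪ D).filter fun j : Fin n => (j : ℕ) < t + 1)
            = insert (⟨t, ht'⟩ : Fin n)
              ((U ∪ D).filter fun j : Fin n => (j : ℕ) < t) := by
          ext j
          simp only [mem_filter, mem_insert, Fin.ext_iff]
          constructor
          · rintro ⟨h1, h2⟩
            rcases (by omega : (j : ℕ) = t ∨ (j : ℕ) < t) with h3 | h3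
            · exact Or.inl h3
            · exact Or.inr ⟨h1, h3⟩
          · rintro (h3 | ⟨h1, h3⟩)
            · have hje : j = ⟨t, ht'⟩ := by rw [Fin.ext_iff]; exact h3
              rw [hje]
              exact ⟨hmem, by omega⟩
            · exact ⟨h1, by omega⟩
        have hnm : (⟨t, ht'⟩ : Fin n) ∉ ((U ∪ D).filter fun j : Fin n => (j : ℕ) < t) := by
          simp only [mem_filter]
          rintro ⟨-, h⟩
          omega
        rw [he, card_insert_of_notMem hnm, hih]
        have hlt : blk (w ⟨t, ht'⟩) < blk (w ⟨t + 1, ht⟩) := (hBd_iff ⟨t, ht'⟩ ht).mp hmem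
        have hj2 : (blk (w ⟨t + 1, ht⟩) : ℕ) = (blk (w ⟨t, ht'⟩) : ℕ) + 1 :=
          hjump ⟨t, ht'⟩ ht hlt
        omega
      · have he : ((U ∪ D).filter fun j : Fin n => (j : ℕ) < t + 1)
            = ((U ∪ D).filter fun j : Fin n => (j : ℕ) < t) := by
          ext j
          simp only [mem_filter]
          constructor
          · rintro ⟨h1, h2⟩
            refine ⟨h1, ?_⟩
            rcases (by omega : (j : ℕ) = t ∨ (j : ℕ) < t) with h3 | h3
            · exfalso
              have hje : j = ⟨t, ht'⟩ := by rw [Fin.ext_iff]; exact h3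
              rw [hje] at h1
              exact hmem h1
            · exact h3
          · rintro ⟨h1, h2⟩
            exact ⟨h1, by omega⟩
        rw [he, hih]
        have hnlt : ¬ blk (w ⟨t, ht'⟩) < blk (w ⟨t + 1, ht⟩) :=
          fun hlt => hmem ((hBd_iff ⟨t, ht'⟩ ht).mpr hlt)
        have hle2 : blk (w ⟨t, ht'⟩) ≤ blk (w ⟨t + 1, ht⟩) :=
          hword₁ _ _ (by rw [Fin.le_def]; exact Nat.le_succ _)
        have heq : blk (w ⟨t, ht'⟩) = blk (w ⟨t + 1, ht⟩) :=
          le_antisymm hle2 (not_lt.mp hnlt)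
        rw [heq]
  have hcumF : ∀ i : Fin n,
      ((U ∪ D).filter fun j : Fin n => (j : ℕ) < (i : ℕ)).card = (blk (w i) : ℕ) :=
    fun i => hcum (i : ℕ) i.isLt
  -- total boundary count
  have hn1 : n - 1 < n := by omega
  have hBdcard : (U ∪ D).card = k - 1 := by
    have he : ((U ∪ D).filter fun j : Fin n => (j : ℕ) < n - 1) = U ∪ D := by
      apply Finset.filter_true_of_mem
      intro j hj
      have := hBdP j hj
      omega
    have h2 := hcum (n - 1) hn1
    rw [he] at h2
    obtain ⟨j, hj⟩ := hsurj ⟨k - 1, by omega⟩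
    have h3 := hword₁ j ⟨n - 1, hn1⟩
      (by rw [Fin.le_def]; simp only [Fin.val_mk]; have := j.isLt; omega)
    rw [hj, Fin.le_def] at h3
    simp only [Fin.val_mk] at h3
    have h4 := (blk (w ⟨n - 1, hn1⟩)).isLt
    omega
  -- weight identification
  have hweight : ∀ (i : Fin n) (hi : (i : ℕ) + 1 < n),
      weight0 n k B w i = (blk (w ⟨(i : ℕ) + 1, hi⟩) : ℕ) := by
    intro i hi
    have hset : (univ.filter fun b : Fin k =>
        B b ⊆ univ.filter fun a : Fin n => ∃ l : Fin n, l ≤ i ∧ w l = a)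
        = univ.filter fun b : Fin k => (b : ℕ) < (blk (w ⟨(i : ℕ) + 1, hi⟩) : ℕ) := by
      ext b
      simp only [mem_filter, mem_univ, true_and]
      constructor
      · intro hsub
        rcases lt_trichotomy ((b : ℕ)) ((blk (w ⟨(i : ℕ) + 1, hi⟩) : ℕ)) with h | h | h
        · exact h
        · exfalso
          have hbe : blk (w ⟨(i : ℕ) + 1, hi⟩) = b := by rw [Fin.ext_iff]; omega
          have hx : w ⟨(i : ℕ) + 1, hi⟩ ∈ B b := hbe ▸ hblk (w ⟨(i : ℕ) + 1, hi⟩)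
          have hx2 := hsub hx
          simp only [mem_filter, mem_univ, true_and] at hx2
          obtain ⟨l, hl, hwl⟩ := hx2
          have hle2 : l = ⟨(i : ℕ) + 1, hi⟩ := w.injective hwl
          rw [hle2, Fin.le_def] at hl
          simp only [Fin.val_mk] at hl
          omega
        · exfalso
          obtain ⟨a, ha⟩ := hne b
          have hx2 := hsub ha
          simp only [mem_filter, mem_univ, true_and] at hx2
          obtain ⟨l, hl, hwl⟩ := hx2
          have hba : (blk (w l) : ℕ) = (b : ℕ) := by rw [hwl, hbu a b ha]
          have hle3 : l ≤ (⟨(i : ℕ) + 1, hi⟩ : Fin n) := by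
            rw [Fin.le_def]
            simp only [Fin.val_mk]
            rw [Fin.le_def] at hl
            omega
          have h4 := hword₁ l _ hle3
          rw [Fin.le_def] at h4
          omega
      · intro hlt a ha
        simp only [mem_filter, mem_univ, true_and]
        refine ⟨w.symm a, ?_, Equiv.apply_symm_apply w a⟩
        have h2 : (blk (w (w.symm a)) : ℕ) = (b : ℕ) := by
          rw [Equiv.apply_symm_apply, hbu a b ha]
        by_contra hnot
        have h3 : (⟨(i : ℕ) + 1, hi⟩ : Fin n) ≤ w.symm a := by
          rw [Fin.le_def]
          simp only [Fin.val_mk]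
          rw [Fin.le_def] at hnot
          omega
        have h4 := hword₁ _ (w.symm a) h3
        rw [Fin.le_def] at h4
        omega
    rw [weight0, hset, aux_card_lt k _ (le_of_lt (blk (w ⟨(i : ℕ) + 1, hi⟩)).isLt)]
  -- counting below a position
  have hbelow : ∀ i' : Fin n,
      (S.filter fun j : Fin n => (j : ℕ) < (i' : ℕ)).card
      + ((U ∪ D).filter fun j : Fin n => (j : ℕ) < (i' : ℕ)).card = (i' : ℕ) := by
    intro i'
    rw [← card_union_of_disjoint (Finset.disjoint_filter_filter hdisjS_Bd), ← filter_union]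
    have he : ((S ∪ (U ∪ D)).filter fun j : Fin n => (j : ℕ) < (i' : ℕ))
        = univ.filter fun j : Fin n => (j : ℕ) < (i' : ℕ) := by
      ext j
      rw [mem_filter, mem_filter, hSBd j]
      have := i'.isLt
      simp only [mem_univ, true_and]
      omega
    rw [he, aux_card_lt n _ (le_of_lt i'.isLt)]
  -- counting above a boundary position
  have habove : ∀ j ∈ U ∪ D,
      ((j : ℕ) + 1) + (S.filter fun i : Fin n => (j : ℕ) < (i : ℕ)).card
        + ((U ∪ D).filter fun i : Fin n => (j : ℕ) < (i : ℕ)).card = n - 1 := by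
    intro j hj
    have hjP : (j : ℕ) + 1 < n := hBdP j hj
    have hsplit : (univ.filter fun i : Fin n => (i : ℕ) + 1 < n)
        = (univ.filter fun i : Fin n => (i : ℕ) ≤ (j : ℕ))
          ∪ ((S ∪ (U ∪ D)).filter fun i : Fin n => (j : ℕ) < (i : ℕ)) := by
      ext i
      rw [Finset.mem_union, mem_filter, mem_filter, mem_filter, hSBd i]
      simp only [mem_univ, true_and]
      omega
    have hd2 : Disjoint (univ.filter fun i : Fin n => (i : ℕ) ≤ (j : ℕ))
        ((S ∪ (U ∪ D)).filter fun i : Fin n => (j : ℕ) < (i : ℕ)) := by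
      rw [Finset.disjoint_left]
      intro a h1 h2
      rw [mem_filter] at h1 h2
      omega
    have hcards := congrArg Finset.card hsplit
    rw [card_union_of_disjoint hd2, filter_union,
      card_union_of_disjoint (Finset.disjoint_filter_filter hdisjS_Bd)] at hcards
    have hL : (univ.filter fun i : Fin n => (i : ℕ) + 1 < n).card = n - 1 := by
      have he2 : (univ.filter fun i : Fin n => (i : ℕ) + 1 < n)
          = univ.filter fun i : Fin n => (i : ℕ) < n - 1 := by
        ext i
        simp only [mem_filter, mem_univ, true_and]
        omega
      rw [he2, aux_card_lt n (n - 1) (by omega)]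
    have hM : (univ.filter fun i : Fin n => (i : ℕ) ≤ (j : ℕ)).card = (j : ℕ) + 1 := by
      have he3 : (univ.filter fun i : Fin n => (i : ℕ) ≤ (j : ℕ))
          = univ.filter fun i : Fin n => (i : ℕ) < (j : ℕ) + 1 := by
        ext i
        simp only [mem_filter, mem_univ, true_and]
        omega
      rw [he3, aux_card_lt n _ (by have := j.isLt; omega)]
    rw [hL, hM] at hcards
    omega
  -- three-way split of the boundary set at a boundary position
  have hsplit3 : ∀ j ∈ U ∪ D,
      ((U ∪ D).filter fun i : Fin n => (i : ℕ) < (j : ℕ)).card + 1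
        + ((U ∪ D).filter fun i : Fin n => (j : ℕ) < (i : ℕ)).card = (U ∪ D).card := by
    intro j hj
    have hbase := Finset.card_filter_add_card_filter_not
      (s := U ∪ D) (p := fun i : Fin n => (i : ℕ) < (j : ℕ))
    have he : ((U ∪ D).filter fun i : Fin n => ¬ (i : ℕ) < (j : ℕ))
        = insert j ((U ∪ D).filter fun i : Fin n => (j : ℕ) < (i : ℕ)) := by
      ext i
      simp only [mem_filter, mem_insert, Fin.ext_iff]
      constructor
      · rintro ⟨h1, h2⟩
        rcases (by omega : (i : ℕ) = (j : ℕ) ∨ (j : ℕ) < (i : ℕ)) with h3 | h3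
        · exact Or.inl h3
        · exact Or.inr ⟨h1, h3⟩
      · rintro (h3 | ⟨h1, h3⟩)
        · have hij : i = j := by rw [Fin.ext_iff]; exact h3
          rw [hij]
          exact ⟨hj, by omega⟩
        · exact ⟨h1, by omega⟩
    have hnm : j ∉ ((U ∪ D).filter fun i : Fin n => (j : ℕ) < (i : ℕ)) := by
      simp only [mem_filter]
      rintro ⟨-, h⟩
      omega
    rw [he, card_insert_of_notMem hnm] at hbase
    omega
  -- the cross-pair count
  have hcross : (univ.filter fun p : Fin n × Fin n =>
        (p.1 : ℕ) < (p.2 : ℕ) ∧ p.1 ∈ S ∧ p.2 ∈ U).card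
      = ∑ i' ∈ U, (S.filter fun j : Fin n => (j : ℕ) < (i' : ℕ)).card := by
    rw [Finset.card_filter, Fintype.sum_prod_type, Finset.sum_comm]
    have hinner : ∀ b : Fin n,
        (∑ a : Fin n, if ((a : ℕ) < (b : ℕ) ∧ a ∈ S ∧ b ∈ U) then 1 else 0)
        = if b ∈ U then (S.filter fun j : Fin n => (j : ℕ) < (b : ℕ)).card else 0 := by
      intro b
      by_cases hb : b ∈ U
      · rw [if_pos hb]
        rw [Finset.sum_boole]
        have he : (univ.filter fun a : Fin n => (a : ℕ) < (b : ℕ) ∧ a ∈ S ∧ b ∈ U)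
            = S.filter fun j : Fin n => (j : ℕ) < (b : ℕ) := by
          ext a
          simp only [mem_filter, mem_univ, true_and, hb, and_true]
          tauto
        rw [he]
        exact Nat.cast_id _
      · rw [if_neg hb]
        apply Finset.sum_eq_zero
        intro a _
        rw [if_neg]
        tauto
    calc (∑ b : Fin n, ∑ a : Fin n, if ((a : ℕ) < (b : ℕ) ∧ a ∈ S ∧ b ∈ U) then 1 else 0)
        = ∑ b : Fin n, if b ∈ U then (S.filter fun j : Fin n => (j : ℕ) < (b : ℕ)).card else 0 := by
          exact Finset.sum_congr rfl fun b _ => hinner b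
      _ = ∑ i' ∈ U, (S.filter fun j : Fin n => (j : ℕ) < (i' : ℕ)).card := by
          rw [Finset.sum_ite_mem, Finset.univ_inter]
  -- ==== integer-level reductions ====
  have R1 : (comaj0 n k w blk : ℤ)
      = (∑ i ∈ D, ((i : ℤ) + 1)) + (∑ i ∈ U, (i : ℤ))
        - (∑ i ∈ U, ((blk (w i) : ℕ) : ℤ)) := by
    rw [comaj0, maj0]
    rw [← hSdef, ← hUdef, ← hDdef]
    rw [hcross]
    push_cast
    have hper : ∀ i' ∈ U, ((S.filter fun j : Fin n => (j : ℕ) < (i' : ℕ)).card : ℤ)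
        = (i' : ℤ) - ((blk (w i') : ℕ) : ℤ) := by
      intro i' _
      have h1 := hbelow i'
      have h2 := hcumF i'
      omega
    rw [Finset.sum_congr rfl hper, Finset.sum_sub_distrib]
    ring
  have R2 : (majHRS n k B w blk : ℤ)
      = (∑ i ∈ S, ((blk (w i) : ℕ) : ℤ)) + (∑ i ∈ U, ((blk (w i) : ℕ) : ℤ))
        + (U.card : ℤ) := by
    rw [majHRS]
    rw [← hSdef, ← hUdef]
    rw [Finset.sum_union hdisjSU]
    push_cast
    have hperS : ∀ i ∈ S, ((weight0 n k B w i : ℕ) : ℤ) = ((blk (w i) : ℕ) : ℤ) := by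
      intro i hiS
      obtain ⟨hi, _, heq⟩ := (hmemS i).mp hiS
      rw [hweight i hi, ← heq]
    have hperU : ∀ i ∈ U, ((weight0 n k B w i : ℕ) : ℤ) = ((blk (w i) : ℕ) : ℤ) + 1 := by
      intro i hiU
      obtain ⟨hi, _, hne2⟩ := (hmemU i).mp hiU
      have hle : i ≤ (⟨(i : ℕ) + 1, hi⟩ : Fin n) := by
        rw [Fin.le_def]; exact Nat.le_succ _
      have hlt : blk (w i) < blk (w ⟨(i : ℕ) + 1, hi⟩) :=
        lt_of_le_of_ne (hword₁ _ _ hle) hne2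
      rw [hweight i hi, hjump i hi hlt]
      push_cast
      ring
    rw [Finset.sum_congr rfl hperS, Finset.sum_congr rfl hperU, Finset.sum_add_distrib]
    simp only [Finset.sum_const, nsmul_eq_mul, mul_one]
    ring
  have R3 : (∑ i ∈ D, ((i : ℤ) + 1)) + (∑ i ∈ U, (i : ℤ)) + (U.card : ℤ)
      = (∑ j ∈ U ∪ D, (j : ℤ)) + ((k : ℤ) - 1) := by
    rw [Finset.sum_union hdisjUD]
    have h1 : ∑ j ∈ U ∪ D, ((j : ℤ) + 1) = ∑ j ∈ U ∪ D, (j : ℤ) + ((U ∪ D).card : ℤ) := by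
      rw [Finset.sum_add_distrib]
      simp [Finset.sum_const]
    have h2 : ∑ j ∈ U ∪ D, ((j : ℤ) + 1) = (∑ i ∈ U, ((i : ℤ) + 1)) + ∑ i ∈ D, ((i : ℤ) + 1) := by
      rw [Finset.sum_union hdisjUD]
    have h3 : ∑ i ∈ U, ((i : ℤ) + 1) = (∑ i ∈ U, (i : ℤ)) + (U.card : ℤ) := by
      rw [Finset.sum_add_distrib]
      simp [Finset.sum_const]
    have h4 : ((U ∪ D).card : ℤ) = (k : ℤ) - 1 := by
      rw [hBdcard]
      push_cast [Nat.cast_sub hk]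
      ring
    have h5 : ∑ j ∈ U ∪ D, (j : ℤ) = (∑ i ∈ U, (i : ℤ)) + ∑ i ∈ D, (i : ℤ) :=
      Finset.sum_union hdisjUD
    rw [h2] at h1
    linarith [h1, h3, h4, h5]
  -- R4: sum of weights over starred ascents
  have hA1n : (∑ i ∈ S, (blk (w i) : ℕ))
      = ∑ b ∈ U ∪ D, (S.filter fun a : Fin n => (b : ℕ) < (a : ℕ)).card := by
    rw [← aux_swap S (U ∪ D) (fun a b : Fin n => (b : ℕ) < (a : ℕ))]
    exact Finset.sum_congr rfl fun i _ => (hcumF i).symm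
  have hXn : (∑ j ∈ U ∪ D, (blk (w j) : ℕ))
      = ∑ b ∈ U ∪ D, ((U ∪ D).filter fun a : Fin n => (b : ℕ) < (a : ℕ)).card := by
    rw [← aux_swap (U ∪ D) (U ∪ D) (fun a b : Fin n => (b : ℕ) < (a : ℕ))]
    exact Finset.sum_congr rfl fun j _ => (hcumF j).symm
  have R4 : (∑ i ∈ S, ((blk (w i) : ℕ) : ℤ))
      = ((k : ℤ) - 1) * ((n : ℤ) - 2) - (∑ j ∈ U ∪ D, (j : ℤ))
        - (∑ j ∈ U ∪ D, ((blk (w j) : ℕ) : ℤ)) := by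
    have hper2 : ∀ b ∈ U ∪ D, ((S.filter fun a : Fin n => (b : ℕ) < (a : ℕ)).card : ℤ)
        = (((n : ℤ) - 2) - (b : ℤ))
          - (((U ∪ D).filter fun a : Fin n => (b : ℕ) < (a : ℕ)).card : ℤ) := by
      intro b hb
      have h1 := habove b hb
      have h2 := hBdP b hb
      omega
    calc (∑ i ∈ S, ((blk (w i) : ℕ) : ℤ))
        = ∑ b ∈ U ∪ D, ((S.filter fun a : Fin n => (b : ℕ) < (a : ℕ)).card : ℤ) := by
          exact_mod_cast hA1n
      _ = ∑ b ∈ U ∪ D, ((((n : ℤ) - 2) - (b : ℤ))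
            - (((U ∪ D).filter fun a : Fin n => (b : ℕ) < (a : ℕ)).card : ℤ)) :=
          Finset.sum_congr rfl hper2
      _ = ((k : ℤ) - 1) * ((n : ℤ) - 2) - (∑ j ∈ U ∪ D, (j : ℤ))
          - (∑ j ∈ U ∪ D, ((blk (w j) : ℕ) : ℤ)) := by
          rw [Finset.sum_sub_distrib, Finset.sum_sub_distrib, Finset.sum_const,
            nsmul_eq_mul, hBdcard]
          have hXc : (∑ b ∈ U ∪ D,
              (((U ∪ D).filter fun a : Fin n => (b : ℕ) < (a : ℕ)).card : ℤ))
              = ∑ j ∈ U ∪ D, ((blk (w j) : ℕ) : ℤ) := by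
            exact_mod_cast (congrArg (Nat.cast : ℕ → ℤ) hXn.symm)
          rw [hXc]
          have hc : ((k - 1 : ℕ) : ℤ) = (k : ℤ) - 1 := by omega
          rw [hc]
  -- R5: twice the boundary weight sum
  have R5 : 2 * (∑ j ∈ U ∪ D, ((blk (w j) : ℕ) : ℤ)) + ((k : ℤ) - 1)
      = ((k : ℤ) - 1) * ((k : ℤ) - 1) := by
    have hsum : (∑ j ∈ U ∪ D,
        (((U ∪ D).filter fun i : Fin n => (i : ℕ) < (j : ℕ)).card + 1
          + ((U ∪ D).filter fun i : Fin n => (j : ℕ) < (i : ℕ)).card))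
        = (U ∪ D).card * (U ∪ D).card := by
      rw [Finset.sum_congr rfl hsplit3, Finset.sum_const, smul_eq_mul]
    rw [Finset.sum_add_distrib, Finset.sum_add_distrib, Finset.sum_const] at hsum
    have hdown : (∑ j ∈ U ∪ D, ((U ∪ D).filter fun i : Fin n => (i : ℕ) < (j : ℕ)).card)
        = ∑ j ∈ U ∪ D, (blk (w j) : ℕ) :=
      Finset.sum_congr rfl fun j _ => hcumF j
    have hup : (∑ j ∈ U ∪ D, ((U ∪ D).filter fun i : Fin n => (j : ℕ) < (i : ℕ)).card)
        = ∑ j ∈ U ∪ D, (blk (w j) : ℕ) := hXn.symm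
    rw [hdown, hup, smul_eq_mul, mul_one, hBdcard] at hsum
    have h2 := congrArg (Nat.cast : ℕ → ℤ) hsum
    push_cast at h2
    rw [(by omega : ((k - 1 : ℕ) : ℤ) = (k : ℤ) - 1)] at h2
    linarith [h2]
  -- R6: the binomial coefficient
  have R6 : 2 * ((Nat.choose k 2 : ℕ) : ℤ) = (k : ℤ) * ((k : ℤ) - 1) := by
    have h1 := aux_choose_two k
    have h2 := congrArg (Nat.cast : ℕ → ℤ) h1
    push_cast at h2
    have h3 : ((k - 1 : ℕ) : ℤ) = (k : ℤ) - 1 := by omega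
    rw [h3] at h2
    linarith [h2]
  linarith [R1, R2, R3, R4, R5, R6]



end
end

section
/- Every multichain monomial y = y_{S_1}⋯y_{S_t} (with ∅ ≠ S_1 ⊆ ⋯ ⊆ S_t ⊆ [n]) in ℂ[y_S] is equal to b̃_{(g,d)} for exactly one pair (g,d) ∈ G_n × ℤ_{≥0}^n. -/
open scoped Classical
open MvPolynomial Finset

noncomputable section

/-- Nonempty subsets of `[n]`, the index set of the variables `y_S`. -/
abbrev NES (n : ℕ) := {S : Finset (Fin n) // S.Nonempty}

/-- The polynomial ring `ℂ[y_S]`. -/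
abbrev YRing (n : ℕ) := MvPolynomial (NES n) ℂ

/-- The polynomial ring `ℂ[x_1, …, x_n]`. -/
abbrev XRing (n : ℕ) := MvPolynomial (Fin n) ℂ

/-- The variable `y_F`, with junk value `1` when `F = ∅`. -/
def Yv {n : ℕ} (F : Finset (Fin n)) : YRing n :=
  if h : F.Nonempty then X ⟨F, h⟩ else 1

/-- `θ_i = Σ_{|S| = i} y_S^r`. -/
def theta (n r i : ℕ) : YRing n :=
  ∑ S ∈ univ.filter (fun S : NES n => S.1.card = i), X S ^ r

/-- Stanley–Reisner generators `y_S y_T` for incomparable `S, T`. -/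
def srSet (n : ℕ) : Set (YRing n) :=
  {p | ∃ S T : NES n, ¬ S.1 ⊆ T.1 ∧ ¬ T.1 ⊆ S.1 ∧ p = X S * X T}

/-- The generators `θ_{n-k+1}, …, θ_n`. -/
def thetaSet (n k r : ℕ) : Set (YRing n) :=
  {p | ∃ i : ℕ, n - k + 1 ≤ i ∧ i ≤ n ∧ p = theta n r i}

/-- Products `y_{S_1} ⋯ y_{S_m}` over multichains `S_1 ⊆ ⋯ ⊆ S_m` of length `m`. -/
def chainSet (n m : ℕ) : Set (YRing n) :=
  {p | ∃ S : Fin m → NES n, (∀ i j : Fin m, i ≤ j → (S i).1 ⊆ (S j).1) ∧ p = ∏ i, X (S i)}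

def SRideal (n : ℕ) : Ideal (YRing n) := Ideal.span (srSet n)

def STideal (n k r : ℕ) : Ideal (YRing n) := Ideal.span (srSet n ∪ thetaSet n k r)

/-- The ideal `𝓙_{n,k}`. -/
def Jideal (n k r : ℕ) : Ideal (YRing n) :=
  Ideal.span (srSet n ∪ thetaSet n k r ∪ chainSet n (k * r))

/-- The ideal `𝓘_{n,k}`. -/
def Iideal (n k r : ℕ) : Ideal (YRing n) :=
  Ideal.span (srSet n ∪ thetaSet n k r ∪ chainSet n (k * r + 1))

/-- An `r`-colored word of length `m` on distinct letters from `[n]`. -/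
structure CWord (n r m : ℕ) where
  letter : Fin m → Fin n
  inj : Function.Injective letter
  color : Fin m → Fin r

/-- `r`-colored permutations of `[n]`, i.e. the group `G(r,1,n)` as a set. -/
abbrev CPerm (n r : ℕ) := CWord n r n

/-- The order on colored letters: `(a,c) < (b,d)` iff `c > d`, or `c = d` and `a < b`. -/
def colLt {n r : ℕ} (a b : Fin n × Fin r) : Prop :=
  b.2 < a.2 ∨ (a.2 = b.2 ∧ a.1 < b.1)

/-- The descent set of a colored word (0-indexed positions). -/
def DesSet {n r m : ℕ} (w : CWord n r m) : Finset (Fin m) :=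
  univ.filter fun i => ∃ j : Fin m, (j : ℕ) = (i : ℕ) + 1 ∧
    colLt (w.letter j, w.color j) (w.letter i, w.color i)

def desNum {n r m : ℕ} (w : CWord n r m) : ℕ := (DesSet w).card

/-- `maj(w) = Σ colors + r · Σ_{i ∈ Des(w)} i` (1-based positions). -/
def majW {n r m : ℕ} (w : CWord n r m) : ℕ :=
  (∑ i, (w.color i : ℕ)) + r * ∑ i ∈ DesSet w, ((i : ℕ) + 1)

/-- The set of the first `t` letters of `w`. -/
def pref {n r m : ℕ} (w : CWord n r m) (t : ℕ) : Finset (Fin n) :=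
  univ.filter fun a => ∃ l : Fin m, (l : ℕ) < t ∧ w.letter l = a

/-- The exponent `m_i = c_i - c_{i+1} + r·[i ∈ Des(g)]` (and `m_last = c_last`). -/
def mExp {n r m : ℕ} (w : CWord n r m) (i : Fin m) : ℕ :=
  (((w.color i : ℤ) - (if h : (i : ℕ) + 1 < m then (w.color ⟨(i : ℕ) + 1, h⟩ : ℤ) else 0))
    + (if i ∈ DesSet w then (r : ℤ) else 0)).toNat

/-- The descent monomial `b̃_w`. -/
def btw {n r m : ℕ} (w : CWord n r m) : YRing n :=
  ∏ i : Fin m, Yv (pref w ((i : ℕ) + 1)) ^ mExp w i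

/-- `b̃_{(g,d)} = b̃_g · Π_i y_{T_i}^{r d_i}`. -/
def btd {n r : ℕ} (g : CPerm n r) (d : Fin n → ℕ) : YRing n :=
  btw g * ∏ i : Fin n, Yv (pref g ((i : ℕ) + 1)) ^ (r * d i)

/-- `b̃_{(w,λ)} = b̃_w · Π_j y_{S_{λ_j}}^r` for a list `λ` of parts. -/
def btl {n r m : ℕ} (w : CWord n r m) (lam : List ℕ) : YRing n :=
  btw w * (lam.map fun p => Yv (pref w p) ^ r).prod

/-- `r`-colored ordered set partitions of `[n]` with `k` blocks, encoded as pairs `(g, λ)`. -/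
structure OPIdx (n k r : ℕ) where
  g : CPerm n r
  lam : List ℕ
  sorted : lam.Pairwise (· ≥ ·)
  pos : ∀ p ∈ lam, 1 ≤ p
  parts_le : ∀ p ∈ lam, p ≤ n - k
  len : lam.length + desNum g + 1 ≤ k

def btOP {n k r : ℕ} (o : OPIdx n k r) : YRing n := btl o.g o.lam

/-- `k`-dimensional `G_n`-faces, encoded as triples `(Z, w, λ)`. -/
structure FIdx (n k r : ℕ) where
  Z : Finset (Fin n)
  cardZ : Z.card ≤ n - k
  w : CWord n r (n - Z.card)
  mem : ∀ j, w.letter j ∉ Z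
  lam : List ℕ
  sorted : lam.Pairwise (· ≥ ·)
  pos : ∀ p ∈ lam, 1 ≤ p
  parts_le : ∀ p ∈ lam, p ≤ n - Z.card - k
  len : lam.length + desNum w + 1 ≤ k

/-- The monomial `b̃_{(Z,g,λ)}`. -/
def btF {n k r : ℕ} (f : FIdx n k r) : YRing n :=
  Yv f.Z ^ (k * r - (btl f.w f.lam).totalDegree) *
    ((∏ i : Fin (n - f.Z.card), Yv (pref f.w ((i : ℕ) + 1) ∪ f.Z) ^ mExp f.w i) *
      (f.lam.map fun p => Yv (pref f.w p ∪ f.Z) ^ r).prod)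

/-- The transfer map `φ : ℂ[y_S] → ℂ[x_n]`, `y_S ↦ Π_{i ∈ S} x_i`. -/
def phi (n : ℕ) : YRing n →ₐ[ℂ] XRing n := aeval fun S : NES n => ∏ i ∈ S.1, X i

/-- An element of `G(r,1,n)`: a permutation together with `r`-th roots of unity. -/
structure GElem (n r : ℕ) where
  perm : Equiv.Perm (Fin n)
  scalar : Fin n → ℂ
  root : ∀ i, scalar i ^ r = 1

/-- The action of `G(r,1,n)` on `ℂ[x_n]` by linear substitution. -/
def actX {n r : ℕ} (g : GElem n r) : XRing n →ₐ[ℂ] XRing n :=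
  aeval fun i => g.scalar i • X (g.perm i)

/-- The action of `G(r,1,n)` on `ℂ[y_S]`, `g · y_S = α · y_{g(S)}`. -/
def actY {n r : ℕ} (g : GElem n r) : YRing n →ₐ[ℂ] YRing n :=
  aeval fun S : NES n =>
    (∏ i ∈ S.1, g.scalar i) • X (⟨S.1.image g.perm, S.2.image _⟩ : NES n)

/-- An exponent vector is a multichain if its support is a chain of subsets. -/
def IsChainE {n : ℕ} (e : NES n →₀ ℕ) : Prop :=
  ∀ S ∈ e.support, ∀ T ∈ e.support, S.1 ⊆ T.1 ∨ T.1 ⊆ S.1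

/-- `μ(y)`: the multiset of sizes (with multiplicity) of a monomial with exponents `e`. -/
def muE {n : ℕ} (e : NES n →₀ ℕ) : Multiset ℕ :=
  e.sum fun S m => Multiset.replicate m S.1.card

/-- Sum of the `j` largest entries of a multiset of naturals. -/
def psum (a : Multiset ℕ) (j : ℕ) : ℕ := (((a.sort (· ≤ ·)).reverse).take j).sum

/-- Dominance order on partitions (encoded as multisets) of the same number. -/
def domLE (a b : Multiset ℕ) : Prop := a.sum = b.sum ∧ ∀ j, psum a j ≤ psum b j

/-- Strict dominance order. -/
def domLT (a b : Multiset ℕ) : Prop := domLE a b ∧ a ≠ b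

/-- Order on the variables: `y_S > y_T` iff `|S| > |T|`, or `|S| = |T|` and
`min (S \ T) < min (T \ S)`. -/
def varGt {n : ℕ} (S T : NES n) : Prop :=
  T.1.card < S.1.card ∨
    (S.1.card = T.1.card ∧ ∃ a ∈ S.1 \ T.1, ∀ b ∈ T.1 \ S.1, a < b)

/-- The graded lexicographic order on monomials (exponent vectors) of `ℂ[y_S]`. -/
def monLt {n : ℕ} (e f : NES n →₀ ℕ) : Prop :=
  (e.sum fun _ m => m) < (f.sum fun _ m => m) ∨
    ((e.sum fun _ m => m) = (f.sum fun _ m => m) ∧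
      ∃ S, e S < f S ∧ ∀ T, varGt T S → e T = f T)

/-- `e` is the leading monomial of `p`. -/
def IsLM {n : ℕ} (p : YRing n) (e : NES n →₀ ℕ) : Prop :=
  e ∈ p.support ∧ ∀ f ∈ p.support, f ≠ e → monLt f e

/-- The ideal of leading monomials of nonzero elements of `I`. -/
def LMideal {n : ℕ} (I : Ideal (YRing n)) : Ideal (YRing n) :=
  Ideal.span {q | ∃ p e, p ∈ I ∧ p ≠ 0 ∧ IsLM p e ∧ q = (monomial e 1 : YRing n)}

/-- `e_d(x_1^r, …, x_n^r)`. -/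
def esymmR (n r d : ℕ) : XRing n :=
  ∑ t ∈ (univ : Finset (Fin n)).powersetCard d, ∏ i ∈ t, X i ^ r

/-- The ideal `J_{n,k}` of Chan–Rhoades. -/
def Jx (n k r : ℕ) : Ideal (XRing n) :=
  Ideal.span ({p | ∃ i : Fin n, p = X i ^ (k * r)} ∪
    {p | ∃ d : ℕ, n - k + 1 ≤ d ∧ d ≤ n ∧ p = esymmR n r d})

/-- The ideal `I_{n,k}` of Chan–Rhoades. -/
def Ix (n k r : ℕ) : Ideal (XRing n) :=
  Ideal.span ({p | ∃ i : Fin n, p = X i ^ (k * r + 1)} ∪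
    {p | ∃ d : ℕ, n - k + 1 ≤ d ∧ d ≤ n ∧ p = esymmR n r d})

namespace MCAux

/-- Product of powers of variables is a monomial. -/
lemma prod_X_pow {σ ι : Type*} (s : Finset ι) (v : ι → σ) (e : ι → ℕ) :
    (∏ i ∈ s, (X (v i) : MvPolynomial σ ℂ) ^ e i) =
      monomial (∑ i ∈ s, Finsupp.single (v i) (e i)) 1 := by
  classical
  induction s using Finset.cons_induction with
  | empty => simp
  | cons a s ha ih =>
    rw [Finset.prod_cons, Finset.sum_cons, ih, X_pow_eq_monomial, monomial_mul, one_mul]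

variable {n r : ℕ}

lemma pref_eq_image {m : ℕ} (w : CWord n r m) (t : ℕ) :
    pref w t = (univ.filter fun l : Fin m => (l : ℕ) < t).image w.letter := by
  ext a
  simp only [pref, mem_filter, mem_univ, true_and, Finset.mem_image]

lemma letter_mem_pref {m : ℕ} (w : CWord n r m) (i : Fin m) :
    w.letter i ∈ pref w ((i : ℕ) + 1) := by
  simp only [pref, mem_filter, mem_univ, true_and]
  exact ⟨i, Nat.lt_succ_self _, rfl⟩

lemma card_pref {m : ℕ} (w : CWord n r m) (i : Fin m) :
    (pref w ((i : ℕ) + 1)).card = (i : ℕ) + 1 := by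
  rw [pref_eq_image, Finset.card_image_of_injective _ w.inj]
  have h : (univ.filter fun l : Fin m => (l : ℕ) < (i : ℕ) + 1) = Finset.Iic i := by
    ext l
    simp only [mem_filter, mem_univ, true_and, Finset.mem_Iic, Fin.le_def]
    omega
  rw [h, Fin.card_Iic]

/-- The `i`-th prefix set as a nonempty subset. -/
def prefV {m : ℕ} (w : CWord n r m) (i : Fin m) : NES n :=
  ⟨pref w ((i : ℕ) + 1), ⟨w.letter i, letter_mem_pref w i⟩⟩

lemma prefV_injective {m : ℕ} (w : CWord n r m) : Function.Injective (prefV w) := by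
  intro i j h
  have h2 : (pref w ((i : ℕ) + 1)).card = (pref w ((j : ℕ) + 1)).card := by
    rw [show pref w ((i : ℕ) + 1) = (prefV w i).1 from rfl,
      show pref w ((j : ℕ) + 1) = (prefV w j).1 from rfl, h]
  rw [card_pref, card_pref] at h2
  exact Fin.ext (by omega)

def gEquiv (g : CPerm n r) : Fin n ≃ Fin n :=
  Equiv.ofBijective g.letter (Finite.injective_iff_bijective.mp g.inj)

def posOf (g : CPerm n r) (l : Fin n) : Fin n := (gEquiv g).symm l

lemma letter_posOf (g : CPerm n r) (l : Fin n) : g.letter (posOf g l) = l :=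
  (gEquiv g).apply_symm_apply l

lemma posOf_letter (g : CPerm n r) (i : Fin n) : posOf g (g.letter i) = i :=
  (gEquiv g).symm_apply_apply i

lemma mem_pref_iff (g : CPerm n r) (l : Fin n) (t : ℕ) :
    l ∈ pref g t ↔ (posOf g l : ℕ) < t := by
  simp only [pref, mem_filter, mem_univ, true_and]
  constructor
  · rintro ⟨l', hl', rfl⟩; rwa [posOf_letter]
  · intro h; exact ⟨posOf g l, h, letter_posOf g l⟩

lemma mem_desSet_iff {m : ℕ} (w : CWord n r m) (i : Fin m) (h : (i : ℕ) + 1 < m) :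
    i ∈ DesSet w ↔
      colLt (w.letter ⟨(i : ℕ) + 1, h⟩, w.color ⟨(i : ℕ) + 1, h⟩) (w.letter i, w.color i) := by
  simp only [DesSet, mem_filter, mem_univ, true_and]
  constructor
  · rintro ⟨j, hj, hc⟩
    have hji : j = ⟨(i : ℕ) + 1, h⟩ := Fin.ext hj
    rwa [hji] at hc
  · intro hc; exact ⟨_, rfl, hc⟩

lemma not_desSet_last {m : ℕ} (w : CWord n r m) (i : Fin m) (h : ¬ ((i : ℕ) + 1 < m)) :
    i ∉ DesSet w := by
  simp only [DesSet, mem_filter, mem_univ, true_and]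
  rintro ⟨j, hj, -⟩
  exact h (hj ▸ j.isLt)

/-- The color of the next letter (or `0` past the end), as a natural number. -/
def ncol {m : ℕ} (w : CWord n r m) (i : Fin m) : ℕ :=
  if h : (i : ℕ) + 1 < m then (w.color ⟨(i : ℕ) + 1, h⟩ : ℕ) else 0

lemma ncol_lt_r {m : ℕ} (w : CWord n r m) (i : Fin m) (hr : 0 < r) : ncol w i < r := by
  unfold ncol; split
  · exact (w.color _).isLt
  · exact hr

lemma des_iff {m : ℕ} (w : CWord n r m) (i : Fin m) (h2 : (i : ℕ) + 1 < m) :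
    i ∈ DesSet w ↔ ((w.color i : ℕ) < (w.color ⟨(i : ℕ) + 1, h2⟩ : ℕ) ∨
      ((w.color ⟨(i : ℕ) + 1, h2⟩ : ℕ) = (w.color i : ℕ) ∧
        (w.letter ⟨(i : ℕ) + 1, h2⟩ : ℕ) < (w.letter i : ℕ))) := by
  rw [mem_desSet_iff w i h2]
  show (w.color i < w.color ⟨(i : ℕ) + 1, h2⟩ ∨
      (w.color ⟨(i : ℕ) + 1, h2⟩ = w.color i ∧ w.letter ⟨(i : ℕ) + 1, h2⟩ < w.letter i)) ↔ _
  rw [Fin.lt_def, Fin.lt_def, Fin.ext_iff]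

lemma ncol_eq {m : ℕ} (w : CWord n r m) (i : Fin m) (h2 : (i : ℕ) + 1 < m) :
    ncol w i = (w.color ⟨(i : ℕ) + 1, h2⟩ : ℕ) := dif_pos h2

lemma ncol_eq_zero {m : ℕ} (w : CWord n r m) (i : Fin m) (h2 : ¬ ((i : ℕ) + 1 < m)) :
    ncol w i = 0 := dif_neg h2

lemma color_le_ncol_of_des {m : ℕ} {w : CWord n r m} {i : Fin m} (h : i ∈ DesSet w) :
    (w.color i : ℕ) ≤ ncol w i := by
  by_cases h2 : (i : ℕ) + 1 < m
  · rw [des_iff w i h2] at h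
    rw [ncol_eq w i h2]
    omega
  · exact absurd h (not_desSet_last w i h2)

lemma ncol_le_color_of_not_des {m : ℕ} {w : CWord n r m} {i : Fin m} (h : i ∉ DesSet w) :
    ncol w i ≤ (w.color i : ℕ) := by
  by_cases h2 : (i : ℕ) + 1 < m
  · rw [des_iff w i h2] at h
    rw [ncol_eq w i h2]
    omega
  · rw [ncol_eq_zero w i h2]; exact Nat.zero_le _

lemma not_des_of_tie {m : ℕ} {w : CWord n r m} {i : Fin m}
    (hc : (w.color i : ℕ) = ncol w i)
    (hl : ∀ h2 : (i : ℕ) + 1 < m, (w.letter i : ℕ) < (w.letter ⟨(i : ℕ) + 1, h2⟩ : ℕ)) :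
    i ∉ DesSet w := by
  by_cases h2 : (i : ℕ) + 1 < m
  · rw [des_iff w i h2]
    rw [ncol_eq w i h2] at hc
    have := hl h2
    omega
  · exact not_desSet_last w i h2

lemma letter_lt_next_of_not_des {m : ℕ} {w : CWord n r m} {i : Fin m}
    (h : i ∉ DesSet w) (h2 : (i : ℕ) + 1 < m) (hc : (w.color i : ℕ) = ncol w i) :
    (w.letter i : ℕ) < (w.letter ⟨(i : ℕ) + 1, h2⟩ : ℕ) := by
  rw [des_iff w i h2] at h
  rw [ncol_eq w i h2] at hc
  have hne : (w.letter i : ℕ) ≠ (w.letter ⟨(i : ℕ) + 1, h2⟩ : ℕ) := by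
    intro he
    have h5 : i = ⟨(i : ℕ) + 1, h2⟩ := w.inj (Fin.ext he)
    have := congrArg Fin.val h5
    simp at this
  rcases Nat.lt_or_ge (w.letter i : ℕ) (w.letter ⟨(i : ℕ) + 1, h2⟩ : ℕ) with h3 | h3
  · exact h3
  · have h4 : (w.letter ⟨(i : ℕ) + 1, h2⟩ : ℕ) < (w.letter i : ℕ) := by omega
    exact absurd (Or.inr ⟨hc.symm, h4⟩) h

lemma mexp_int {m : ℕ} (w : CWord n r m) (i : Fin m) (hr : 0 < r) :
    (mExp w i : ℤ) = ((w.color i : ℕ) : ℤ) - ((ncol w i : ℕ) : ℤ)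
      + (if i ∈ DesSet w then (r : ℤ) else 0) := by
  have hdite : (if h : (i : ℕ) + 1 < m then ((w.color ⟨(i : ℕ) + 1, h⟩ : ℤ)) else 0)
      = ((ncol w i : ℕ) : ℤ) := by
    unfold ncol; split <;> simp
  have hcast : (w.color i : ℤ) = ((w.color i : ℕ) : ℤ) := by simp
  have hnn : 0 ≤ ((w.color i : ℕ) : ℤ) - ((ncol w i : ℕ) : ℤ)
      + (if i ∈ DesSet w then (r : ℤ) else 0) := by
    by_cases hd : i ∈ DesSet w
    · rw [if_pos hd]
      have h1 : ncol w i < r := ncol_lt_r w i hr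
      omega
    · rw [if_neg hd]
      have h1 : ncol w i ≤ (w.color i : ℕ) := ncol_le_color_of_not_des hd
      omega
  rw [mExp, hdite, hcast]
  exact Int.toNat_of_nonneg hnn

/-- The key arithmetic fact producing the exponent decomposition `m + r·d`. -/
lemma keyNat {r bi bi1 ci ci1 mv : ℕ} (des : Prop) [Decidable des] (hr : 0 < r)
    (hb : bi1 ≤ bi) (hci : ci = bi % r) (hci1 : ci1 = bi1 % r)
    (h1 : des → ci ≤ ci1) (h3 : bi = bi1 → ¬des)
    (hmv : (mv : ℤ) = (ci : ℤ) - (ci1 : ℤ) + (if des then (r : ℤ) else 0)) :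
    mv + r * ((bi - bi1 - mv) / r) = bi - bi1 := by
  have hq : bi = r * (bi / r) + ci := by rw [hci]; exact (Nat.div_add_mod bi r).symm
  have hq1 : bi1 = r * (bi1 / r) + ci1 := by rw [hci1]; exact (Nat.div_add_mod bi1 r).symm
  have hcr : ci < r := hci ▸ Nat.mod_lt bi hr
  have hcr1 : ci1 < r := hci1 ▸ Nat.mod_lt bi1 hr
  set k : ℤ := ((bi / r : ℕ) : ℤ) - ((bi1 / r : ℕ) : ℤ) - (if des then 1 else 0) with hk
  have hz : (bi : ℤ) - (bi1 : ℤ) - (mv : ℤ) = (r : ℤ) * k := by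
    have e1 : (bi : ℤ) = (r : ℤ) * ((bi / r : ℕ) : ℤ) + (ci : ℤ) := by exact_mod_cast hq
    have e2 : (bi1 : ℤ) = (r : ℤ) * ((bi1 / r : ℕ) : ℤ) + (ci1 : ℤ) := by exact_mod_cast hq1
    rw [hmv, hk, e1, e2]
    by_cases hd : des <;> simp only [if_pos, if_neg, hd, if_true, if_false] <;> ring
  have hknn : 0 ≤ k := by
    by_contra hkneg
    push_neg at hkneg
    have hk1 : k ≤ -1 := by omega
    have hle : (r : ℤ) * k ≤ (r : ℤ) * (-1) :=
      mul_le_mul_of_nonneg_left hk1 (by positivity)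
    rw [mul_neg_one, ← hz] at hle
    by_cases hd : des
    · have hne : bi ≠ bi1 := fun he => (h3 he) hd
      have hmvr : (mv : ℤ) ≤ (r : ℤ) := by rw [hmv, if_pos hd]; have := h1 hd; omega
      omega
    · have : (mv : ℤ) = (ci : ℤ) - (ci1 : ℤ) := by rw [hmv, if_neg hd]; ring
      omega
  have hznn : 0 ≤ (bi : ℤ) - (bi1 : ℤ) - (mv : ℤ) := by
    rw [hz]; exact mul_nonneg (by positivity) hknn
  have hmle : mv ≤ bi - bi1 := by omega
  have hdvd : r ∣ (bi - bi1 - mv) := by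
    have hcast : ((bi - bi1 - mv : ℕ) : ℤ) = (r : ℤ) * k := by
      rw [Nat.cast_sub hmle, Nat.cast_sub hb]; exact hz
    have : (r : ℤ) ∣ ((bi - bi1 - mv : ℕ) : ℤ) := ⟨k, hcast⟩
    exact_mod_cast this
  rw [Nat.mul_div_cancel' hdvd]
  omega

/-- Sorting key: position in the decreasing-stable order determined by `a`. -/
def KK (a : Fin n → ℕ) (l : Fin n) : ℕ := (univ.sup a - a l) * n + (l : ℕ)

lemma KK_injective (a : Fin n → ℕ) : Function.Injective (KK a) := by
  intro l l' h
  unfold KK at h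
  have h2 := congrArg (· % n) h
  have h1 : (l : ℕ) = (l' : ℕ) := by
    simpa [Nat.mul_add_mod', Nat.mod_eq_of_lt l.isLt, Nat.mod_eq_of_lt l'.isLt] using h2
  exact Fin.ext h1

lemma KK_lt_of_lt (a : Fin n → ℕ) {l l' : Fin n} (h : a l' < a l) : KK a l < KK a l' := by
  have hM : a l ≤ univ.sup a := Finset.le_sup (mem_univ l)
  have hq : univ.sup a - a l < univ.sup a - a l' :=
    Nat.sub_lt_sub_left (lt_of_lt_of_le h hM) h
  have h1 : (univ.sup a - a l + 1) * n ≤ (univ.sup a - a l') * n :=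
    Nat.mul_le_mul_right n hq
  rw [add_mul, one_mul] at h1
  unfold KK
  have := l.isLt
  omega

lemma KK_lt_of_eq (a : Fin n → ℕ) {l l' : Fin n} (h : a l = a l') (hll : (l : ℕ) < (l' : ℕ)) :
    KK a l < KK a l' := by
  unfold KK
  rw [h]
  omega

lemma KK_lt_elim (a : Fin n → ℕ) {l l' : Fin n} (h : KK a l < KK a l') :
    a l' ≤ a l ∧ (a l' = a l → (l : ℕ) < (l' : ℕ)) := by
  constructor
  · by_contra hc
    push_neg at hc
    exact absurd h (not_lt_of_gt (KK_lt_of_lt a hc))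
  · intro he
    rcases Nat.lt_trichotomy (l : ℕ) (l' : ℕ) with h3 | h3 | h3
    · exact h3
    · exact absurd (Fin.ext h3) (fun hll => absurd (hll ▸ h) (lt_irrefl _))
    · exact absurd h (not_lt_of_gt (KK_lt_of_eq a he h3))

lemma sort_unique {a : Fin n → ℕ} {p q : Fin n → Fin n}
    (hps : StrictMono fun i => KK a (p i)) (hqs : StrictMono fun i => KK a (q i)) :
    p = q := by
  have hcard : (univ.image (KK a)).card = n := by
    rw [Finset.card_image_of_injective _ (KK_injective a), card_univ, Fintype.card_fin]
  have e1 := Finset.orderEmbOfFin_unique hcard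
    (f := fun i => KK a (p i)) (fun x => Finset.mem_image_of_mem _ (mem_univ (p x))) hps
  have e2 := Finset.orderEmbOfFin_unique hcard
    (f := fun i => KK a (q i)) (fun x => Finset.mem_image_of_mem _ (mem_univ (q x))) hqs
  funext i
  apply KK_injective a
  rw [congrFun e1 i, congrFun e2 i]

lemma strictMono_of_adj {f : Fin n → ℕ}
    (h : ∀ (i : Fin n) (h2 : (i : ℕ) + 1 < n), f i < f ⟨(i : ℕ) + 1, h2⟩) : StrictMono f := by
  have key : ∀ (k : ℕ) (i j : Fin n), (j : ℕ) = (i : ℕ) + (k + 1) → f i < f j := by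
    intro k
    induction k with
    | zero =>
      intro i j hj
      have h2 : (i : ℕ) + 1 < n := by have := j.isLt; omega
      have hji : j = ⟨(i : ℕ) + 1, h2⟩ := Fin.ext (show (j : ℕ) = (i : ℕ) + 1 by omega)
      rw [hji]
      exact h i h2
    | succ k ih =>
      intro i j hj
      have hmid : (i : ℕ) + (k + 1) < n := by have := j.isLt; omega
      have step1 := ih i ⟨(i : ℕ) + (k + 1), hmid⟩ rfl
      have h2 : ((i : ℕ) + (k + 1)) + 1 < n := by have := j.isLt; omega
      have step2 := h ⟨(i : ℕ) + (k + 1), hmid⟩ h2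
      have hji : j = ⟨((i : ℕ) + (k + 1)) + 1, h2⟩ :=
        Fin.ext (show (j : ℕ) = ((i : ℕ) + (k + 1)) + 1 by omega)
      rw [hji]
      exact lt_trans step1 step2
  intro i j hij
  exact key ((j : ℕ) - (i : ℕ) - 1) i j (by have : (i : ℕ) < (j : ℕ) := hij; omega)

/-- The combined exponent of the `i`-th prefix variable in `b̃_{(g,d)}`. -/
def EE (g : CPerm n r) (d : Fin n → ℕ) (i : Fin n) : ℕ := mExp g i + r * d i

/-- The exponent vector of `b̃_{(g,d)}`. -/
def Fsupp (g : CPerm n r) (d : Fin n → ℕ) : NES n →₀ ℕ :=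
  ∑ i : Fin n, Finsupp.single (prefV g i) (EE g d i)

lemma Yv_prefV {m : ℕ} (w : CWord n r m) (i : Fin m) :
    Yv (pref w ((i : ℕ) + 1)) = X (prefV w i) := by
  rw [Yv, dif_pos ⟨w.letter i, letter_mem_pref w i⟩]
  rfl

lemma btd_eq_monomial (g : CPerm n r) (d : Fin n → ℕ) :
    btd g d = monomial (Fsupp g d) 1 := by
  unfold _root_.btd _root_.btw
  rw [← Finset.prod_mul_distrib]
  have hstep : ∀ i : Fin n,
      Yv (pref g ((i : ℕ) + 1)) ^ mExp g i * Yv (pref g ((i : ℕ) + 1)) ^ (r * d i)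
        = X (prefV g i) ^ EE g d i := by
    intro i
    rw [← pow_add, Yv_prefV]
    rfl
  rw [Finset.prod_congr rfl fun i _ => hstep i]
  exact prod_X_pow univ (prefV g) (EE g d)

/-- Partial sums of the exponents, from position `i` to the end. -/
def Bsum (g : CPerm n r) (d : Fin n → ℕ) (i : ℕ) : ℕ :=
  ∑ j ∈ univ.filter (fun j : Fin n => i ≤ (j : ℕ)), EE g d j

lemma Bsum_of_ge {g : CPerm n r} {d : Fin n → ℕ} {i : ℕ} (h : n ≤ i) : Bsum g d i = 0 := by
  unfold Bsum
  rw [Finset.filter_false_of_mem fun j _ => by have := j.isLt; omega, Finset.sum_empty]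

lemma Bsum_succ (g : CPerm n r) (d : Fin n → ℕ) (i : Fin n) :
    Bsum g d (i : ℕ) = EE g d i + Bsum g d ((i : ℕ) + 1) := by
  unfold Bsum
  have hsplit : univ.filter (fun j : Fin n => (i : ℕ) ≤ (j : ℕ))
      = insert i (univ.filter fun j : Fin n => (i : ℕ) + 1 ≤ (j : ℕ)) := by
    ext j
    simp only [mem_filter, mem_univ, true_and, Finset.mem_insert]
    constructor
    · intro hj
      rcases Nat.eq_or_lt_of_le hj with h | h
      · exact Or.inl (Fin.ext h.symm)
      · exact Or.inr h
    · rintro (rfl | hj)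
      · exact le_refl _
      · omega
  rw [hsplit, Finset.sum_insert (by simp only [mem_filter, mem_univ, true_and]; omega)]

lemma Bsum_le (g : CPerm n r) (d : Fin n → ℕ) {i i' : ℕ} (h : i ≤ i') :
    Bsum g d i' ≤ Bsum g d i := by
  apply Finset.sum_le_sum_of_subset
  intro x hx
  simp only [mem_filter, mem_univ, true_and] at hx ⊢
  omega

lemma Bsum_mod (g : CPerm n r) (d : Fin n → ℕ) (hr : 0 < r) :
    ∀ (fuel i : ℕ) (h : i < n), n - i ≤ fuel → Bsum g d i % r = (g.color ⟨i, h⟩ : ℕ) := by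
  intro fuel
  induction fuel with
  | zero => intro i h hf; omega
  | succ fuel ih =>
    intro i h hf
    have e0 : Bsum g d i = mExp g ⟨i, h⟩ + r * d ⟨i, h⟩ + Bsum g d (i + 1) := by
      have h6 := Bsum_succ g d ⟨i, h⟩
      unfold EE at h6
      exact h6
    have IH' : (r : ℤ) ∣ (Bsum g d (i + 1) : ℤ) - ((ncol g ⟨i, h⟩ : ℕ) : ℤ) := by
      by_cases h2 : i + 1 < n
      · have hih := ih (i + 1) h2 (by omega)
        have hncol : ncol g ⟨i, h⟩ = (g.color ⟨i + 1, h2⟩ : ℕ) := ncol_eq g ⟨i, h⟩ h2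
        rw [hncol]
        have h4 : r ∣ Bsum g d (i + 1) - (g.color ⟨i + 1, h2⟩ : ℕ) := hih ▸ Nat.dvd_sub_mod _
        have h5 : (g.color ⟨i + 1, h2⟩ : ℕ) ≤ Bsum g d (i + 1) := hih ▸ Nat.mod_le _ _
        have h6 := Int.natCast_dvd_natCast.mpr h4
        rwa [Nat.cast_sub h5] at h6
      · rw [Bsum_of_ge (by omega), ncol_eq_zero g ⟨i, h⟩ h2]
        simp
    have hdvd : (r : ℤ) ∣ (Bsum g d i : ℤ) - ((g.color ⟨i, h⟩ : ℕ) : ℤ) := by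
      have e2 := mexp_int g ⟨i, h⟩ hr
      have hsplit : (Bsum g d i : ℤ) - ((g.color ⟨i, h⟩ : ℕ) : ℤ)
          = (if (⟨i, h⟩ : Fin n) ∈ DesSet g then (r : ℤ) else 0) + (r : ℤ) * (d ⟨i, h⟩ : ℕ)
            + ((Bsum g d (i + 1) : ℤ) - ((ncol g ⟨i, h⟩ : ℕ) : ℤ)) := by
      -- cast e0 and use e2
        have e0' : (Bsum g d i : ℤ)
            = (mExp g ⟨i, h⟩ : ℤ) + (r : ℤ) * (d ⟨i, h⟩ : ℕ) + (Bsum g d (i + 1) : ℤ) := by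
          exact_mod_cast congrArg (Nat.cast : ℕ → ℤ) e0
        rw [e0', e2]
        ring
      rw [hsplit]
      refine dvd_add (dvd_add ?_ ⟨(d ⟨i, h⟩ : ℕ), rfl⟩) IH'
      split
      · exact dvd_refl _
      · exact dvd_zero _
    have hm : Bsum g d i ≡ (g.color ⟨i, h⟩ : ℕ) [MOD r] :=
      (Nat.modEq_iff_dvd).mpr (by
        have : (r : ℤ) ∣ -((Bsum g d i : ℤ) - ((g.color ⟨i, h⟩ : ℕ) : ℤ)) := hdvd.neg_right
        simpa using this)
    have := (g.color ⟨i, h⟩).isLt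
    calc Bsum g d i % r = (g.color ⟨i, h⟩ : ℕ) % r := hm
    _ = (g.color ⟨i, h⟩ : ℕ) := Nat.mod_eq_of_lt this


/-- The number of sets containing `l`, counted with multiplicity by the exponents. -/
def aVec (F : NES n →₀ ℕ) (l : Fin n) : ℕ :=
  ∑ V ∈ univ.filter (fun V : NES n => l ∈ V.1), F V

lemma aVec_Fsupp (g : CPerm n r) (d : Fin n → ℕ) (l : Fin n) :
    aVec (Fsupp g d) l = Bsum g d ((posOf g l : ℕ)) := by
  unfold aVec Fsupp Bsum
  have h1 : ∀ V ∈ univ.filter (fun V : NES n => l ∈ V.1),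
      (∑ i : Fin n, Finsupp.single (prefV g i) (EE g d i)) V
        = ∑ i : Fin n, if prefV g i = V then EE g d i else 0 := by
    intro V _
    rw [Finsupp.finset_sum_apply]
    exact Finset.sum_congr rfl fun i _ => Finsupp.single_apply
  rw [Finset.sum_congr rfl h1, Finset.sum_comm]
  have h2 : ∀ i : Fin n,
      (∑ V ∈ univ.filter (fun V : NES n => l ∈ V.1), if prefV g i = V then EE g d i else 0)
        = if (posOf g l : ℕ) ≤ (i : ℕ) then EE g d i else 0 := by
    intro i
    rw [Finset.sum_ite_eq]
    by_cases hc : (posOf g l : ℕ) ≤ (i : ℕ)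
    · rw [if_pos hc, if_pos]
      simp only [mem_filter, mem_univ, true_and]
      rw [show (prefV g i).1 = pref g ((i : ℕ) + 1) from rfl, mem_pref_iff]
      omega
    · rw [if_neg hc, if_neg]
      simp only [mem_filter, mem_univ, true_and]
      rw [show (prefV g i).1 = pref g ((i : ℕ) + 1) from rfl, mem_pref_iff]
      omega
  rw [Finset.sum_congr rfl fun i _ => h2 i, ← Finset.sum_filter]

lemma btd_injective (hr : 0 < r) {g g' : CPerm n r} {d d' : Fin n → ℕ}
    (heq : btd g d = btd g' d') : g = g' ∧ d = d' := by
  rw [btd_eq_monomial, btd_eq_monomial] at heq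
  have hF : Fsupp g d = Fsupp g' d' := monomial_left_injective (R := ℂ) one_ne_zero heq
  set a : Fin n → ℕ := fun l => aVec (Fsupp g d) l with ha
  have haL : ∀ i : Fin n, a (g.letter i) = Bsum g d (i : ℕ) := by
    intro i
    rw [ha]
    simp only
    rw [aVec_Fsupp, posOf_letter]
  have haL' : ∀ i : Fin n, a (g'.letter i) = Bsum g' d' (i : ℕ) := by
    intro i
    rw [ha]
    simp only
    rw [hF, aVec_Fsupp, posOf_letter]
  have hsm : ∀ (h : CPerm n r) (e : Fin n → ℕ),
      (∀ i : Fin n, a (h.letter i) = Bsum h e (i : ℕ)) →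
      StrictMono (fun i => KK a (h.letter i)) := by
    intro h e hae
    apply strictMono_of_adj
    intro i h2
    have hae' : a (h.letter ⟨(i : ℕ) + 1, h2⟩) = Bsum h e ((i : ℕ) + 1) := hae ⟨(i : ℕ) + 1, h2⟩
    have hb1 : Bsum h e ((i : ℕ) + 1) ≤ Bsum h e (i : ℕ) := Bsum_le h e (Nat.le_succ _)
    rcases Nat.eq_or_lt_of_le hb1 with hbe | hbl
    · have hsucc := Bsum_succ h e i
      have hE : EE h e i = 0 := by omega
      have hm0 : mExp h i = 0 := by
        unfold EE at hE
        omega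
      have e2 := mexp_int h i hr
      rw [hm0] at e2
      have hnc := ncol_lt_r h i hr
      have hnd : i ∉ DesSet h := by
        intro hd
        rw [if_pos hd] at e2
        omega
      have hcc : (h.color i : ℕ) = ncol h i := by
        rw [if_neg hnd] at e2
        omega
      have hlt : (h.letter i : ℕ) < (h.letter ⟨(i : ℕ) + 1, h2⟩ : ℕ) :=
        letter_lt_next_of_not_des hnd h2 hcc
      refine KK_lt_of_eq a ?_ hlt
      rw [hae i, hae']
      omega
    · apply KK_lt_of_lt
      rw [hae i, hae']
      exact hbl
  have hletter : g.letter = g'.letter := sort_unique (hsm g d haL) (hsm g' d' haL')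
  have hBeq : ∀ i : ℕ, Bsum g d i = Bsum g' d' i := by
    intro i
    by_cases h : i < n
    · have h1 : a (g'.letter ⟨i, h⟩) = Bsum g d i := by
        have h0 := haL ⟨i, h⟩
        rw [hletter] at h0
        exact h0
      have h2 : a (g'.letter ⟨i, h⟩) = Bsum g' d' i := haL' ⟨i, h⟩
      omega
    · rw [Bsum_of_ge (by omega), Bsum_of_ge (by omega)]
  have hcolor : g.color = g'.color := by
    funext i
    have c1 := Bsum_mod g d hr n (i : ℕ) i.isLt (by omega)
    have c2 := Bsum_mod g' d' hr n (i : ℕ) i.isLt (by omega)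
    have hi : (⟨(i : ℕ), i.isLt⟩ : Fin n) = i := Fin.ext rfl
    rw [hi] at c1 c2
    apply Fin.ext
    rw [← c1, ← c2, hBeq]
  have hg : g = g' := by
    cases g
    cases g'
    simp only [CWord.mk.injEq]
    exact ⟨hletter, hcolor⟩
  subst hg
  refine ⟨rfl, funext fun i => ?_⟩
  have h1 := Bsum_succ g d i
  have h2 := Bsum_succ g d' i
  have h3 := hBeq (i : ℕ)
  have h4 := hBeq ((i : ℕ) + 1)
  unfold EE at h1 h2
  have h5 : r * d i = r * d' i := by omega
  exact Nat.eq_of_mul_eq_mul_left hr h5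


lemma card_filter_fin_interval (t lo hi : ℕ) (hhi : hi ≤ t) :
    (univ.filter fun j : Fin t => lo ≤ (j : ℕ) ∧ (j : ℕ) < hi).card = hi - lo := by
  have hmem : ∀ m ∈ Finset.Ico lo hi, m < t := by
    intro m hm
    rw [Finset.mem_Ico] at hm
    omega
  have heq : (univ.filter fun j : Fin t => lo ≤ (j : ℕ) ∧ (j : ℕ) < hi)
      = (Finset.Ico lo hi).attachFin hmem := by
    ext j
    simp only [mem_filter, mem_univ, true_and, Finset.mem_attachFin, Finset.mem_Ico]
  rw [heq, Finset.card_attachFin, Nat.card_Ico]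

lemma exists_btd (hr : 0 < r) (t : ℕ) (S : Fin t → NES n)
    (hS : ∀ i j : Fin t, i ≤ j → (S i).1 ⊆ (S j).1) :
    ∃ (g : CPerm n r) (d : Fin n → ℕ), (∏ j, X (S j) : YRing n) = btd g d := by
  classical
  set a : Fin n → ℕ := fun l => (univ.filter fun j : Fin t => l ∈ (S j).1).card with ha
  have ha_le : ∀ l, a l ≤ t := by
    intro l
    rw [ha]
    calc (univ.filter fun j : Fin t => l ∈ (S j).1).card ≤ (univ : Finset (Fin t)).card :=
      Finset.card_filter_le _ _
    _ = t := by rw [card_univ, Fintype.card_fin]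
  have CH1 : ∀ (j : Fin t) (l : Fin n), l ∈ (S j).1 ↔ t - (j : ℕ) ≤ a l := by
    intro j l
    constructor
    · intro hl
      have hsub : (univ.filter fun j' : Fin t => j ≤ j')
          ⊆ (univ.filter fun j' : Fin t => l ∈ (S j').1) := by
        intro j' hj'
        simp only [mem_filter, mem_univ, true_and] at hj' ⊢
        exact hS j j' hj' hl
      have hcard := Finset.card_le_card hsub
      have hIci : (univ.filter fun j' : Fin t => j ≤ j') = Finset.Ici j := by
        ext j'
        simp [Finset.mem_Ici]
      rw [hIci] at hcard
      have hc2 : (Finset.Ici j).card = t - (j : ℕ) := by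
        have : Finset.Ici j = insert j (Finset.Ioi j) := by
          ext x
          simp only [Finset.mem_Ici, Finset.mem_insert, Finset.mem_Ioi]
          constructor
          · intro hx
            rcases eq_or_lt_of_le hx with h | h
            · exact Or.inl h.symm
            · exact Or.inr h
          · rintro (rfl | hx)
            · exact le_refl _
            · exact le_of_lt hx
        rw [this, Finset.card_insert_of_notMem (by simp), Fin.card_Ioi]
        have := j.isLt
        omega
      rw [hc2] at hcard
      exact le_trans hcard (le_of_eq rfl)
    · intro hle
      by_contra hl
      have hsub : (univ.filter fun j' : Fin t => l ∈ (S j').1) ⊆ Finset.Ioi j := by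
        intro j' hj'
        simp only [mem_filter, mem_univ, true_and] at hj'
        simp only [Finset.mem_Ioi]
        by_contra hle'
        push_neg at hle'
        exact hl (hS j' j hle' hj')
      have hcard := Finset.card_le_card hsub
      rw [Fin.card_Ioi] at hcard
      have h1 : a l ≤ t - 1 - (j : ℕ) := hcard
      have := j.isLt
      omega
  -- sort the letters
  set σ : Equiv.Perm (Fin n) := Tuple.sort (KK a) with hσ
  have hKsm : StrictMono fun i => KK a (σ i) := by
    have hmono : Monotone (KK a ∘ σ) := Tuple.monotone_sort (KK a)
    have hinj : Function.Injective (KK a ∘ σ) := (KK_injective a).comp σ.injective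
    exact hmono.strictMono_of_injective hinj
  set g : CPerm n r := ⟨σ, σ.injective, fun i => ⟨a (σ i) % r, Nat.mod_lt _ hr⟩⟩ with hg
  set b : ℕ → ℕ := fun i => if h : i < n then a (σ ⟨i, h⟩) else 0 with hb
  have hbL : ∀ i : Fin n, b (i : ℕ) = a (g.letter i) := by
    intro i
    rw [hb]
    simp only
    rw [dif_pos i.isLt]
  have hbt : ∀ i, b i ≤ t := by
    intro i
    rw [hb]
    simp only
    split
    · exact ha_le _
    · exact Nat.zero_le _
  have hbmono : ∀ i : ℕ, b (i + 1) ≤ b i := by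
    intro i
    by_cases h2 : i + 1 < n
    · have h1 : i < n := by omega
      have hlt := hKsm (show (⟨i, h1⟩ : Fin n) < ⟨i + 1, h2⟩ from Fin.mk_lt_mk.mpr (Nat.lt_succ_self i))
      have := (KK_lt_elim a hlt).1
      rw [hb]
      simp only
      rw [dif_pos h2, dif_pos h1]
      exact this
    · rw [hb]
      simp only
      rw [dif_neg h2]
      exact Nat.zero_le _
  have hb_anti : Antitone b := antitone_nat_of_succ_le hbmono
  have htie : ∀ (i : ℕ) (h1 : i < n) (h2 : i + 1 < n), b i = b (i + 1) →
      (σ ⟨i, h1⟩ : ℕ) < (σ ⟨i + 1, h2⟩ : ℕ) := by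
    intro i h1 h2 hbe
    have hlt := hKsm (show (⟨i, h1⟩ : Fin n) < ⟨i + 1, h2⟩ from Fin.mk_lt_mk.mpr (Nat.lt_succ_self i))
    apply (KK_lt_elim a hlt).2
    rw [hb] at hbe
    simp only at hbe
    rw [dif_pos h1, dif_pos h2] at hbe
    exact hbe.symm
  have hcol : ∀ i : Fin n, (g.color i : ℕ) = b (i : ℕ) % r := by
    intro i
    rw [hb]
    simp only
    rw [dif_pos i.isLt]
  have hncol : ∀ i : Fin n, ncol g i = b ((i : ℕ) + 1) % r := by
    intro i
    by_cases h2 : (i : ℕ) + 1 < n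
    · rw [ncol_eq g i h2, hcol ⟨(i : ℕ) + 1, h2⟩]
    · rw [ncol_eq_zero g i h2, hb]
      simp only
      rw [dif_neg h2, Nat.zero_mod]
  set d : Fin n → ℕ := fun i => (b (i : ℕ) - b ((i : ℕ) + 1) - mExp g i) / r with hd
  have hEE : ∀ i : Fin n, EE g d i = b (i : ℕ) - b ((i : ℕ) + 1) := by
    intro i
    have h3 : b (i : ℕ) = b ((i : ℕ) + 1) → i ∉ DesSet g := by
      intro hbe
      apply not_des_of_tie
      · rw [hcol i, hncol i, hbe]
      · intro h2
        have := htie (i : ℕ) i.isLt h2 hbe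
        have heta : (⟨(i : ℕ), i.isLt⟩ : Fin n) = i := Fin.ext rfl
        rw [heta] at this
        exact this
    have hkey := keyNat (r := r) (bi := b (i : ℕ)) (bi1 := b ((i : ℕ) + 1))
      (ci := (g.color i : ℕ)) (ci1 := ncol g i) (mv := mExp g i)
      (i ∈ DesSet g) hr (hbmono (i : ℕ)) (hcol i) (hncol i)
      (fun hdes => color_le_ncol_of_des hdes) h3 (mexp_int g i hr)
    rw [EE, hd]
    exact hkey
  -- level sets
  set levelF : ℕ → Finset (Fin n) := fun s => univ.filter fun l => s ≤ a l with hlev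
  have hposb : ∀ l : Fin n, a l = b ((posOf g l : ℕ)) := by
    intro l
    rw [hbL (posOf g l), letter_posOf]
  have hLEVr : ∀ (i : Fin n) (s : ℕ), b ((i : ℕ) + 1) < s → s ≤ b (i : ℕ) →
      pref g ((i : ℕ) + 1) = levelF s := by
    intro i s hs1 hs2
    ext l
    rw [mem_pref_iff, hlev]
    simp only [mem_filter, mem_univ, true_and]
    constructor
    · intro hpos
      rw [hposb l]
      calc s ≤ b (i : ℕ) := hs2
      _ ≤ b ((posOf g l : ℕ)) := hb_anti (by omega)
    · intro hsl
      rw [hposb l] at hsl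
      by_contra hpos
      push_neg at hpos
      have : b ((posOf g l : ℕ)) ≤ b ((i : ℕ) + 1) := hb_anti (by omega)
      omega
  have hLEVl : ∀ (i : Fin n) (s : ℕ), 1 ≤ s → pref g ((i : ℕ) + 1) = levelF s →
      b ((i : ℕ) + 1) < s ∧ s ≤ b (i : ℕ) := by
    intro i s hs hpe
    constructor
    · by_cases h2 : (i : ℕ) + 1 < n
      · have hnm : g.letter ⟨(i : ℕ) + 1, h2⟩ ∉ pref g ((i : ℕ) + 1) := by
          rw [mem_pref_iff, posOf_letter]
          exact lt_irrefl _
        rw [hpe] at hnm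
        have h6 : b ((i : ℕ) + 1) = a (g.letter ⟨(i : ℕ) + 1, h2⟩) := hbL ⟨(i : ℕ) + 1, h2⟩
        by_contra hcon
        push_neg at hcon
        apply hnm
        rw [hlev]
        simp only [mem_filter, mem_univ, true_and]
        have h7 : a (g.letter ⟨(i : ℕ) + 1, h2⟩) = a (σ ⟨(i : ℕ) + 1, h2⟩) := rfl
        omega
      · rw [hb]
        simp only
        rw [dif_neg h2]
        omega
    · have hm : g.letter i ∈ pref g ((i : ℕ) + 1) := letter_mem_pref g i
      rw [hpe, hlev] at hm
      simp only [mem_filter, mem_univ, true_and] at hm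
      have h6 := hbL i
      have h7 : a (g.letter i) = a (σ i) := rfl
      omega
  have hlevel_ex : ∀ s : ℕ, 1 ≤ s → (levelF s).Nonempty →
      ∃ i : Fin n, pref g ((i : ℕ) + 1) = levelF s := by
    intro s hs ⟨l, hl⟩
    rw [hlev] at hl
    simp only [mem_filter, mem_univ, true_and] at hl
    set I : Finset (Fin n) := univ.filter fun i : Fin n => s ≤ b (i : ℕ) with hI
    have hIne : I.Nonempty := by
      refine ⟨posOf g l, ?_⟩
      rw [hI]
      simp only [mem_filter, mem_univ, true_and]
      rw [← hposb l]
      exact hl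
    set i0 : Fin n := I.max' hIne with hi0
    have hi0mem : i0 ∈ I := I.max'_mem hIne
    rw [hI] at hi0mem
    simp only [mem_filter, mem_univ, true_and] at hi0mem
    refine ⟨i0, hLEVr i0 s ?_ hi0mem⟩
    by_cases h2 : (i0 : ℕ) + 1 < n
    · by_contra hcon
      push_neg at hcon
      have : (⟨(i0 : ℕ) + 1, h2⟩ : Fin n) ∈ I := by
        rw [hI]
        simp only [mem_filter, mem_univ, true_and]
        exact hcon
      have := I.le_max' _ this
      rw [← hi0] at this
      have h5 : (i0 : ℕ) + 1 ≤ (i0 : ℕ) := this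
      omega
    · rw [hb]
      simp only
      rw [dif_neg h2]
      omega
  -- assemble
  refine ⟨g, d, ?_⟩
  rw [btd_eq_monomial g d]
  have hL : (∏ j, X (S j) : YRing n) = monomial (∑ j : Fin t, Finsupp.single (S j) 1) 1 := by
    have := prod_X_pow (univ : Finset (Fin t)) S (fun _ => 1)
    simpa using this
  rw [hL]
  suffices hsupp : (∑ j : Fin t, Finsupp.single (S j) (1 : ℕ)) = Fsupp g d by rw [hsupp]
  ext V
  have hLHS : (∑ j : Fin t, Finsupp.single (S j) 1) V
      = (univ.filter fun j : Fin t => S j = V).card := by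
    rw [Finsupp.finset_sum_apply, Finset.card_filter]
    exact Finset.sum_congr rfl fun j _ => Finsupp.single_apply
  have hRHS : (Fsupp g d) V = ∑ i : Fin n, if prefV g i = V then EE g d i else 0 := by
    rw [Fsupp, Finsupp.finset_sum_apply]
    exact Finset.sum_congr rfl fun i _ => Finsupp.single_apply
  rw [hLHS, hRHS]
  have hSlev : ∀ j : Fin t, (S j).1 = levelF (t - (j : ℕ)) := by
    intro j
    ext l
    rw [hlev]
    simp only [mem_filter, mem_univ, true_and]
    exact CH1 j l
  by_cases hex : ∃ i : Fin n, prefV g i = V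
  · obtain ⟨i0, hi0⟩ := hex
    have hRHS2 : (∑ i : Fin n, if prefV g i = V then EE g d i else 0) = EE g d i0 := by
      rw [Finset.sum_eq_single i0]
      · rw [if_pos hi0]
      · intro i _ hne
        rw [if_neg fun he => hne (prefV_injective g (he.trans hi0.symm))]
      · intro habs
        exact absurd (mem_univ i0) habs
    rw [hRHS2, hEE i0]
    have hVpref : V.1 = pref g ((i0 : ℕ) + 1) := by rw [← hi0]; rfl
    have hiff : ∀ j : Fin t, S j = V ↔
        (t - (j : ℕ) ≤ b (i0 : ℕ) ∧ b ((i0 : ℕ) + 1) < t - (j : ℕ)) := by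
      intro j
      constructor
      · intro hSV
        have hpe : pref g ((i0 : ℕ) + 1) = levelF (t - (j : ℕ)) := by
          rw [← hVpref, ← hSV]
          exact hSlev j
        have hts : 1 ≤ t - (j : ℕ) := by have := j.isLt; omega
        have := hLEVl i0 _ hts hpe
        omega
      · intro hbound
        have hpe := hLEVr i0 (t - (j : ℕ)) hbound.2 hbound.1
        apply Subtype.ext
        rw [hSlev j, hVpref, hpe]
    have hcount : (univ.filter fun j : Fin t => S j = V)
        = univ.filter fun j : Fin t => (t - b (i0 : ℕ) ≤ (j : ℕ) ∧ (j : ℕ) < t - b ((i0 : ℕ) + 1)) := by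
      ext j
      simp only [mem_filter, mem_univ, true_and]
      rw [hiff j]
      have := j.isLt
      have := hbt (i0 : ℕ)
      have := hbt ((i0 : ℕ) + 1)
      omega
    rw [hcount, card_filter_fin_interval t _ _ (by omega)]
    have := hbmono (i0 : ℕ)
    have := hbt (i0 : ℕ)
    omega
  · push_neg at hex
    have hRHS2 : (∑ i : Fin n, if prefV g i = V then EE g d i else 0) = 0 :=
      Finset.sum_eq_zero fun i _ => if_neg (hex i)
    rw [hRHS2]
    have hempty : (univ.filter fun j : Fin t => S j = V) = ∅ := by
      apply Finset.filter_false_of_mem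
      intro j _ hSV
      have hts : 1 ≤ t - (j : ℕ) := by have := j.isLt; omega
      have hne : (levelF (t - (j : ℕ))).Nonempty := by
        rw [← hSlev j, hSV]
        exact V.2
      obtain ⟨i, hi⟩ := hlevel_ex (t - (j : ℕ)) hts hne
      apply hex i
      apply Subtype.ext
      rw [show (prefV g i).1 = pref g ((i : ℕ) + 1) from rfl, hi, ← hSlev j, hSV]
    rw [hempty, Finset.card_empty]


end MCAux

/-- Every multichain monomial `y_{S_1} ⋯ y_{S_t}` in `ℂ[y_S]`
equals `b̃_{(g,d)}` for exactly one pair `(g, d) ∈ G_n × ℤ_{≥0}^n`. -/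
theorem multichain_monomial_eq_btd_unique (n r : ℕ) (hr : 1 ≤ r) (hn : 1 ≤ n)
    (t : ℕ) (S : Fin t → NES n) (hS : ∀ i j : Fin t, i ≤ j → (S i).1 ⊆ (S j).1) :
    ∃! gd : CPerm n r × (Fin n → ℕ), (∏ j, X (S j) : YRing n) = btd gd.1 gd.2 := by
  obtain ⟨g, d, h⟩ := MCAux.exists_btd hr t S hS
  refine ⟨(g, d), h, ?_⟩
  rintro ⟨g', d'⟩ h'
  obtain ⟨h1, h2⟩ := MCAux.btd_injective hr (h'.symm.trans h)
  simp only [Prod.mk.injEq]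
  exact ⟨h1, h2⟩

end
end

section
/- For g ∈ G_n and d ∈ ℤ_{≥0}^n set b̃′_{(g,d)} = θ_{n−k+1}^{d_{n−k+1}}⋯θ_n^{d_n} · b̃_{(g,(d_1,…,d_{n−k},0,…,0))}. Then the set {b̃′_{(g,d)} : g ∈ G_n, d ∈ ℤ_{≥0}^n} (taken as elements of ℂ[𝓑_n*]) is a ℂ-vector space basis of ℂ[𝓑_n*]. -/
open scoped Classical
open MvPolynomial Finset

noncomputable section

/-- `b̃′_{(g,d)} = θ_{n-k+1}^{d_{n-k+1}} ⋯ θ_n^{d_n} · b̃_{(g,(d_1,…,d_{n-k},0,…,0))}`. -/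
def btp (n k r : ℕ) (g : CPerm n r) (d : Fin n → ℕ) : YRing n :=
  (∏ i : Fin n, if n - k ≤ (i : ℕ) then theta n r ((i : ℕ) + 1) ^ d i else 1) *
    btd g (fun i => if (i : ℕ) < n - k then d i else 0)

/-! ### Part 0: generic lemmas -/

lemma sum_range_two_pow (p : ℕ) : ∑ i ∈ Finset.range p, 2 ^ i = 2 ^ p - 1 := by
  induction p with
  | zero => simp
  | succ p ih => rw [Finset.sum_range_succ, ih]; have := Nat.one_le_two_pow (n := p); omega

/-- weight of a subset: `Σ_{x∈Z} 2^(n-1-x)`. -/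
def wtS (n : ℕ) (Z : Finset (Fin n)) : ℕ := ∑ x ∈ Z, 2 ^ (n - 1 - (x : ℕ))

lemma wt_lt_wt {n : ℕ} {X Y : Finset (Fin n)} (hcard : X.card = Y.card) (hne : X ≠ Y)
    (h : ∀ x ∈ X \ Y, ∀ y ∈ Y \ X, x < y) : wtS n Y < wtS n X := by
  have hXY : (X \ Y).Nonempty := by
    rw [Finset.sdiff_nonempty]
    intro hsub
    exact hne (Finset.eq_of_subset_of_card_le hsub hcard.ge)
  obtain ⟨x₀, hx₀⟩ := hXY
  -- strict inequality on the difference parts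
  have key : ∑ y ∈ Y \ X, 2 ^ (n - 1 - (y : ℕ)) < ∑ x ∈ X \ Y, 2 ^ (n - 1 - (x : ℕ)) := by
    -- use the maximum of X \ Y
    obtain ⟨x₁, hx₁, hx₁max⟩ := Finset.exists_max_image (X \ Y) (fun x => (x : ℕ)) ⟨x₀, hx₀⟩
    have hup : ∑ y ∈ Y \ X, 2 ^ (n - 1 - (y : ℕ)) < 2 ^ (n - 1 - (x₁ : ℕ)) := by
      have hinj : ∀ y ∈ Y \ X, ∀ z ∈ Y \ X,
          n - 1 - (y : ℕ) = n - 1 - (z : ℕ) → y = z := by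
        intro y hy z hz hyz
        have hy' := y.isLt; have hz' := z.isLt
        exact Fin.ext (by omega)
      calc ∑ y ∈ Y \ X, 2 ^ (n - 1 - (y : ℕ))
          = ∑ i ∈ (Y \ X).image (fun y : Fin n => n - 1 - (y : ℕ)), 2 ^ i := (Finset.sum_image hinj).symm
        _ ≤ ∑ i ∈ Finset.range (n - 1 - (x₁ : ℕ)), 2 ^ i := by
            apply Finset.sum_le_sum_of_subset
            intro i hi
            simp only [Finset.mem_image] at hi
            obtain ⟨y, hy, rfl⟩ := hi
            have := h x₁ hx₁ y hy
            have hyn := y.isLt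
            simp only [Finset.mem_range]
            omega
        _ = 2 ^ (n - 1 - (x₁ : ℕ)) - 1 := sum_range_two_pow _
        _ < 2 ^ (n - 1 - (x₁ : ℕ)) := by
            have := Nat.one_le_two_pow (n := n - 1 - (x₁ : ℕ)); omega
    exact lt_of_lt_of_le hup (Finset.single_le_sum (f := fun x : Fin n => 2 ^ (n - 1 - (x : ℕ)))
      (fun _ _ => Nat.zero_le _) hx₁)
  have hY : wtS n Y = (∑ y ∈ Y ∩ X, 2 ^ (n - 1 - (y : ℕ))) + ∑ y ∈ Y \ X, 2 ^ (n - 1 - (y : ℕ)) :=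
    (Finset.sum_inter_add_sum_sdiff Y X _).symm
  have hX : wtS n X = (∑ y ∈ X ∩ Y, 2 ^ (n - 1 - (y : ℕ))) + ∑ y ∈ X \ Y, 2 ^ (n - 1 - (y : ℕ)) :=
    (Finset.sum_inter_add_sum_sdiff X Y _).symm
  rw [hY, hX, Finset.inter_comm]
  omega

/-- A family equal to a basis plus strictly-smaller terms (w.r.t. a `ℕ`-measure) is a basis. -/
lemma basis_triangular {ι M : Type*} [AddCommGroup M] [Module ℂ M]
    (b : Module.Basis ι ℂ M) (W : ι → ℕ) (f : ι → M)
    (h1 : ∀ i, b.repr (f i) i = 1)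
    (h2 : ∀ i j, b.repr (f i) j ≠ 0 → j ≠ i → W j < W i) :
    ∃ c : Module.Basis ι ℂ M, ∀ i, c i = f i := by
  have hli : LinearIndependent ℂ f := by
    rw [linearIndependent_iff']
    intro s g hsum i hi
    by_contra hgi
    -- maximal W among nonzero coefficients
    have hne : (s.filter fun j => g j ≠ 0).Nonempty := ⟨i, Finset.mem_filter.2 ⟨hi, hgi⟩⟩
    obtain ⟨i₀, hi₀, hmax⟩ := Finset.exists_max_image _ W hne
    rw [Finset.mem_filter] at hi₀
    have happ : (b.repr (∑ j ∈ s, g j • f j)) i₀ = 0 := by rw [hsum]; simp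
    rw [map_sum, Finsupp.coe_finset_sum, Finset.sum_apply] at happ
    have : ∀ j ∈ s, j ≠ i₀ → (b.repr (g j • f j)) i₀ = 0 := by
      intro j hj hne'
      rw [map_smul, Finsupp.smul_apply]
      rcases eq_or_ne (g j) 0 with h0 | h0
      · rw [h0, zero_smul]
      · rcases eq_or_ne ((b.repr (f j)) i₀) 0 with h0' | h0'
        · rw [h0', smul_zero]
        · exfalso
          have hWlt := h2 j i₀ h0' (Ne.symm hne')
          have := hmax j (Finset.mem_filter.2 ⟨hj, h0⟩)
          omega
    rw [Finset.sum_eq_single i₀ this (fun h => absurd hi₀.1 h)] at happ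
    rw [map_smul, Finsupp.smul_apply, h1 i₀, smul_eq_mul, mul_one] at happ
    exact hi₀.2 happ
  have hspan : ⊤ ≤ Submodule.span ℂ (Set.range f) := by
    have key : ∀ w : ℕ, ∀ i, W i < w → b i ∈ Submodule.span ℂ (Set.range f) := by
      intro w
      induction w with
      | zero => omega
      | succ w ih =>
        intro i hiw
        have hrepr : ∀ j, b.repr (b i - f i) j ≠ 0 → W j < W i := by
          intro j hj
          rw [map_sub, Finsupp.sub_apply, b.repr_self] at hj
          rcases eq_or_ne j i with heq | hne'
          · exfalso; rw [heq, Finsupp.single_eq_same, h1 i] at hj; simp at hj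
          · rw [Finsupp.single_eq_of_ne' (Ne.symm hne')] at hj
            exact h2 i j (fun h => hj (by rw [h, zero_sub, neg_zero])) hne'
        have hg : b i - f i ∈ Submodule.span ℂ (Set.range f) := by
          have := b.linearCombination_repr (b i - f i)
          rw [← this, Finsupp.linearCombination_apply, Finsupp.sum]
          apply Submodule.sum_mem
          intro j hj
          apply Submodule.smul_mem
          have hWj : W j < W i := hrepr j (Finsupp.mem_support_iff.1 hj)
          exact ih j (by omega)
        have : b i = (b i - f i) + f i := by abel
        rw [this]
        exact Submodule.add_mem _ hg (Submodule.subset_span ⟨i, rfl⟩)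
    rw [← b.span_eq]
    apply Submodule.span_le.2
    rintro x ⟨i, rfl⟩
    exact key (W i + 1) i (by omega)
  exact ⟨Module.Basis.mk hli hspan, fun i => Module.Basis.mk_apply hli hspan i⟩
/-! ### Part 1: chain monomial basis of the Stanley–Reisner quotient -/

/-- The ideal of polynomials all of whose chain-monomial coefficients vanish. -/
def Inc (n : ℕ) : Ideal (YRing n) where
  carrier := {p | ∀ e : NES n →₀ ℕ, IsChainE e → coeff e p = 0}
  add_mem' := by
    intro p q hp hq e he
    rw [coeff_add, hp e he, hq e he, add_zero]
  zero_mem' := by intro e he; rw [coeff_zero]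
  smul_mem' := by
    intro c p hp e he
    rw [smul_eq_mul, coeff_mul]
    apply Finset.sum_eq_zero
    rintro ⟨f, g⟩ hfg
    rw [Finset.HasAntidiagonal.mem_antidiagonal] at hfg
    have hg : IsChainE g := by
      intro S hS T hT
      have hsub : ∀ U, U ∈ g.support → U ∈ e.support := by
        intro U hU
        rw [Finsupp.mem_support_iff] at hU ⊢
        have : e U = f U + g U := by rw [← hfg]; rfl
        omega
      exact he S (hsub S hS) T (hsub T hT)
    rw [hp g hg, mul_zero]

lemma SRideal_le_Inc (n : ℕ) : SRideal n ≤ Inc n := by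
  rw [SRideal, Ideal.span_le]
  rintro q ⟨S, T, hST, hTS, rfl⟩
  intro e he
  have hq : (X S * X T : YRing n) =
      monomial (Finsupp.single S 1 + Finsupp.single T 1) 1 := by
    rw [X, X, monomial_mul, one_mul]
  rw [hq, coeff_monomial]
  split_ifs with h
  · exfalso
    have hne : S ≠ T := fun h' => hST (h' ▸ subset_rfl)
    have hS : S ∈ e.support := by
      rw [Finsupp.mem_support_iff, ← h, Finsupp.add_apply, Finsupp.single_apply,
        Finsupp.single_apply, if_pos rfl, if_neg (Ne.symm hne)]
      omega
    have hT : T ∈ e.support := by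
      rw [Finsupp.mem_support_iff, ← h, Finsupp.add_apply, Finsupp.single_apply,
        Finsupp.single_apply, if_neg hne, if_pos rfl]
      omega
    rcases he S hS T hT with h' | h'
    · exact hST h'
    · exact hTS h'
  · rfl

lemma mk_monomial_eq_zero {n : ℕ} {e : NES n →₀ ℕ} (h : ¬ IsChainE e) :
    Ideal.Quotient.mk (SRideal n) (monomial e 1) = 0 := by
  rw [IsChainE] at h
  push_neg at h
  obtain ⟨S, hS, T, hT, hST, hTS⟩ := h
  rw [Finsupp.mem_support_iff] at hS hT
  have hne : S ≠ T := fun h' => hST (h' ▸ subset_rfl)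
  rw [Ideal.Quotient.eq_zero_iff_mem]
  have hXmem : (X S * X T : YRing n) ∈ SRideal n :=
    Ideal.subset_span ⟨S, T, hST, hTS, rfl⟩
  have heq : (monomial e 1 : YRing n) =
      monomial (e - Finsupp.single S 1 - Finsupp.single T 1) 1 * (X S * X T) := by
    rw [X, X, monomial_mul, monomial_mul, one_mul, one_mul]
    have hexp : e - Finsupp.single S 1 - Finsupp.single T 1 +
        (Finsupp.single S 1 + Finsupp.single T 1) = e := by
      ext U
      simp only [Finsupp.add_apply, Finsupp.tsub_apply, Finsupp.single_apply]
      by_cases h1 : S = U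
      · by_cases h2 : T = U
        · exact absurd (h1.trans h2.symm) hne
        · simp only [if_pos h1, if_neg h2]
          have := hS; rw [h1] at this; omega
      · by_cases h2 : T = U
        · simp only [if_neg h1, if_pos h2]
          have := hT; rw [h2] at this; omega
        · simp only [if_neg h1, if_neg h2]
          omega
    rw [hexp]
  rw [heq]
  exact Ideal.mul_mem_left _ _ hXmem

/-- index type for the chain-monomial basis -/
def ChainIdx (n : ℕ) := {e : NES n →₀ ℕ // IsChainE e}

lemma chainBasis_li (n : ℕ) : LinearIndependent ℂ
    (fun e : ChainIdx n => Ideal.Quotient.mk (SRideal n) (monomial e.1 1)) := by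
  rw [linearIndependent_iff']
  intro s g hsum i hi
  have : Ideal.Quotient.mk (SRideal n)
      (∑ e ∈ s, g e • (monomial e.1 1 : YRing n)) = 0 := by
    rw [map_sum]
    refine (Finset.sum_congr rfl fun e _ => ?_).trans hsum; exact map_smul (Ideal.Quotient.mkₐ ℂ (SRideal n)) (g e) _
  rw [Ideal.Quotient.eq_zero_iff_mem] at this
  have hInc := SRideal_le_Inc n this
  have := hInc i.1 i.2
  rw [coeff_sum] at this
  rw [Finset.sum_eq_single i] at this
  · rw [coeff_smul, coeff_monomial, if_pos rfl] at this
    simpa using this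
  · intro e he hne
    rw [coeff_smul, coeff_monomial, if_neg, smul_zero]
    intro h
    exact hne (Subtype.ext h)
  · intro h; exact absurd hi h
  
lemma chainBasis_span (n : ℕ) : ⊤ ≤ Submodule.span ℂ
    (Set.range fun e : ChainIdx n => Ideal.Quotient.mk (SRideal n) (monomial e.1 1)) := by
  rintro x -
  obtain ⟨p, rfl⟩ := Ideal.Quotient.mk_surjective x
  have hmk : Ideal.Quotient.mk (SRideal n) p = Ideal.Quotient.mkₐ ℂ (SRideal n) p := rfl
  rw [hmk, p.as_sum, map_sum]
  apply Submodule.sum_mem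
  intro e he
  have : (monomial e (coeff e p) : YRing n) = coeff e p • monomial e 1 := by
    rw [smul_monomial, smul_eq_mul, mul_one]
  rw [this, map_smul]
  apply Submodule.smul_mem
  rw [Ideal.Quotient.mkₐ_eq_mk]
  by_cases hc : IsChainE e
  · exact Submodule.subset_span ⟨⟨e, hc⟩, rfl⟩
  · rw [mk_monomial_eq_zero hc]
    exact Submodule.zero_mem _

/-- the chain monomial basis of `ℂ[𝓑_n*]` -/
def chainBasis (n : ℕ) : Module.Basis (ChainIdx n) ℂ (YRing n ⧸ SRideal n) :=
  Module.Basis.mk (chainBasis_li n) (chainBasis_span n)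

lemma chainBasis_apply (n : ℕ) (e : ChainIdx n) :
    chainBasis n e = Ideal.Quotient.mk (SRideal n) (monomial e.1 1) :=
  Module.Basis.mk_apply _ _ _

lemma repr_zero_of_span {ι M : Type*} [AddCommGroup M] [Module ℂ M] (b : Module.Basis ι ℂ M)
    {s : Set ι} {x : M} (hx : x ∈ Submodule.span ℂ (b '' s)) {j : ι} (hj : j ∉ s) :
    b.repr x j = 0 := by
  induction hx using Submodule.span_induction with
  | mem y hy =>
    obtain ⟨i, hi, rfl⟩ := hy
    rw [b.repr_self, Finsupp.single_apply, if_neg]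
    intro h; exact hj (h ▸ hi)
  | zero => simp
  | add y z _ _ hy hz => rw [map_add, Finsupp.add_apply, hy, hz, add_zero]
  | smul c y _ hy => rw [map_smul, Finsupp.smul_apply, hy, smul_zero]
/-! ### Part 2: colored word basics -/

lemma mem_pref {n r m : ℕ} {w : CWord n r m} {t : ℕ} {a : Fin n} :
    a ∈ pref w t ↔ ∃ l : Fin m, (l : ℕ) < t ∧ w.letter l = a := by
  simp [pref]

lemma pref_mono {n r m : ℕ} (w : CWord n r m) {s t : ℕ} (h : s ≤ t) :
    pref w s ⊆ pref w t := by
  intro a ha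
  rw [mem_pref] at ha ⊢
  obtain ⟨l, hl, rfl⟩ := ha
  exact ⟨l, by omega, rfl⟩

lemma letter_mem_pref {n r m : ℕ} {w : CWord n r m} {l : Fin m} {t : ℕ} :
    w.letter l ∈ pref w t ↔ (l : ℕ) < t := by
  rw [mem_pref]
  constructor
  · rintro ⟨l', hl', he⟩
    rwa [← w.inj he]
  · intro h; exact ⟨l, h, rfl⟩

lemma pref_eq_image {n r m : ℕ} (w : CWord n r m) (t : ℕ) :
    pref w t = (univ.filter fun l : Fin m => (l : ℕ) < t).image w.letter := by
  ext a
  rw [mem_pref]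
  constructor
  · rintro ⟨l, hl, rfl⟩
    exact Finset.mem_image.2 ⟨l, Finset.mem_filter.2 ⟨Finset.mem_univ _, hl⟩, rfl⟩
  · intro hx
    obtain ⟨l, hl, rfl⟩ := Finset.mem_image.1 hx
    exact ⟨l, (Finset.mem_filter.1 hl).2, rfl⟩

lemma card_filter_lt (m t : ℕ) (ht : t ≤ m) :
    (univ.filter fun l : Fin m => (l : ℕ) < t).card = t := by
  have : (univ.filter fun l : Fin m => (l : ℕ) < t) =
      (univ : Finset (Fin t)).map (Fin.castLEEmb ht) := by
    ext x
    constructor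
    · intro hx
      rw [Finset.mem_filter] at hx
      exact Finset.mem_map.2 ⟨⟨(x : ℕ), hx.2⟩, Finset.mem_univ _, Fin.ext (by simp)⟩
    · intro hx
      obtain ⟨y, -, rfl⟩ := Finset.mem_map.1 hx
      rw [Finset.mem_filter]
      exact ⟨Finset.mem_univ _, by simpa using y.isLt⟩
  rw [this, Finset.card_map, Finset.card_univ, Fintype.card_fin]

lemma card_pref {n r m : ℕ} (w : CWord n r m) (t : ℕ) (ht : t ≤ m) :
    (pref w t).card = t := by
  rw [pref_eq_image, Finset.card_image_of_injective _ w.inj, card_filter_lt m t ht]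

lemma pref_univ {n r : ℕ} (w : CPerm n r) : pref w n = univ := by
  apply Finset.eq_univ_of_card
  rw [card_pref w n le_rfl, Fintype.card_fin]

lemma not_des_last {n r m : ℕ} {w : CWord n r m} {i : Fin m} (h : m ≤ (i : ℕ) + 1) :
    i ∉ DesSet w := by
  intro hmem
  rw [DesSet, Finset.mem_filter] at hmem
  obtain ⟨-, j, hj, -⟩ := hmem
  have := j.isLt
  omega

lemma des_iff {n r m : ℕ} {w : CWord n r m} {i : Fin m} (h : (i : ℕ) + 1 < m) :
    i ∈ DesSet w ↔ colLt (w.letter ⟨(i : ℕ)+1, h⟩, w.color ⟨(i : ℕ)+1, h⟩)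
      (w.letter i, w.color i) := by
  rw [DesSet, Finset.mem_filter]
  constructor
  · rintro ⟨-, j, hj, hc⟩
    have : j = ⟨(i : ℕ)+1, h⟩ := Fin.ext hj
    rwa [this] at hc
  · intro hc
    exact ⟨Finset.mem_univ _, ⟨(i : ℕ)+1, h⟩, rfl, hc⟩

/-- The integer form and bound of the exponent `mExp`. -/
lemma mExp_spec {n r m : ℕ} (w : CWord n r m) (i : Fin m) :
    (mExp w i : ℤ) = ((w.color i : ℕ) : ℤ) -
      (if h : (i : ℕ) + 1 < m then ((w.color ⟨(i : ℕ)+1, h⟩ : ℕ) : ℤ) else 0) +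
      (if i ∈ DesSet w then (r : ℤ) else 0) ∧ mExp w i ≤ r := by
  have hci : (w.color i : ℕ) < r := (w.color i).isLt
  by_cases h : (i : ℕ) + 1 < m
  · have hcj : (w.color ⟨(i : ℕ)+1, h⟩ : ℕ) < r := (w.color _).isLt
    by_cases hd : i ∈ DesSet w
    · have hlt := (des_iff h).1 hd
      rw [colLt] at hlt
      have hnn : (0 : ℤ) ≤ ((w.color i : ℕ) : ℤ) - ((w.color ⟨(i : ℕ)+1, h⟩ : ℕ) : ℤ) + r := by
        rcases hlt with h1 | ⟨h1, -⟩
        · simp only at h1; omega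
        · have : (w.color ⟨(i : ℕ)+1, h⟩ : ℕ) = (w.color i : ℕ) := congrArg Fin.val h1
          omega
      rw [mExp, dif_pos h, if_pos hd]
      constructor
      · rw [Int.toNat_of_nonneg (by push_cast; omega)]
      · rcases hlt with h1 | ⟨h1, -⟩
        · simp only at h1
          have := Int.toNat_of_nonneg (by push_cast; omega :
            (0:ℤ) ≤ ((w.color i : ℕ) : ℤ) - ((w.color ⟨(i : ℕ)+1, h⟩ : ℕ) : ℤ) + r)
          omega
        · have : (w.color ⟨(i : ℕ)+1, h⟩ : ℕ) = (w.color i : ℕ) := congrArg Fin.val h1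
          have := Int.toNat_of_nonneg (by push_cast; omega :
            (0:ℤ) ≤ ((w.color i : ℕ) : ℤ) - ((w.color ⟨(i : ℕ)+1, h⟩ : ℕ) : ℤ) + r)
          omega
    · have hnd := (des_iff h).not.1 hd
      rw [colLt] at hnd
      push_neg at hnd
      have hle : (w.color ⟨(i : ℕ)+1, h⟩ : ℕ) ≤ (w.color i : ℕ) := by
        have := hnd.1
        simp only at this
        omega
      rw [mExp, dif_pos h, if_neg hd]
      constructor
      · rw [Int.toNat_of_nonneg (by push_cast; omega)]
      · have := Int.toNat_of_nonneg (by push_cast; omega :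
          (0:ℤ) ≤ ((w.color i : ℕ) : ℤ) - ((w.color ⟨(i : ℕ)+1, h⟩ : ℕ) : ℤ) + 0)
        omega
  · have hd : i ∉ DesSet w := not_des_last (by omega)
    rw [mExp, dif_neg h, if_neg hd]
    constructor
    · rw [Int.toNat_of_nonneg (by push_cast; omega)]
    · have := Int.toNat_of_nonneg ((by push_cast; omega) :
        (0:ℤ) ≤ ((w.color i : ℕ) : ℤ) - 0 + 0)
      omega

lemma mExp_le_r {n r m : ℕ} (w : CWord n r m) (i : Fin m) : mExp w i ≤ r :=
  (mExp_spec w i).2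

/-- position with zero exponent is an equal-color ascent -/
lemma ascent_of_mExp_zero {n r m : ℕ} {w : CWord n r m} {i : Fin m}
    (h : (i : ℕ) + 1 < m) (hm : mExp w i = 0) :
    w.color ⟨(i : ℕ)+1, h⟩ = w.color i ∧ w.letter i < w.letter ⟨(i : ℕ)+1, h⟩ := by
  obtain ⟨hspec, -⟩ := mExp_spec w i
  rw [hm] at hspec
  rw [dif_pos h] at hspec
  have hd : i ∉ DesSet w := by
    intro hd
    rw [if_pos hd] at hspec
    have hci : (w.color i : ℕ) < r := (w.color i).isLt
    have hcj : (w.color ⟨(i : ℕ)+1, h⟩ : ℕ) < r := (w.color _).isLt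
    have hlt := (des_iff h).1 hd
    rw [colLt] at hlt
    rcases hlt with h1 | ⟨h1, -⟩
    · simp only at h1; omega
    · have : (w.color ⟨(i : ℕ)+1, h⟩ : ℕ) = (w.color i : ℕ) := congrArg Fin.val h1
      omega
  rw [if_neg hd] at hspec
  have hnd := (des_iff h).not.1 hd
  rw [colLt] at hnd
  push_neg at hnd
  have hceq : w.color ⟨(i : ℕ)+1, h⟩ = w.color i := by
    have h1 := hnd.1
    simp only at h1
    have : (w.color ⟨(i : ℕ)+1, h⟩ : ℕ) = (w.color i : ℕ) := by omega
    exact Fin.ext this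
  refine ⟨hceq, ?_⟩
  have h2 := hnd.2 hceq
  simp only at h2
  have hne : w.letter i ≠ w.letter ⟨(i : ℕ)+1, h⟩ := by
    intro he
    have := w.inj he
    simp only [Fin.ext_iff] at this
    omega
  omega

/-- `mExp = r` forces an equal-color strict descent -/
lemma desc_of_mExp_eq_r {n r m : ℕ} {w : CWord n r m} {i : Fin m}
    (hr : 0 < r) (hm : mExp w i = r) :
    ∃ h : (i : ℕ) + 1 < m, w.color ⟨(i : ℕ)+1, h⟩ = w.color i ∧
      w.letter ⟨(i : ℕ)+1, h⟩ < w.letter i := by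
  obtain ⟨hspec, -⟩ := mExp_spec w i
  rw [hm] at hspec
  have hci : (w.color i : ℕ) < r := (w.color i).isLt
  by_cases h : (i : ℕ) + 1 < m
  · refine ⟨h, ?_⟩
    rw [dif_pos h] at hspec
    have hcj : (w.color ⟨(i : ℕ)+1, h⟩ : ℕ) < r := (w.color _).isLt
    have hd : i ∈ DesSet w := by
      by_contra hd
      rw [if_neg hd] at hspec
      omega
    rw [if_pos hd] at hspec
    have hceq : (w.color ⟨(i : ℕ)+1, h⟩ : ℕ) = (w.color i : ℕ) := by omega
    have hlt := (des_iff h).1 hd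
    rw [colLt] at hlt
    rcases hlt with h1 | ⟨-, h1⟩
    · simp only at h1; omega
    · exact ⟨Fin.ext hceq, h1⟩
  · exfalso
    have hd : i ∉ DesSet w := not_des_last (by omega)
    rw [dif_neg h, if_neg hd] at hspec
    omega

/-- `mExp` modulo `r` -/
lemma mExp_zmod {n r m : ℕ} (w : CWord n r m) (i : Fin m) :
    ((mExp w i : ℕ) : ZMod r) = ((w.color i : ℕ) : ZMod r) -
      (if h : (i : ℕ) + 1 < m then ((w.color ⟨(i : ℕ)+1, h⟩ : ℕ) : ZMod r) else 0) := by
  have hspec := (mExp_spec w i).1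
  have key : ((mExp w i : ℕ) : ZMod r) = ((mExp w i : ℤ) : ZMod r) := by push_cast; ring
  rw [key, hspec]
  by_cases h : (i : ℕ) + 1 < m
  · rw [dif_pos h, dif_pos h]
    split_ifs with hd
    · push_cast
      rw [ZMod.natCast_self]
      ring
    · push_cast
      ring
  · rw [dif_neg h, dif_neg h]
    split_ifs with hd
    · push_cast
      rw [ZMod.natCast_self]
      ring
    · push_cast
      ring

/-! flags and the exponent vector -/

def flagNE {n r : ℕ} (g : CPerm n r) (i : Fin n) : NES n :=
  ⟨pref g ((i : ℕ) + 1), ⟨g.letter ⟨0, i.pos⟩, mem_pref.2 ⟨⟨0, i.pos⟩, by simp, rfl⟩⟩⟩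

lemma flagNE_val {n r : ℕ} (g : CPerm n r) (i : Fin n) :
    (flagNE g i).1 = pref g ((i : ℕ) + 1) := rfl

lemma flagNE_card {n r : ℕ} (g : CPerm n r) (i : Fin n) :
    (flagNE g i).1.card = (i : ℕ) + 1 :=
  card_pref g _ (by have := i.isLt; omega)

lemma flagNE_injective {n r : ℕ} (g : CPerm n r) : Function.Injective (flagNE g) := by
  intro i j h
  have : (flagNE g i).1.card = (flagNE g j).1.card := by rw [h]
  rw [flagNE_card, flagNE_card] at this
  exact Fin.ext (by omega)

def Evec {n r : ℕ} (g : CPerm n r) (d : Fin n → ℕ) : NES n →₀ ℕ :=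
  ∑ i : Fin n, Finsupp.single (flagNE g i) (mExp g i + r * d i)

lemma Evec_apply {n r : ℕ} (g : CPerm n r) (d : Fin n → ℕ) (i : Fin n) :
    Evec g d (flagNE g i) = mExp g i + r * d i := by
  rw [Evec, Finsupp.finset_sum_apply]
  rw [Finset.sum_eq_single i]
  · rw [Finsupp.single_eq_same]
  · intro j _ hj
    exact Finsupp.single_eq_of_ne' (fun h => hj (flagNE_injective g h))
  · intro h; exact absurd (Finset.mem_univ i) h

lemma Evec_apply_of_ne {n r : ℕ} (g : CPerm n r) (d : Fin n → ℕ) {S : NES n}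
    (hS : ∀ i, S ≠ flagNE g i) : Evec g d S = 0 := by
  rw [Evec, Finsupp.finset_sum_apply]
  apply Finset.sum_eq_zero
  intro i _
  exact Finsupp.single_eq_of_ne' (fun h => hS i h.symm)

lemma support_Evec {n r : ℕ} (g : CPerm n r) (d : Fin n → ℕ) (S : NES n) :
    S ∈ (Evec g d).support ↔ ∃ i, S = flagNE g i ∧ mExp g i + r * d i ≠ 0 := by
  rw [Finsupp.mem_support_iff]
  constructor
  · intro hs
    by_cases h : ∃ i, S = flagNE g i
    · obtain ⟨i, rfl⟩ := h
      exact ⟨i, rfl, by rwa [Evec_apply] at hs⟩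
    · push_neg at h
      exact absurd (Evec_apply_of_ne g d h) hs
  · rintro ⟨i, rfl, hv⟩
    rwa [Evec_apply]

lemma chain_Evec {n r : ℕ} (g : CPerm n r) (d : Fin n → ℕ) : IsChainE (Evec g d) := by
  intro S hS T hT
  obtain ⟨i, rfl, -⟩ := (support_Evec g d S).1 hS
  obtain ⟨j, rfl, -⟩ := (support_Evec g d T).1 hT
  rcases le_total ((i : ℕ) + 1) ((j : ℕ) + 1) with h | h
  · exact Or.inl (pref_mono g h)
  · exact Or.inr (pref_mono g h)

lemma prod_X_pow_eq_monomial {n : ℕ} {ι : Type*} (t : Finset ι) (σ : ι → NES n) (v : ι → ℕ) :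
    ∏ i ∈ t, (X (σ i) : YRing n) ^ v i =
      monomial (∑ i ∈ t, Finsupp.single (σ i) (v i)) 1 := by
  induction t using Finset.induction_on with
  | empty => simp
  | insert _ _ hx ih =>
    rw [Finset.prod_insert hx, Finset.sum_insert hx, ih, X_pow_eq_monomial, monomial_mul, one_mul]

lemma Yv_flag {n r : ℕ} (g : CPerm n r) (i : Fin n) :
    Yv (pref g ((i : ℕ) + 1)) = (X (flagNE g i) : YRing n) := by
  have h : (pref g ((i : ℕ) + 1)).Nonempty := (flagNE g i).2
  rw [Yv, dif_pos h]
  rfl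

lemma btd_eq_monomial {n r : ℕ} (g : CPerm n r) (d : Fin n → ℕ) :
    btd g d = monomial (Evec g d) 1 := by
  unfold btd _root_.btw
  rw [← Finset.prod_mul_distrib]
  simp_rw [Yv_flag, ← pow_add]
  rw [prod_X_pow_eq_monomial univ (flagNE g) (fun i => mExp g i + r * d i)]
  rfl

/-! the `W`-statistic -/

def We (n : ℕ) (e : NES n →₀ ℕ) : ℕ := ∑ S : NES n, e S * wtS n S.1

lemma We_add (n : ℕ) (e f : NES n →₀ ℕ) : We n (e + f) = We n e + We n f := by
  rw [We, We, We, ← Finset.sum_add_distrib]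
  apply Finset.sum_congr rfl
  intro S _
  rw [Finsupp.add_apply]
  ring

lemma We_single (n : ℕ) (S : NES n) (c : ℕ) : We n (Finsupp.single S c) = c * wtS n S.1 := by
  rw [We, Finset.sum_eq_single S]
  · rw [Finsupp.single_eq_same]
  · intro T _ hT
    rw [Finsupp.single_eq_of_ne' (Ne.symm hT), zero_mul]
  · intro h; exact absurd (Finset.mem_univ S) h

lemma sum_filter_Evec {n r : ℕ} (g : CPerm n r) (d : Fin n → ℕ) (P : NES n → Prop)
    [DecidablePred P] :
    ∑ S ∈ univ.filter P, Evec g d S =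
      ∑ i ∈ univ.filter (fun i => P (flagNE g i)), (mExp g i + r * d i) := by
  have : ∀ S ∈ univ.filter P, Evec g d S =
      ∑ i : Fin n, Finsupp.single (flagNE g i) (mExp g i + r * d i) S := by
    intro S _
    rw [Evec, Finsupp.finset_sum_apply]
  rw [Finset.sum_congr rfl this, Finset.sum_comm]
  rw [Finset.sum_filter]
  apply Finset.sum_congr rfl
  intro i _
  simp_rw [Finsupp.single_apply]
  rw [Finset.sum_ite_eq (univ.filter P) (flagNE g i) (fun _ => mExp g i + r * d i)]
  simp only [Finset.mem_filter, Finset.mem_univ, true_and]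
/-! ### Part 3a: the key order and the constructed word -/

def rankE {n : ℕ} (e : NES n →₀ ℕ) (x : Fin n) : ℕ :=
  (e.support.filter fun S => x ∈ S.1).card

def kle {n : ℕ} (e : NES n →₀ ℕ) (x y : Fin n) : Prop :=
  rankE e y < rankE e x ∨ (rankE e x = rankE e y ∧ x ≤ y)

def klt {n : ℕ} (e : NES n →₀ ℕ) (x y : Fin n) : Prop := kle e x y ∧ x ≠ y

lemma kle_trans {n : ℕ} (e : NES n →₀ ℕ) : ∀ {x y z}, kle e x y → kle e y z → kle e x z := by
  intro x y z h1 h2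
  rcases h1 with h1 | ⟨h1, h1'⟩ <;> rcases h2 with h2 | ⟨h2, h2'⟩
  · exact Or.inl (by omega)
  · exact Or.inl (by omega)
  · exact Or.inl (by omega)
  · exact Or.inr ⟨by omega, le_trans h1' h2'⟩

lemma kle_antisymm {n : ℕ} (e : NES n →₀ ℕ) : ∀ {x y}, kle e x y → kle e y x → x = y := by
  intro x y h1 h2
  rcases h1 with h1 | ⟨h1, h1'⟩ <;> rcases h2 with h2 | ⟨h2, h2'⟩ <;> first
  | omega
  | (exfalso; omega)
  | exact le_antisymm h1' h2'

lemma kle_total {n : ℕ} (e : NES n →₀ ℕ) : ∀ x y, kle e x y ∨ kle e y x := by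
  intro x y
  rcases Nat.lt_trichotomy (rankE e x) (rankE e y) with h | h | h
  · exact Or.inr (Or.inl h)
  · rcases le_total x y with h' | h'
    · exact Or.inl (Or.inr ⟨h, h'⟩)
    · exact Or.inr (Or.inr ⟨h.symm, h'⟩)
  · exact Or.inl (Or.inl h)

lemma klt_trans {n : ℕ} (e : NES n →₀ ℕ) {x y z : Fin n} (h1 : klt e x y) (h2 : klt e y z) :
    klt e x z := by
  refine ⟨kle_trans e h1.1 h2.1, ?_⟩
  intro hxz
  subst hxz
  exact h1.2 (kle_antisymm e h1.1 h2.1)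

def sortL {n : ℕ} (e : NES n →₀ ℕ) : List (Fin n) :=
  letI : DecidableRel (kle e) := Classical.decRel _
  haveI : IsTrans (Fin n) (kle e) := ⟨fun _ _ _ => kle_trans e⟩
  haveI : IsAntisymm (Fin n) (kle e) := ⟨fun _ _ => kle_antisymm e⟩
  haveI : IsTotal (Fin n) (kle e) := ⟨kle_total e⟩
  Finset.sort univ (kle e)

lemma sortL_spec {n : ℕ} (e : NES n →₀ ℕ) :
    List.Pairwise (kle e) (sortL e) ∧ (sortL e).Nodup ∧ (sortL e).length = n ∧
      ∀ x, x ∈ sortL e := by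
  letI : DecidableRel (kle e) := Classical.decRel _
  haveI : IsTrans (Fin n) (kle e) := ⟨fun _ _ _ => kle_trans e⟩
  haveI : IsAntisymm (Fin n) (kle e) := ⟨fun _ _ => kle_antisymm e⟩
  haveI : IsTotal (Fin n) (kle e) := ⟨kle_total e⟩
  refine ⟨Finset.pairwise_sort _ _, Finset.sort_nodup _ _, ?_, ?_⟩
  · exact (Finset.length_sort (s := univ) (r := kle e)).trans (by rw [Finset.card_univ, Fintype.card_fin])
  · intro x
    exact (Finset.mem_sort (s := univ) (r := kle e)).2 (Finset.mem_univ x)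

/-- The word constructed from an exponent vector. -/
def gw {n r : ℕ} (e : NES n →₀ ℕ) (hr : 0 < r) : CPerm n r where
  letter := fun j => (sortL e).get (Fin.cast (sortL_spec e).2.2.1.symm j)
  inj := by
    intro a b h
    have hinj := List.nodup_iff_injective_get.1 (sortL_spec e).2.1
    have := hinj h
    exact (Fin.cast_injective _) this
  color := fun i =>
    ⟨(∑ S ∈ univ.filter (fun S : NES n => (i : ℕ) + 1 ≤ S.1.card), e S) % r,
      Nat.mod_lt _ hr⟩

lemma gw_color_val {n r : ℕ} (e : NES n →₀ ℕ) (hr : 0 < r) (i : Fin n) :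
    ((gw e hr).color i : ℕ) =
      (∑ S ∈ univ.filter (fun S : NES n => (i : ℕ) + 1 ≤ S.1.card), e S) % r := rfl

lemma gw_letter_klt {n r : ℕ} (e : NES n →₀ ℕ) (hr : 0 < r) {p q : Fin n} (hpq : p < q) :
    klt e ((gw e hr).letter p) ((gw e hr).letter q) := by
  constructor
  · exact (sortL_spec e).1.rel_get_of_lt (by exact hpq)
  · intro h
    have := (gw e hr).inj h
    omega

lemma gw_letter_bij {n r : ℕ} (e : NES n →₀ ℕ) (hr : 0 < r) :
    Function.Bijective (gw e hr).letter :=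
  Finite.injective_iff_bijective.1 (gw e hr).inj

/-- a `klt`-downward-closed set is an initial segment -/
lemma downward_unique {n : ℕ} (e : NES n →₀ ℕ) {S T : Finset (Fin n)}
    (h1 : ∀ x ∈ S, ∀ y, y ∉ S → klt e x y)
    (h2 : ∀ x ∈ T, ∀ y, y ∉ T → klt e x y)
    (hcard : S.card = T.card) : S = T := by
  by_contra hne
  have hST : (S \ T).Nonempty := by
    rw [Finset.sdiff_nonempty]
    intro hsub
    exact hne (Finset.eq_of_subset_of_card_le hsub hcard.ge)
  have hTS : (T \ S).Nonempty := by
    rw [Finset.sdiff_nonempty]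
    intro hsub
    exact hne (Finset.eq_of_subset_of_card_le hsub hcard.le).symm
  obtain ⟨x, hx⟩ := hST
  obtain ⟨y, hy⟩ := hTS
  rw [Finset.mem_sdiff] at hx hy
  have k1 := h1 x hx.1 y hy.2
  have k2 := h2 y hy.1 x hx.2
  exact k1.2 (kle_antisymm e k1.1 k2.1)

lemma pref_downward {n r : ℕ} (e : NES n →₀ ℕ) (hr : 0 < r) (t : ℕ) :
    ∀ x ∈ pref (gw e hr) t, ∀ y, y ∉ pref (gw e hr) t → klt e x y := by
  intro x hx y hy
  obtain ⟨p, hp, rfl⟩ := mem_pref.1 hx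
  obtain ⟨q, rfl⟩ := (gw_letter_bij e hr).2 y
  have hq : ¬ (q : ℕ) < t := fun h => hy (mem_pref.2 ⟨q, h, rfl⟩)
  exact gw_letter_klt e hr (show p < q by omega)

lemma downward_eq_pref {n r : ℕ} (e : NES n →₀ ℕ) (hr : 0 < r) {S : Finset (Fin n)}
    (hS : ∀ x ∈ S, ∀ y, y ∉ S → klt e x y) (hcard : S.card ≤ n) :
    S = pref (gw e hr) S.card :=
  downward_unique e hS (pref_downward e hr S.card)
    (by rw [card_pref _ _ hcard])

/-- support sets of a chain vector are klt-downward-closed -/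
lemma supp_downward {n : ℕ} {e : NES n →₀ ℕ} (he : IsChainE e) {S : NES n}
    (hS : S ∈ e.support) : ∀ x ∈ S.1, ∀ y, y ∉ S.1 → klt e x y := by
  intro x hx y hy
  have hsub : (e.support.filter fun T => y ∈ T.1) ⊆ (e.support.filter fun T => x ∈ T.1) := by
    intro T hT
    rw [Finset.mem_filter] at hT ⊢
    refine ⟨hT.1, ?_⟩
    rcases he T hT.1 S hS with h | h
    · exact absurd (h hT.2) hy
    · exact h hx
  have hmem : S ∈ (e.support.filter fun T => x ∈ T.1) := Finset.mem_filter.2 ⟨hS, hx⟩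
  have hnmem : S ∉ (e.support.filter fun T => y ∈ T.1) := by
    rw [Finset.mem_filter]
    tauto
  have hlt : rankE e y < rankE e x := by
    rw [rankE, rankE]
    exact Finset.card_lt_card ⟨hsub, fun h => hnmem (h hmem)⟩
  exact ⟨Or.inl hlt, by rintro rfl; exact hy hx⟩

lemma flag_of_supp {n r : ℕ} {e : NES n →₀ ℕ} (he : IsChainE e) (hr : 0 < r) {S : NES n}
    (hS : S ∈ e.support) : S.1 = pref (gw e hr) S.1.card :=
  downward_eq_pref e hr (supp_downward he hS)
    (le_trans (Finset.card_le_card (Finset.subset_univ _)) (by simp))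
/-! ### Part 3b: roundtrips -/

lemma vmk {n a : ℕ} (h : a < n) : ((⟨a, h⟩ : Fin n) : ℕ) = a := rfl

lemma rankE_Evec {n r : ℕ} (h : CPerm n r) (d : Fin n → ℕ) (i : Fin n) :
    rankE (Evec h d) (h.letter i) =
      (univ.filter fun t : Fin n => (i : ℕ) ≤ (t : ℕ) ∧ mExp h t + r * d t ≠ 0).card := by
  rw [rankE]
  have himg : (Evec h d).support.filter (fun S => h.letter i ∈ S.1) =
      (univ.filter fun t : Fin n => (i : ℕ) ≤ (t : ℕ) ∧ mExp h t + r * d t ≠ 0).image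
        (flagNE h) := by
    ext S
    rw [Finset.mem_filter, Finset.mem_image]
    constructor
    · rintro ⟨hs, hmem⟩
      obtain ⟨t, rfl, hv⟩ := (support_Evec h d S).1 hs
      refine ⟨t, Finset.mem_filter.2 ⟨Finset.mem_univ _, ?_, hv⟩, rfl⟩
      have := letter_mem_pref.1 (show h.letter i ∈ pref h ((t : ℕ)+1) from hmem)
      omega
    · rintro ⟨t, ht, rfl⟩
      rw [Finset.mem_filter] at ht
      refine ⟨(support_Evec h d _).2 ⟨t, rfl, ht.2.2⟩, ?_⟩
      show h.letter i ∈ pref h ((t : ℕ)+1)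
      exact letter_mem_pref.2 (by omega)
  rw [himg, Finset.card_image_of_injective _ (flagNE_injective h)]

lemma klt_letter_succ {n r : ℕ} (h : CPerm n r) (d : Fin n → ℕ) {i : Fin n}
    (hlt : (i : ℕ) + 1 < n) :
    klt (Evec h d) (h.letter i) (h.letter ⟨(i : ℕ)+1, hlt⟩) := by
  have hne : h.letter i ≠ h.letter ⟨(i : ℕ)+1, hlt⟩ := by
    intro hcontra
    have := h.inj hcontra
    rw [Fin.ext_iff] at this
    simp at this
  by_cases hv : mExp h i + r * d i = 0
  · have hrank : rankE (Evec h d) (h.letter i) = rankE (Evec h d) (h.letter ⟨(i : ℕ)+1, hlt⟩) := by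
      rw [rankE_Evec, rankE_Evec]
      congr 1
      ext t
      simp only [Finset.mem_filter, Finset.mem_univ, true_and]
      constructor
      · rintro ⟨h1, h2⟩
        refine ⟨?_, h2⟩
        rcases Nat.eq_or_lt_of_le h1 with heq | hlt'
        · exfalso
          have : t = i := Fin.ext heq.symm
          rw [this] at h2
          exact h2 hv
        · simpa using hlt'
      · rintro ⟨h1, h2⟩
        have h1' : (i : ℕ) + 1 ≤ (t : ℕ) := h1
        exact ⟨by omega, h2⟩
    have hasc := ascent_of_mExp_zero hlt (show mExp h i = 0 by omega)
    exact ⟨Or.inr ⟨hrank, le_of_lt hasc.2⟩, hne⟩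
  · refine ⟨Or.inl ?_, hne⟩
    rw [rankE_Evec, rankE_Evec]
    apply Finset.card_lt_card
    constructor
    · intro t ht
      rw [Finset.mem_filter] at ht ⊢
      refine ⟨ht.1, by have := ht.2.1; simp at this ⊢; omega, ht.2.2⟩
    · intro hcontra
      have hi : i ∈ univ.filter fun t : Fin n => (i : ℕ) ≤ (t : ℕ) ∧ mExp h t + r * d t ≠ 0 :=
        Finset.mem_filter.2 ⟨Finset.mem_univ _, le_rfl, hv⟩
      have := hcontra hi
      rw [Finset.mem_filter] at this
      have h2 : (i : ℕ) + 1 ≤ (i : ℕ) := this.2.1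
      omega

lemma klt_letter_lt {n r : ℕ} (h : CPerm n r) (d : Fin n → ℕ) {p q : Fin n} (hpq : p < q) :
    klt (Evec h d) (h.letter p) (h.letter q) := by
  have key : ∀ c : ℕ, ∀ q : Fin n, (q : ℕ) = (p : ℕ) + 1 + c →
      klt (Evec h d) (h.letter p) (h.letter q) := by
    intro c
    induction c with
    | zero =>
      intro q hq
      have hlt : (p : ℕ) + 1 < n := by have := q.isLt; omega
      have : q = ⟨(p : ℕ)+1, hlt⟩ := Fin.ext (show (q : ℕ) = (p : ℕ) + 1 by omega)
      rw [this]
      exact klt_letter_succ h d hlt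
    | succ c ih =>
      intro q hq
      have hq1 : (p : ℕ) + 1 + c < n := by have := q.isLt; omega
      have h1 := ih ⟨(p : ℕ) + 1 + c, hq1⟩ rfl
      have hlt2 : (p : ℕ) + 1 + c + 1 < n := by have := q.isLt; omega
      have h2 := klt_letter_succ h d (i := ⟨(p : ℕ) + 1 + c, hq1⟩) hlt2
      have hqeq : q = ⟨(p : ℕ) + 1 + c + 1, hlt2⟩ := Fin.ext (show (q : ℕ) = (p : ℕ) + 1 + c + 1 by omega)
      rw [hqeq]
      exact klt_trans _ h1 h2
  exact key ((q : ℕ) - (p : ℕ) - 1) q (by have := hpq; rw [Fin.lt_def] at this; omega)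

lemma gw_Evec_letter {n r : ℕ} (h : CPerm n r) (d : Fin n → ℕ) (hr : 0 < r) :
    (gw (Evec h d) hr).letter = h.letter := by
  set e := Evec h d with he
  have hsorted : List.Pairwise (kle e) (List.ofFn h.letter) := by
    rw [List.pairwise_ofFn]
    intro i j hij
    exact (klt_letter_lt h d hij).1
  have hnodup : (List.ofFn h.letter).Nodup := by
    rw [List.nodup_ofFn]
    exact h.inj
  have hperm : (sortL e).Perm (List.ofFn h.letter) := by
    apply List.perm_of_nodup_nodup_toFinset_eq (sortL_spec e).2.1 hnodup
    ext x
    simp only [List.mem_toFinset, (sortL_spec e).2.2.2, true_iff, List.mem_ofFn]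
    exact Set.mem_range.2 ((Finite.injective_iff_bijective.1 h.inj).2 x)
  haveI : IsAntisymm (Fin n) (kle e) := ⟨fun _ _ => kle_antisymm e⟩
  have heq : sortL e = List.ofFn h.letter :=
    List.Perm.eq_of_pairwise' (sortL_spec e).1 hsorted hperm
  funext j
  show (sortL e).get _ = h.letter j
  rw [List.get_of_eq heq, List.get_ofFn]
  exact congrArg h.letter (Fin.ext rfl)

lemma color_suffix {n r : ℕ} (h : CPerm n r) (d : Fin n → ℕ) :
    ∀ c : ℕ, ∀ p : ℕ, p + c = n →
      ((∑ t ∈ univ.filter (fun t : Fin n => p ≤ (t : ℕ)), (mExp h t + r * d t) : ℕ) : ZMod r)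
        = (if hlt : p < n then ((h.color ⟨p, hlt⟩ : ℕ) : ZMod r) else 0) := by
  intro c
  induction c with
  | zero =>
    intro p hp
    have hfil : univ.filter (fun t : Fin n => p ≤ (t : ℕ)) = ∅ := by
      ext t
      simp only [Finset.mem_filter, Finset.mem_univ, true_and, Finset.notMem_empty, iff_false]
      have := t.isLt
      omega
    rw [hfil, dif_neg (by omega : ¬ p < n)]
    simp
  | succ c ih =>
    intro p hp
    have hpn : p < n := by omega
    have hsplit : univ.filter (fun t : Fin n => p ≤ (t : ℕ)) =
        insert ⟨p, hpn⟩ (univ.filter (fun t : Fin n => p + 1 ≤ (t : ℕ))) := by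
      ext t
      simp only [Finset.mem_filter, Finset.mem_univ, true_and, Finset.mem_insert, Fin.ext_iff,
        vmk]
      omega
    have hnotmem : (⟨p, hpn⟩ : Fin n) ∉ univ.filter (fun t : Fin n => p + 1 ≤ (t : ℕ)) := by
      simp only [Finset.mem_filter, Finset.mem_univ, true_and, vmk]
      omega
    rw [hsplit, Finset.sum_insert hnotmem, Nat.cast_add, ih (p+1) (by omega)]
    have hm : ((mExp h ⟨p, hpn⟩ + r * d ⟨p, hpn⟩ : ℕ) : ZMod r) =
        ((h.color ⟨p, hpn⟩ : ℕ) : ZMod r) -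
          (if h2 : p + 1 < n then ((h.color ⟨p+1, h2⟩ : ℕ) : ZMod r) else 0) := by
      rw [Nat.cast_add, Nat.cast_mul, ZMod.natCast_self, zero_mul, add_zero]
      have := mExp_zmod h ⟨p, hpn⟩
      simp only [vmk] at this
      rw [this]
    rw [hm, dif_pos hpn]
    split_ifs with h2 <;> ring

lemma gw_Evec_color {n r : ℕ} (h : CPerm n r) (d : Fin n → ℕ) (hr : 0 < r) :
    (gw (Evec h d) hr).color = h.color := by
  funext i
  apply Fin.ext
  rw [gw_color_val]
  have hsum : ∑ S ∈ univ.filter (fun S : NES n => (i : ℕ) + 1 ≤ S.1.card), Evec h d S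
      = ∑ t ∈ univ.filter (fun t : Fin n => (i : ℕ) ≤ (t : ℕ)), (mExp h t + r * d t) := by
    rw [sum_filter_Evec]
    congr 1
    ext t
    simp only [Finset.mem_filter, Finset.mem_univ, true_and, flagNE_card]
    omega
  rw [hsum]
  have hz := color_suffix h d (n - (i : ℕ)) (i : ℕ) (by have := i.isLt; omega)
  rw [dif_pos i.isLt] at hz
  have hi : (⟨(i : ℕ), i.isLt⟩ : Fin n) = i := Fin.ext rfl
  rw [hi] at hz
  calc (∑ t ∈ univ.filter (fun t : Fin n => (i : ℕ) ≤ (t : ℕ)), (mExp h t + r * d t)) % r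
      = ((((∑ t ∈ univ.filter (fun t : Fin n => (i : ℕ) ≤ (t : ℕ)),
          (mExp h t + r * d t) : ℕ)) : ZMod r)).val := (ZMod.val_natCast _ _).symm
    _ = (((h.color i : ℕ) : ZMod r)).val := by rw [hz]
    _ = (h.color i : ℕ) % r := ZMod.val_natCast _ _
    _ = (h.color i : ℕ) := Nat.mod_eq_of_lt (h.color i).isLt

lemma CWord.ext' {n r m : ℕ} {w1 w2 : CWord n r m} (hl : w1.letter = w2.letter)
    (hc : w1.color = w2.color) : w1 = w2 := by
  cases w1
  cases w2
  simp_all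

lemma gw_Evec {n r : ℕ} (h : CPerm n r) (d : Fin n → ℕ) (hr : 0 < r) :
    gw (Evec h d) hr = h :=
  CWord.ext' (gw_Evec_letter h d hr) (gw_Evec_color h d hr)

def dW {n r : ℕ} (e : NES n →₀ ℕ) (hr : 0 < r) : Fin n → ℕ :=
  fun i => (e (flagNE (gw e hr) i) - mExp (gw e hr) i) / r

lemma dW_Evec {n r : ℕ} (h : CPerm n r) (d : Fin n → ℕ) (hr : 0 < r) :
    dW (Evec h d) hr = d := by
  funext i
  rw [dW, gw_Evec h d hr, Evec_apply]
  rw [Nat.add_sub_cancel_left]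
  exact Nat.mul_div_cancel_left _ hr

lemma card_le_n {n : ℕ} (S : NES n) : S.1.card ≤ n := by
  have := Finset.card_le_card (Finset.subset_univ S.1)
  simpa using this

/-- the main per-position identity for the right inverse -/
lemma gw_main {n r : ℕ} {e : NES n →₀ ℕ} (he : IsChainE e) (hr : 0 < r) (i : Fin n) :
    mExp (gw e hr) i + r * dW e hr i = e (flagNE (gw e hr) i) := by
  set g' := gw e hr with hg'
  set m := mExp g' i with hm
  set ei := e (flagNE g' i) with hei
  -- the middle sum equals ei
  have hmid : ∑ S ∈ univ.filter (fun S : NES n => S.1.card = (i : ℕ) + 1), e S = ei := by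
    rw [Finset.sum_eq_single (flagNE g' i)]
    · intro T hT hTne
      rw [Finset.mem_filter] at hT
      by_contra hTe
      have hTm : T ∈ e.support := Finsupp.mem_support_iff.2 hTe
      have := flag_of_supp he hr hTm
      rw [hT.2] at this
      exact hTne (Subtype.ext (this.trans (flagNE_val g' i).symm))
    · intro hcontra
      exact absurd (Finset.mem_filter.2 ⟨Finset.mem_univ (flagNE g' i), flagNE_card g' i⟩) hcontra
  -- split of the suffix sums
  have hsplit : ∑ S ∈ univ.filter (fun S : NES n => (i : ℕ) + 1 ≤ S.1.card), e S =
      (∑ S ∈ univ.filter (fun S : NES n => S.1.card = (i : ℕ) + 1), e S) +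
      ∑ S ∈ univ.filter (fun S : NES n => (i : ℕ) + 2 ≤ S.1.card), e S := by
    rw [← Finset.sum_union]
    · congr 1
      ext S
      simp only [Finset.mem_filter, Finset.mem_univ, true_and, Finset.mem_union]
      omega
    · rw [Finset.disjoint_filter]
      intro S _ hS1 hS2
      omega
  -- the color of g' at p, as an element of ZMod r
  have hcol : ∀ p : Fin n, ((g'.color p : ℕ) : ZMod r) =
      ((∑ S ∈ univ.filter (fun S : NES n => (p : ℕ) + 1 ≤ S.1.card), e S : ℕ) : ZMod r) := by
    intro p
    rw [hg', gw_color_val, ZMod.natCast_mod]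
  -- congruence: m ≡ ei mod r
  have hmod : (m : ZMod r) = (ei : ZMod r) := by
    have hz := mExp_zmod g' i
    rw [← hm] at hz
    have hnext : (if h : (i : ℕ) + 1 < n then ((g'.color ⟨(i : ℕ)+1, h⟩ : ℕ) : ZMod r) else 0) =
        ((∑ S ∈ univ.filter (fun S : NES n => (i : ℕ) + 2 ≤ S.1.card), e S : ℕ) : ZMod r) := by
      split_ifs with h2
      · rw [hcol ⟨(i : ℕ)+1, h2⟩]
      · have : univ.filter (fun S : NES n => (i : ℕ) + 2 ≤ S.1.card) = ∅ := by
          ext S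
          simp only [Finset.mem_filter, Finset.mem_univ, true_and, Finset.notMem_empty,
            iff_false]
          have := card_le_n S
          have := i.isLt
          omega
        rw [this]
        simp
    rw [hz, hcol i, hnext, hsplit, hmid]
    push_cast
    ring
  -- inequality m ≤ ei
  have hle : m ≤ ei := by
    have hmle : m ≤ r := mExp_le_r g' i
    by_cases hcase : r ≤ ei
    · omega
    · have hmodeq : m % r = ei % r := (ZMod.natCast_eq_natCast_iff _ _ _).1 hmod
      rcases Nat.lt_or_ge m r with hmr | hmr
      · rw [Nat.mod_eq_of_lt hmr, Nat.mod_eq_of_lt (by omega)] at hmodeq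
        omega
      · have hmr' : m = r := by omega
        have hei0 : ei = 0 := by
          rw [hmr', Nat.mod_self] at hmodeq
          rw [Nat.mod_eq_of_lt (show ei < r by omega)] at hmodeq
          omega
        exfalso
        obtain ⟨hlt, hceq, hdesc⟩ := desc_of_mExp_eq_r hr hmr'
        -- ranks of consecutive letters agree
        have hrank : rankE e (g'.letter i) = rankE e (g'.letter ⟨(i : ℕ)+1, hlt⟩) := by
          rw [rankE, rankE]
          congr 1
          ext S
          rw [Finset.mem_filter, Finset.mem_filter]
          have hmemiff : ∀ hS : S ∈ e.support,
              (g'.letter i ∈ S.1 ↔ (i : ℕ) + 1 ≤ S.1.card) ∧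
              (g'.letter ⟨(i : ℕ)+1, hlt⟩ ∈ S.1 ↔ (i : ℕ) + 2 ≤ S.1.card) := by
            intro hS
            have hfl := flag_of_supp he hr hS
            have hc : S.1.card ≤ n := card_le_n S
            constructor
            · rw [hfl, card_pref g' _ hc, letter_mem_pref]
              omega
            · rw [hfl, card_pref g' _ hc, letter_mem_pref, vmk]
              omega
          constructor
          · rintro ⟨hS, hmem⟩
            refine ⟨hS, ?_⟩
            have h1 := ((hmemiff hS).1).1 hmem
            rcases Nat.eq_or_lt_of_le h1 with heq | hlt'
            · exfalso
              have hfl := flag_of_supp he hr hS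
              have : S = flagNE g' i := by
                apply Subtype.ext
                rw [hfl, ← heq, flagNE_val]
              rw [Finsupp.mem_support_iff, this] at hS
              exact hS (by rw [← hei, hei0])
            · exact ((hmemiff hS).2).2 (by omega)
          · rintro ⟨hS, hmem⟩
            refine ⟨hS, ?_⟩
            have h2 := ((hmemiff hS).2).1 hmem
            exact ((hmemiff hS).1).2 (by omega)
        have hklt := gw_letter_klt e hr (p := i) (q := ⟨(i : ℕ)+1, hlt⟩)
          (by rw [Fin.lt_def]; simp)
        rcases hklt.1 with hcase2 | ⟨-, hle'⟩
        · rw [← hg', hrank] at hcase2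
          omega
        · rw [← hg'] at hle'
          exact absurd (lt_of_le_of_lt hle' hdesc) (lt_irrefl _)
  -- conclude
  have hdvd : r ∣ ei - m := (Nat.modEq_iff_dvd' hle).1 ((ZMod.natCast_eq_natCast_iff _ _ _).1 hmod)
  have : r * dW e hr i = ei - m := by
    rw [dW, ← hg', ← hei, ← hm]
    exact Nat.mul_div_cancel' hdvd
  omega

lemma Evec_gw {n r : ℕ} {e : NES n →₀ ℕ} (he : IsChainE e) (hr : 0 < r) :
    Evec (gw e hr) (dW e hr) = e := by
  ext S
  by_cases hS : ∃ i, S = flagNE (gw e hr) i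
  · obtain ⟨i, rfl⟩ := hS
    rw [Evec_apply, gw_main he hr i]
  · push_neg at hS
    rw [Evec_apply_of_ne _ _ hS]
    by_contra hne
    have hmem : S ∈ e.support := Finsupp.mem_support_iff.2 (fun h => hne h.symm)
    have hflag := flag_of_supp he hr hmem
    have hcard1 : 1 ≤ S.1.card := Finset.card_pos.2 S.2
    have hcardn : S.1.card ≤ n := card_le_n S
    have : S = flagNE (gw e hr) ⟨S.1.card - 1, by omega⟩ := by
      apply Subtype.ext
      rw [flagNE_val]
      rw [show ((⟨S.1.card - 1, by omega⟩ : Fin n) : ℕ) + 1 = S.1.card by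
        rw [vmk]; omega]
      exact hflag
    exact hS _ this
/-! ### Part 4: weight comparison for compatible sets -/

lemma pref_zero {n r m : ℕ} (w : CWord n r m) : pref w 0 = ∅ := by
  ext a
  rw [mem_pref]
  simp

lemma WTkey {n r : ℕ} (g : CPerm n r) (d : Fin n → ℕ) (j : Fin n) (S : NES n)
    (hcard : S.1.card = (j : ℕ) + 1)
    (hcomp : ∀ T ∈ (Evec g d).support, S.1 ⊆ T.1 ∨ T.1 ⊆ S.1) :
    wtS n S.1 ≤ wtS n (pref g ((j : ℕ) + 1)) ∧
      (S.1 ≠ pref g ((j : ℕ) + 1) → wtS n S.1 < wtS n (pref g ((j : ℕ) + 1))) := by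
  have hjn : (j : ℕ) + 1 ≤ n := j.isLt
  have hcardpref : (pref g ((j : ℕ) + 1)).card = (j : ℕ) + 1 := card_pref g _ hjn
  by_cases hSm : S.1 = pref g ((j : ℕ) + 1)
  · rw [hSm]
    exact ⟨le_rfl, fun h => absurd rfl h⟩
  suffices hlt : wtS n S.1 < wtS n (pref g ((j : ℕ) + 1)) by
    exact ⟨le_of_lt hlt, fun _ => hlt⟩
  -- comparability with a flag of card c forces an inclusion
  have hcompflag : ∀ t : Fin n, mExp g t + r * d t ≠ 0 →
      S.1 ⊆ pref g ((t : ℕ) + 1) ∨ pref g ((t : ℕ) + 1) ⊆ S.1 := by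
    intro t ht
    have hmem : flagNE g t ∈ (Evec g d).support := (support_Evec g d _).2 ⟨t, rfl, ht⟩
    exact hcomp _ hmem
  -- the case `val j ≠ 0` leads to S = pref (j+1)
  have hvj : mExp g j + r * d j = 0 := by
    by_contra hv
    rcases hcompflag j hv with h | h
    · exact hSm (Finset.eq_of_subset_of_card_le h (by omega))
    · exact hSm (Finset.eq_of_subset_of_card_le h (by omega)).symm
  -- define a
  set D : Finset (Fin n) := univ.filter (fun t => mExp g t + r * d t ≠ 0) with hD
  have hDmem : ∀ t : Fin n, t ∈ D ↔ mExp g t + r * d t ≠ 0 := by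
    intro t
    rw [hD, Finset.mem_filter]
    simp
  set A : Finset ℕ := insert 0 ((D.filter fun t : Fin n => (t : ℕ) < (j : ℕ)).image
    (fun t : Fin n => (t : ℕ) + 1)) with hA
  have hAne : A.Nonempty := Finset.insert_nonempty _ _
  set a : ℕ := A.max' hAne with ha
  have haA : a ∈ A := Finset.max'_mem _ _
  have ha_le : a ≤ (j : ℕ) := by
    apply Finset.max'_le
    intro y hy
    rw [hA, Finset.mem_insert] at hy
    rcases hy with rfl | hy
    · omega
    · obtain ⟨t, ht, rfl⟩ := Finset.mem_image.1 hy
      rw [Finset.mem_filter] at ht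
      omega
  have hprefa : pref g a ⊆ S.1 := by
    rw [hA, Finset.mem_insert] at haA
    rcases haA with h0 | him
    · rw [h0, pref_zero]
      exact Finset.empty_subset _
    · obtain ⟨t, ht, hteq⟩ := Finset.mem_image.1 him
      rw [Finset.mem_filter, hDmem] at ht
      rcases hcompflag t ht.1 with h | h
      · exfalso
        have h1 := Finset.card_le_card h
        rw [hcard, card_pref g _ (by have := t.isLt; omega)] at h1
        omega
      · rw [show a = (t : ℕ) + 1 from hteq.symm]
        exact h
  -- define b
  set B : Finset ℕ := insert n ((D.filter fun t : Fin n => (j : ℕ) < (t : ℕ)).image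
    (fun t : Fin n => (t : ℕ) + 1)) with hB
  have hBne : B.Nonempty := Finset.insert_nonempty _ _
  set b : ℕ := B.min' hBne with hb
  have hbB : b ∈ B := Finset.min'_mem _ _
  have hb_ge : (j : ℕ) + 1 ≤ b := by
    apply Finset.le_min'
    intro y hy
    rw [hB, Finset.mem_insert] at hy
    rcases hy with rfl | hy
    · omega
    · obtain ⟨t, ht, rfl⟩ := Finset.mem_image.1 hy
      rw [Finset.mem_filter] at ht
      omega
  have hb_le_n : b ≤ n := by
    apply Finset.min'_le
    rw [hB]
    exact Finset.mem_insert_self _ _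
  have hSb : S.1 ⊆ pref g b := by
    rw [hB, Finset.mem_insert] at hbB
    rcases hbB with h0 | him
    · rw [h0, pref_univ]
      exact Finset.subset_univ _
    · obtain ⟨t, ht, hteq⟩ := Finset.mem_image.1 him
      rw [Finset.mem_filter, hDmem] at ht
      rcases hcompflag t ht.1 with h | h
      · rw [show b = (t : ℕ) + 1 from hteq.symm]
        exact h
      · exfalso
        have h1 := Finset.card_le_card h
        rw [hcard, card_pref g _ (by have := t.isLt; omega)] at h1
        omega
  -- b cannot be j+1
  have hb_gt : (j : ℕ) + 1 < b := by
    rcases Nat.eq_or_lt_of_le hb_ge with heq | h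
    · exfalso
      apply hSm
      apply Finset.eq_of_subset_of_card_le
      · rw [heq]; exact hSb
      · omega
    · exact h
  -- the gap has no active positions
  have hgap : ∀ t : Fin n, a ≤ (t : ℕ) → (t : ℕ) + 1 < b → mExp g t + r * d t = 0 := by
    intro t hta htb
    by_contra hv
    rcases Nat.lt_trichotomy ((t : ℕ)) ((j : ℕ)) with h | h | h
    · have : (t : ℕ) + 1 ∈ A := by
        rw [hA, Finset.mem_insert]
        exact Or.inr (Finset.mem_image.2 ⟨t, Finset.mem_filter.2 ⟨(hDmem t).2 hv, h⟩, rfl⟩)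
      have := Finset.le_max' A _ this
      omega
    · exact hv (by rw [show t = j from Fin.ext h]; exact hvj)
    · have : (t : ℕ) + 1 ∈ B := by
        rw [hB, Finset.mem_insert]
        exact Or.inr (Finset.mem_image.2 ⟨t, Finset.mem_filter.2 ⟨(hDmem t).2 hv, h⟩, rfl⟩)
      have := Finset.min'_le B _ this
      omega
  -- letters increase along the gap
  have hrun : ∀ c : ℕ, ∀ q : ℕ, ∀ hq : q < n, q < b → ∀ p : ℕ, ∀ hp : p < n, a ≤ p →
      q = p + 1 + c → g.letter ⟨p, hp⟩ < g.letter ⟨q, hq⟩ := by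
    intro c
    induction c with
    | zero =>
      intro q hq hqb p hp hap hqe
      have hm0 : mExp g ⟨p, hp⟩ = 0 := by
        have := hgap ⟨p, hp⟩ (by simp only [vmk]; omega) (by simp only [vmk]; omega)
        omega
      have hasc := ascent_of_mExp_zero (show ((⟨p, hp⟩ : Fin n) : ℕ) + 1 < n by
        simp only [vmk]; omega) hm0
      have : (⟨((⟨p, hp⟩ : Fin n) : ℕ) + 1, by simp only [vmk]; omega⟩ : Fin n) = ⟨q, hq⟩ :=
        Fin.ext (by simp only [vmk]; omega)
      rw [← this]
      exact hasc.2
    | succ c ih =>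
      intro q hq hqb p hp hap hqe
      have hq1 : p + 1 + c < n := by omega
      have h1 := ih (p+1+c) hq1 (by omega) p hp hap rfl
      have hm0 : mExp g ⟨p+1+c, hq1⟩ = 0 := by
        have := hgap ⟨p+1+c, hq1⟩ (by simp only [vmk]; omega) (by simp only [vmk]; omega)
        omega
      have hasc := ascent_of_mExp_zero (show ((⟨p+1+c, hq1⟩ : Fin n) : ℕ) + 1 < n by
        simp only [vmk]; omega) hm0
      have heq2 : (⟨((⟨p+1+c, hq1⟩ : Fin n) : ℕ) + 1, by simp only [vmk]; omega⟩ : Fin n) = ⟨q, hq⟩ :=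
        Fin.ext (by simp only [vmk]; omega)
      rw [← heq2]
      exact lt_trans h1 hasc.2
  -- the set comparison
  set X : Finset (Fin n) := pref g ((j : ℕ) + 1) \ pref g a with hX
  set Y : Finset (Fin n) := S.1 \ pref g a with hY
  have hpa_sub : pref g a ⊆ pref g ((j : ℕ) + 1) := pref_mono g (by omega)
  have hXcard : X.card = (j : ℕ) + 1 - a := by
    rw [hX, Finset.card_sdiff_of_subset hpa_sub, hcardpref, card_pref g a (by omega)]
  have hYcard : Y.card = (j : ℕ) + 1 - a := by
    rw [hY, Finset.card_sdiff_of_subset hprefa, hcard, card_pref g a (by omega)]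
  have hXYne : X ≠ Y := by
    intro hxy
    apply hSm
    have h1 : S.1 = Y ∪ pref g a := by
      rw [hY, Finset.sdiff_union_of_subset hprefa]
    have h2 : pref g ((j : ℕ) + 1) = X ∪ pref g a := by
      rw [hX, Finset.sdiff_union_of_subset hpa_sub]
    rw [h1, h2, hxy]
  have hpairs : ∀ x ∈ X \ Y, ∀ y ∈ Y \ X, x < y := by
    intro x hx y hy
    rw [Finset.mem_sdiff] at hx hy
    have hxX := hx.1
    have hyY := hy.1
    rw [hX, Finset.mem_sdiff] at hxX
    rw [hY, Finset.mem_sdiff] at hyY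
    obtain ⟨l, hl, rfl⟩ := mem_pref.1 hxX.1
    have hla : a ≤ (l : ℕ) := by
      by_contra hcon
      exact hxX.2 (mem_pref.2 ⟨l, by omega, rfl⟩)
    obtain ⟨q, hq, rfl⟩ := mem_pref.1 (hSb hyY.1)
    have hqa : a ≤ (q : ℕ) := by
      by_contra hcon
      exact hyY.2 (mem_pref.2 ⟨q, by omega, rfl⟩)
    have hynotpref : g.letter q ∉ pref g ((j : ℕ) + 1) := by
      intro hmem
      exact hy.2 (by rw [hX, Finset.mem_sdiff]; exact ⟨hmem, hyY.2⟩)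
    have hqj : (j : ℕ) + 1 ≤ (q : ℕ) := by
      by_contra hcon
      exact hynotpref (mem_pref.2 ⟨q, by omega, rfl⟩)
    have := hrun ((q : ℕ) - (l : ℕ) - 1) (q : ℕ) q.isLt hq (l : ℕ) l.isLt hla (by omega)
    have hfl : (⟨(l : ℕ), l.isLt⟩ : Fin n) = l := Fin.ext rfl
    have hfq : (⟨(q : ℕ), q.isLt⟩ : Fin n) = q := Fin.ext rfl
    rwa [hfl, hfq] at this
  have hwt : wtS n Y < wtS n X :=
    wt_lt_wt (hXcard.trans hYcard.symm) hXYne hpairs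
  have hS_split : wtS n S.1 = wtS n Y + wtS n (pref g a) := by
    rw [wtS, wtS, wtS, hY]
    exact (Finset.sum_sdiff hprefa).symm
  have hP_split : wtS n (pref g ((j : ℕ) + 1)) = wtS n X + wtS n (pref g a) := by
    rw [wtS, wtS, wtS, hX]
    exact (Finset.sum_sdiff hpa_sub).symm
  omega
/-! ### Part 5: θ-expansion -/

def compS {n : ℕ} (f : NES n →₀ ℕ) (j : ℕ) : Finset (NES n) :=
  univ.filter fun S => S.1.card = j ∧ ∀ T ∈ f.support, S.1 ⊆ T.1 ∨ T.1 ⊆ S.1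

lemma chain_add_single {n r : ℕ} {f : NES n →₀ ℕ} (hf : IsChainE f) {S : NES n}
    (hS : ∀ T ∈ f.support, S.1 ⊆ T.1 ∨ T.1 ⊆ S.1) :
    IsChainE (f + Finsupp.single S r) := by
  have hsup : ∀ T, T ∈ (f + Finsupp.single S r).support → T ∈ f.support ∨ T = S := by
    intro T hT
    have := Finsupp.support_add hT
    rw [Finset.mem_union] at this
    rcases this with h | h
    · exact Or.inl h
    · exact Or.inr (Finset.mem_singleton.1 (Finsupp.support_single_subset h))
  intro T1 h1 T2 h2
  rcases hsup T1 h1 with hm1 | rfl <;> rcases hsup T2 h2 with hm2 | rfl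
  · exact hf T1 hm1 T2 hm2
  · rcases hS T1 hm1 with h | h
    · exact Or.inr h
    · exact Or.inl h
  · exact hS T2 hm2
  · exact Or.inl subset_rfl

lemma mk_theta_mul {n r : ℕ} (hr : 0 < r) (j : ℕ) (f : NES n →₀ ℕ) (hf : IsChainE f) :
    Ideal.Quotient.mk (SRideal n) (theta n r j) *
        Ideal.Quotient.mk (SRideal n) (monomial f 1) =
      ∑ S ∈ compS f j,
        Ideal.Quotient.mk (SRideal n) (monomial (f + Finsupp.single S r) 1) := by
  rw [← map_mul]
  have hth : theta n r j * (monomial f 1 : YRing n) =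
      ∑ S ∈ univ.filter (fun S : NES n => S.1.card = j),
        monomial (f + Finsupp.single S r) 1 := by
    rw [theta, Finset.sum_mul]
    apply Finset.sum_congr rfl
    intro S _
    rw [X_pow_eq_monomial, monomial_mul, one_mul, add_comm]
  rw [hth, map_sum]
  have hsub : compS f j ⊆ univ.filter (fun S : NES n => S.1.card = j) := by
    intro S hS
    rw [compS, Finset.mem_filter] at hS
    exact Finset.mem_filter.2 ⟨hS.1, hS.2.1⟩
  rw [← Finset.sum_subset hsub]
  intro S hS hSnc
  rw [Finset.mem_filter] at hS
  rw [compS, Finset.mem_filter] at hSnc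
  push_neg at hSnc
  obtain ⟨T, hT, hST, hTS⟩ := hSnc (Finset.mem_univ S) hS.2
  apply mk_monomial_eq_zero
  intro hchain
  have hSS : S ∈ (f + Finsupp.single S r).support := by
    rw [Finsupp.mem_support_iff, Finsupp.add_apply, Finsupp.single_eq_same]
    omega
  have hTT : T ∈ (f + Finsupp.single S r).support := by
    rw [Finsupp.mem_support_iff, Finsupp.add_apply]
    rw [Finsupp.mem_support_iff] at hT
    omega
  rcases hchain S hSS T hTT with h | h
  · exact hST h
  · exact hTS h

lemma Evec_mono {n r : ℕ} (g : CPerm n r) {d1 d2 : Fin n → ℕ} (h : ∀ i, d1 i ≤ d2 i) :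
    ∀ S, Evec g d1 S ≤ Evec g d2 S := by
  intro S
  by_cases hS : ∃ i, S = flagNE g i
  · obtain ⟨i, rfl⟩ := hS
    rw [Evec_apply, Evec_apply]
    have := h i
    have := Nat.mul_le_mul_left r (h i)
    omega
  · push_neg at hS
    rw [Evec_apply_of_ne _ _ hS, Evec_apply_of_ne _ _ hS]

/-- multiplication by `θ_{j+1}` maps the truncated span into a shifted one -/
lemma theta_mul_span {n r : ℕ} (hr : 0 < r) (g : CPerm n r) (dlow : Fin n → ℕ) (j : Fin n)
    (w : ℕ) {x : YRing n ⧸ SRideal n}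
    (hx : x ∈ Submodule.span ℂ {y : YRing n ⧸ SRideal n | ∃ f : NES n →₀ ℕ, IsChainE f ∧
      (∀ S, Evec g dlow S ≤ f S) ∧ We n f < w ∧
      y = Ideal.Quotient.mk (SRideal n) (monomial f 1)}) :
    Ideal.Quotient.mk (SRideal n) (theta n r ((j : ℕ) + 1)) * x ∈
      Submodule.span ℂ {y : YRing n ⧸ SRideal n | ∃ f : NES n →₀ ℕ, IsChainE f ∧
        (∀ S, Evec g dlow S ≤ f S) ∧ We n f < w + r * wtS n (pref g ((j : ℕ) + 1)) ∧
        y = Ideal.Quotient.mk (SRideal n) (monomial f 1)} := by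
  induction hx using Submodule.span_induction with
  | zero => rw [mul_zero]; exact Submodule.zero_mem _
  | add y z _ _ hy hz => rw [mul_add]; exact Submodule.add_mem _ hy hz
  | smul c y _ hy => rw [mul_smul_comm]; exact Submodule.smul_mem _ c hy
  | mem y hy =>
    obtain ⟨f, hchain, hge, hWe, rfl⟩ := hy
    rw [mk_theta_mul hr _ f hchain]
    apply Submodule.sum_mem
    intro S hS
    rw [compS, Finset.mem_filter] at hS
    apply Submodule.subset_span
    refine ⟨f + Finsupp.single S r, chain_add_single hchain hS.2.2, ?_, ?_, rfl⟩
    · intro T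
      rw [Finsupp.add_apply]
      exact le_trans (hge T) (Nat.le_add_right _ _)
    · rw [We_add, We_single]
      have hcompat : ∀ T ∈ (Evec g dlow).support, S.1 ⊆ T.1 ∨ T.1 ⊆ S.1 := by
        intro T hT
        apply hS.2.2
        rw [Finsupp.mem_support_iff] at hT ⊢
        have := hge T
        omega
      have hwt := (WTkey g dlow j S hS.2.1 hcompat).1
      have := Nat.mul_le_mul_left r hwt
      omega
/-! ### Part 5b: the main expansion -/

lemma flagNE_mem_compS {n r : ℕ} (g : CPerm n r) (d : Fin n → ℕ) (i : Fin n) :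
    flagNE g i ∈ compS (Evec g d) ((i : ℕ) + 1) := by
  rw [compS, Finset.mem_filter]
  refine ⟨Finset.mem_univ _, flagNE_card g i, ?_⟩
  intro T hT
  obtain ⟨t, rfl, -⟩ := (support_Evec g d T).1 hT
  rw [flagNE_val, flagNE_val]
  rcases le_total ((i : ℕ) + 1) ((t : ℕ) + 1) with h | h
  · exact Or.inl (pref_mono g h)
  · exact Or.inr (pref_mono g h)

lemma Evec_update {n r : ℕ} (g : CPerm n r) (d : Fin n → ℕ) (i₀ : Fin n) (hd : 1 ≤ d i₀) :
    Evec g d = Evec g (Function.update d i₀ (d i₀ - 1)) + Finsupp.single (flagNE g i₀) r := by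
  ext S
  rw [Finsupp.add_apply]
  by_cases hS : ∃ i, S = flagNE g i
  · obtain ⟨i, rfl⟩ := hS
    rw [Evec_apply, Evec_apply]
    rcases eq_or_ne i i₀ with rfl | hne
    · rw [Function.update_self, Finsupp.single_eq_same]
      have : r * d i = r * (d i - 1) + r := by
        have : d i - 1 + 1 = d i := by omega
        calc r * d i = r * (d i - 1 + 1) := by rw [this]
        _ = r * (d i - 1) + r := by ring
      omega
    · rw [Function.update_of_ne hne,
        Finsupp.single_eq_of_ne' (fun h => hne (flagNE_injective g h).symm)]
      omega
  · push_neg at hS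
    rw [Evec_apply_of_ne _ _ hS, Evec_apply_of_ne _ _ hS,
      Finsupp.single_eq_of_ne' (fun h => hS i₀ h.symm)]
    omega

lemma btp_theta_step {n k r : ℕ} (g : CPerm n r) (d : Fin n → ℕ) (i₀ : Fin n)
    (hk : n - k ≤ (i₀ : ℕ)) (hd : 1 ≤ d i₀) :
    btp n k r g d = theta n r ((i₀ : ℕ) + 1) *
      btp n k r g (Function.update d i₀ (d i₀ - 1)) := by
  set d' := Function.update d i₀ (d i₀ - 1) with hd'
  have htrunc : (fun i : Fin n => if (i : ℕ) < n - k then d i else 0) =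
      (fun i : Fin n => if (i : ℕ) < n - k then d' i else 0) := by
    funext i
    split_ifs with h
    · rw [hd', Function.update_of_ne (fun hc => by rw [hc] at h; omega)]
    · rfl
  have hprod : (∏ i : Fin n, if n - k ≤ (i : ℕ) then theta n r ((i : ℕ) + 1) ^ d i else 1) =
      theta n r ((i₀ : ℕ) + 1) *
        ∏ i : Fin n, if n - k ≤ (i : ℕ) then theta n r ((i : ℕ) + 1) ^ d' i else 1 := by
    rw [← Finset.mul_prod_erase univ _ (Finset.mem_univ i₀),
      ← Finset.mul_prod_erase univ
        (fun i : Fin n => if n - k ≤ (i : ℕ) then theta n r ((i : ℕ) + 1) ^ d' i else 1)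
        (Finset.mem_univ i₀)]
    have herase : ∏ i ∈ univ.erase i₀, (if n - k ≤ (i : ℕ) then theta n r ((i : ℕ) + 1) ^ d i
        else 1) = ∏ i ∈ univ.erase i₀,
          (if n - k ≤ (i : ℕ) then theta n r ((i : ℕ) + 1) ^ d' i else 1) := by
      apply Finset.prod_congr rfl
      intro i hi
      rw [hd', Function.update_of_ne (Finset.ne_of_mem_erase hi)]
    rw [herase, if_pos hk, if_pos hk, hd', Function.update_self, ← mul_assoc]
    congr 1
    conv_lhs => rw [show d i₀ = (d i₀ - 1) + 1 from by omega]
    rw [pow_succ]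
    ring
  rw [btp, btp, hprod, htrunc, mul_assoc]

lemma btp_expand {n k r : ℕ} (hr : 0 < r) (g : CPerm n r) (dlow : Fin n → ℕ)
    (hdlow : ∀ i : Fin n, n - k ≤ (i : ℕ) → dlow i = 0) :
    ∀ N : ℕ, ∀ d : Fin n → ℕ, (∀ i : Fin n, (i : ℕ) < n - k → d i = dlow i) →
      (∑ i : Fin n, (if n - k ≤ (i : ℕ) then d i else 0)) = N →
      Ideal.Quotient.mk (SRideal n) (btp n k r g d) -
        Ideal.Quotient.mk (SRideal n) (monomial (Evec g d) 1) ∈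
      Submodule.span ℂ {x : YRing n ⧸ SRideal n | ∃ f : NES n →₀ ℕ, IsChainE f ∧
        (∀ S, Evec g dlow S ≤ f S) ∧ We n f < We n (Evec g d) ∧
        x = Ideal.Quotient.mk (SRideal n) (monomial f 1)} := by
  intro N
  induction N with
  | zero =>
    intro d hagree hsum
    have hzero : ∀ i : Fin n, n - k ≤ (i : ℕ) → d i = 0 := by
      intro i hi
      have := (Finset.sum_eq_zero_iff.1 hsum) i (Finset.mem_univ i)
      rwa [if_pos hi] at this
    have hbtp : btp n k r g d = btd g d := by
      rw [btp]
      have h1 : (∏ i : Fin n, if n - k ≤ (i : ℕ) then theta n r ((i : ℕ) + 1) ^ d i else 1)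
          = 1 := by
        apply Finset.prod_eq_one
        intro i _
        split_ifs with h
        · rw [hzero i h, pow_zero]
        · rfl
      have h2 : (fun i : Fin n => if (i : ℕ) < n - k then d i else 0) = d := by
        funext i
        split_ifs with h
        · rfl
        · rw [hzero i (by omega)]
      rw [h1, h2, one_mul]
    rw [hbtp, btd_eq_monomial, sub_self]
    exact Submodule.zero_mem _
  | succ N ih =>
    intro d hagree hsum
    -- find an active upper position
    have hex : ∃ i₀ : Fin n, n - k ≤ (i₀ : ℕ) ∧ 1 ≤ d i₀ := by
      by_contra hcon
      push_neg at hcon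
      have : (∑ i : Fin n, (if n - k ≤ (i : ℕ) then d i else 0)) = 0 := by
        apply Finset.sum_eq_zero
        intro i _
        split_ifs with h
        · have := hcon i h; omega
        · rfl
      omega
    obtain ⟨i₀, hi₀k, hi₀⟩ := hex
    set d' := Function.update d i₀ (d i₀ - 1) with hd'
    have hagree' : ∀ i : Fin n, (i : ℕ) < n - k → d' i = dlow i := by
      intro i hi
      rw [hd', Function.update_of_ne (fun hc => by rw [hc] at hi; omega)]
      exact hagree i hi
    have hsum' : (∑ i : Fin n, (if n - k ≤ (i : ℕ) then d' i else 0)) = N := by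
      have hFeq : (fun i : Fin n => if n - k ≤ (i : ℕ) then d' i else 0) =
          Function.update (fun i : Fin n => if n - k ≤ (i : ℕ) then d i else 0) i₀
            (d i₀ - 1) := by
        funext i
        rcases eq_or_ne i i₀ with rfl | hne
        · rw [Function.update_self, if_pos hi₀k, hd', Function.update_self]
        · rw [Function.update_of_ne hne, hd', Function.update_of_ne hne]
      rw [hFeq, Finset.sum_update_of_mem (Finset.mem_univ i₀)]
      have := Finset.sum_eq_sum_sdiff_singleton_add (Finset.mem_univ i₀)
        (fun i : Fin n => if n - k ≤ (i : ℕ) then d i else 0)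
      rw [this, if_pos hi₀k] at hsum
      omega
    have IH := ih d' hagree' hsum'
    -- decomposition
    have hstep := btp_theta_step g d i₀ hi₀k hi₀
    have hEvec : Evec g d = Evec g d' + Finsupp.single (flagNE g i₀) r :=
      Evec_update g d i₀ hi₀
    have hWe : We n (Evec g d) = We n (Evec g d') + r * wtS n (pref g ((i₀ : ℕ) + 1)) := by
      rw [hEvec, We_add, We_single]
      rfl
    have hdmono : ∀ S, Evec g dlow S ≤ Evec g d' S := by
      apply Evec_mono
      intro i
      rcases eq_or_ne i i₀ with rfl | hne
      · rw [hdlow i hi₀k]; omega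
      · rw [hd', Function.update_of_ne hne]
        by_cases h : (i : ℕ) < n - k
        · rw [hagree i h]
        · rw [hdlow i (by omega)]; omega
    -- expand θ * M'
    have hmulM : Ideal.Quotient.mk (SRideal n) (theta n r ((i₀ : ℕ) + 1)) *
        Ideal.Quotient.mk (SRideal n) (monomial (Evec g d') 1) =
        ∑ S ∈ compS (Evec g d') ((i₀ : ℕ) + 1),
          Ideal.Quotient.mk (SRideal n) (monomial (Evec g d' + Finsupp.single S r) 1) :=
      mk_theta_mul hr _ _ (chain_Evec g d')
    have hmain : flagNE g i₀ ∈ compS (Evec g d') ((i₀ : ℕ) + 1) := flagNE_mem_compS g d' i₀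
    -- the lower part of θ * M'
    have herase : ∑ S ∈ (compS (Evec g d') ((i₀ : ℕ) + 1)).erase (flagNE g i₀),
        Ideal.Quotient.mk (SRideal n) (monomial (Evec g d' + Finsupp.single S r) 1) ∈
        Submodule.span ℂ {x : YRing n ⧸ SRideal n | ∃ f : NES n →₀ ℕ, IsChainE f ∧
          (∀ S, Evec g dlow S ≤ f S) ∧ We n f < We n (Evec g d) ∧
          x = Ideal.Quotient.mk (SRideal n) (monomial f 1)} := by
      apply Submodule.sum_mem
      intro S hS
      have hSne := Finset.ne_of_mem_erase hS
      have hSmem := Finset.mem_of_mem_erase hS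
      rw [compS, Finset.mem_filter] at hSmem
      apply Submodule.subset_span
      refine ⟨Evec g d' + Finsupp.single S r, chain_add_single (chain_Evec g d') hSmem.2.2,
        ?_, ?_, rfl⟩
      · intro T
        rw [Finsupp.add_apply]
        exact le_trans (hdmono T) (Nat.le_add_right _ _)
      · rw [We_add, We_single, hWe]
        have hwt := (WTkey g d' i₀ S hSmem.2.1 (fun T hT => hSmem.2.2 T hT)).2
          (fun hc => hSne (Subtype.ext (hc.trans (flagNE_val g i₀).symm)))
        have := (Nat.mul_lt_mul_left hr).mpr hwt
        omega
    -- assemble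
    rw [hstep, map_mul]
    have hv : Ideal.Quotient.mk (SRideal n) (btp n k r g d') =
        Ideal.Quotient.mk (SRideal n) (monomial (Evec g d') 1) +
        (Ideal.Quotient.mk (SRideal n) (btp n k r g d') -
          Ideal.Quotient.mk (SRideal n) (monomial (Evec g d') 1)) := by ring
    rw [hv, mul_add, hmulM]
    rw [← Finset.add_sum_erase _ _ hmain]
    have hmainterm : Ideal.Quotient.mk (SRideal n)
        (monomial (Evec g d' + Finsupp.single (flagNE g i₀) r) 1) =
        Ideal.Quotient.mk (SRideal n) (monomial (Evec g d) 1) := by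
      rw [← hEvec]
    rw [hmainterm]
    have hrest := theta_mul_span (n := n) hr g dlow i₀ (We n (Evec g d')) IH
    rw [← hWe] at hrest
    have : Ideal.Quotient.mk (SRideal n) (monomial (Evec g d) 1) +
        (∑ S ∈ (compS (Evec g d') ((i₀ : ℕ) + 1)).erase (flagNE g i₀),
          Ideal.Quotient.mk (SRideal n) (monomial (Evec g d' + Finsupp.single S r) 1)) +
        Ideal.Quotient.mk (SRideal n) (theta n r ((i₀ : ℕ) + 1)) *
          (Ideal.Quotient.mk (SRideal n) (btp n k r g d') -
            Ideal.Quotient.mk (SRideal n) (monomial (Evec g d') 1)) -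
        Ideal.Quotient.mk (SRideal n) (monomial (Evec g d) 1) =
        (∑ S ∈ (compS (Evec g d') ((i₀ : ℕ) + 1)).erase (flagNE g i₀),
          Ideal.Quotient.mk (SRideal n) (monomial (Evec g d' + Finsupp.single S r) 1)) +
        Ideal.Quotient.mk (SRideal n) (theta n r ((i₀ : ℕ) + 1)) *
          (Ideal.Quotient.mk (SRideal n) (btp n k r g d') -
            Ideal.Quotient.mk (SRideal n) (monomial (Evec g d') 1)) := by ring
    rw [this]
    exact Submodule.add_mem _ herase hrest
/-! ### Part 6: assembly -/

def PhiEquiv (n r : ℕ) (hr : 0 < r) : (CPerm n r × (Fin n → ℕ)) ≃ ChainIdx n where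
  toFun gd := ⟨Evec gd.1 gd.2, chain_Evec gd.1 gd.2⟩
  invFun e := (gw e.1 hr, dW e.1 hr)
  left_inv := by
    rintro ⟨g, d⟩
    simp only
    rw [gw_Evec g d hr, dW_Evec g d hr]
  right_inv := by
    rintro ⟨f, hf⟩
    exact Subtype.ext (Evec_gw hf hr)

lemma btp_basis_main (n k r : ℕ) (hr : 1 ≤ r) :
    ∃ B : Module.Basis (CPerm n r × (Fin n → ℕ)) ℂ (YRing n ⧸ SRideal n),
      ∀ gd : CPerm n r × (Fin n → ℕ),
        B gd = Ideal.Quotient.mk (SRideal n) (btp n k r gd.1 gd.2) := by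
  have hr' : 0 < r := hr
  set Φ := PhiEquiv n r hr' with hΦ
  set B1 : Module.Basis (CPerm n r × (Fin n → ℕ)) ℂ (YRing n ⧸ SRideal n) :=
    (chainBasis n).reindex Φ.symm with hB1
  have hB1app : ∀ gd : CPerm n r × (Fin n → ℕ),
      B1 gd = Ideal.Quotient.mk (SRideal n) (monomial (Evec gd.1 gd.2) 1) := by
    intro gd
    rw [hB1, Module.Basis.reindex_apply, Equiv.symm_symm, chainBasis_apply]
    rfl
  set W : CPerm n r × (Fin n → ℕ) → ℕ := fun gd => We n (Evec gd.1 gd.2) with hW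
  set F : CPerm n r × (Fin n → ℕ) → (YRing n ⧸ SRideal n) :=
    fun gd => Ideal.Quotient.mk (SRideal n) (btp n k r gd.1 gd.2) with hF
  -- triangularity
  have hspan : ∀ gd : CPerm n r × (Fin n → ℕ),
      F gd - B1 gd ∈ Submodule.span ℂ (⇑B1 '' {j | W j < W gd}) := by
    rintro ⟨g, d⟩
    set dlow : Fin n → ℕ := fun i => if (i : ℕ) < n - k then d i else 0 with hdlowdef
    have hdlow : ∀ i : Fin n, n - k ≤ (i : ℕ) → dlow i = 0 := by
      intro i hi
      rw [hdlowdef]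
      simp only
      rw [if_neg (by omega)]
    have hagree : ∀ i : Fin n, (i : ℕ) < n - k → d i = dlow i := by
      intro i hi
      rw [hdlowdef]
      simp only
      rw [if_pos hi]
    have hexp := btp_expand hr' g dlow hdlow
      (∑ i : Fin n, (if n - k ≤ (i : ℕ) then d i else 0)) d hagree rfl
    have hsub : {x : YRing n ⧸ SRideal n | ∃ f : NES n →₀ ℕ, IsChainE f ∧
        (∀ S, Evec g dlow S ≤ f S) ∧ We n f < We n (Evec g d) ∧
        x = Ideal.Quotient.mk (SRideal n) (monomial f 1)} ⊆
        ⇑B1 '' {j | W j < W (g, d)} := by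
      rintro x ⟨f, hchain, -, hWe, rfl⟩
      have hval : Evec (Φ.symm ⟨f, hchain⟩).1 (Φ.symm ⟨f, hchain⟩).2 = f :=
        congrArg Subtype.val (Φ.apply_symm_apply ⟨f, hchain⟩)
      refine ⟨Φ.symm ⟨f, hchain⟩, ?_, ?_⟩
      · show W (Φ.symm ⟨f, hchain⟩) < W (g, d)
        rw [hW]
        simp only
        rw [hval]
        exact hWe
      · rw [hB1app, hval]
    have hFB : F (g, d) - B1 (g, d) =
        Ideal.Quotient.mk (SRideal n) (btp n k r g d) -
          Ideal.Quotient.mk (SRideal n) (monomial (Evec g d) 1) := by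
      rw [hB1app]
    rw [hFB]
    exact Submodule.span_mono hsub hexp
  have h1 : ∀ gd, B1.repr (F gd) gd = 1 := by
    intro gd
    have hdec : F gd = B1 gd + (F gd - B1 gd) := by ring
    rw [hdec, map_add, Finsupp.add_apply, B1.repr_self, Finsupp.single_eq_same]
    rw [repr_zero_of_span B1 (hspan gd) (by simp : gd ∉ {j | W j < W gd})]
    ring
  have h2 : ∀ gd j, B1.repr (F gd) j ≠ 0 → j ≠ gd → W j < W gd := by
    intro gd j hne hjgd
    by_contra hcon
    apply hne
    have hdec : F gd = B1 gd + (F gd - B1 gd) := by ring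
    rw [hdec, map_add, Finsupp.add_apply, B1.repr_self,
      Finsupp.single_eq_of_ne' (Ne.symm hjgd)]
    rw [repr_zero_of_span B1 (hspan gd) (by simpa using hcon)]
    ring
  obtain ⟨c, hc⟩ := basis_triangular B1 W F h1 h2
  exact ⟨c, fun gd => hc gd⟩
/-- The elements `b̃′_{(g,d)}`, for `g ∈ G_n` and `d ∈ ℤ_{≥0}^n`, form a
`ℂ`-vector space basis of the Stanley–Reisner ring `ℂ[𝓑_n*]`. -/
theorem btp_basis_of_SR (n k r : ℕ) (hr : 1 ≤ r) (hn : 1 ≤ n) (hk : k ≤ n) :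
    ∃ B : Module.Basis (CPerm n r × (Fin n → ℕ)) ℂ (YRing n ⧸ SRideal n),
      ∀ gd : CPerm n r × (Fin n → ℕ),
        B gd = Ideal.Quotient.mk (SRideal n) (btp n k r gd.1 gd.2) := by
  exact btp_basis_main n k r hr

end
end

section
/- Let g = π_1^{c_1}⋯π_n^{c_n} ∈ G_n and let λ be a partition with m parts, each part at most n − k. Then the total degree of b̃_{(g,λ)} := b̃_g · y_{S_1}^r⋯y_{S_m}^r (where S_i = {π_1,…,π_{λ_i}}) equals c_1 + r·(m + des(g)). Consequently, deg(b̃_{(g,λ)}) < kr if and only if m ≤ k − des(g) − 1. -/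
open scoped Classical
open MvPolynomial Finset

noncomputable section

/-! ### Auxiliary lemmas for Statement 8 -/

/-- Exponent vector of `Yv F ^ m`. -/
def Ee {n : ℕ} (F : Finset (Fin n)) (m : ℕ) : NES n →₀ ℕ :=
  if h : F.Nonempty then Finsupp.single ⟨F, h⟩ m else 0

lemma Yv_pow_eq {n : ℕ} (F : Finset (Fin n)) (m : ℕ) :
    Yv F ^ m = monomial (Ee F m) (1 : ℂ) := by
  unfold Yv Ee
  split
  · rw [X_pow_eq_monomial]
  · simp [MvPolynomial.monomial_zero']

/-- Sum of all exponents. -/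
def degE {n : ℕ} (e : NES n →₀ ℕ) : ℕ := e.sum fun _ m => m

lemma degE_zero {n : ℕ} : degE (0 : NES n →₀ ℕ) = 0 := by
  simp [degE]

lemma degE_add {n : ℕ} (e f : NES n →₀ ℕ) : degE (e + f) = degE e + degE f :=
  Finsupp.sum_add_index' (fun _ => rfl) (fun _ _ _ => rfl)

lemma degE_single {n : ℕ} (S : NES n) (m : ℕ) : degE (Finsupp.single S m) = m :=
  Finsupp.sum_single_index rfl

lemma degE_Ee {n : ℕ} (F : Finset (Fin n)) (m : ℕ) (h : F.Nonempty) :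
    degE (Ee F m) = m := by
  rw [Ee, dif_pos h, degE_single]

lemma prod_monomial_one {n : ℕ} {ι : Type*} (s : Finset ι) (e : ι → (NES n →₀ ℕ)) :
    (∏ i ∈ s, (monomial (e i) (1 : ℂ) : YRing n)) = monomial (∑ i ∈ s, e i) 1 := by
  classical
  induction s using Finset.cons_induction with
  | empty => simp [MvPolynomial.monomial_zero']
  | cons a s ha ih =>
      rw [Finset.prod_cons, Finset.sum_cons, ih, monomial_mul, one_mul]

lemma list_prod_monomial_one {n : ℕ} (l : List (NES n →₀ ℕ)) :
    ((l.map fun e => (monomial e (1 : ℂ) : YRing n)).prod) = monomial l.sum 1 := by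
  induction l with
  | nil => simp [MvPolynomial.monomial_zero']
  | cons a l ih => rw [List.map_cons, List.prod_cons, ih, List.sum_cons, monomial_mul, one_mul]

lemma degE_finset_sum {n : ℕ} {ι : Type*} (s : Finset ι) (e : ι → (NES n →₀ ℕ)) :
    degE (∑ i ∈ s, e i) = ∑ i ∈ s, degE (e i) := by
  classical
  induction s using Finset.cons_induction with
  | empty => simp [degE_zero]
  | cons a s ha ih => rw [Finset.sum_cons, Finset.sum_cons, degE_add, ih]

lemma degE_list_sum {n : ℕ} (l : List (NES n →₀ ℕ)) :
    degE l.sum = (l.map degE).sum := by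
  induction l with
  | nil => simp [degE_zero]
  | cons a l ih => rw [List.sum_cons, degE_add, ih, List.map_cons, List.sum_cons]

lemma pref_nonempty {n r m : ℕ} (w : CWord n r m) (hm : 0 < m) {t : ℕ} (ht : 1 ≤ t) :
    (pref w t).Nonempty := by
  refine ⟨w.letter ⟨0, hm⟩, ?_⟩
  simp only [pref, mem_filter, mem_univ, true_and]
  exact ⟨⟨0, hm⟩, by exact ht, rfl⟩

/-- `btl` as a single monomial. -/
lemma btl_eq_monomial {n r m : ℕ} (w : CWord n r m) (lam : List ℕ) :
    btl w lam = monomial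
      ((∑ i : Fin m, Ee (pref w ((i : ℕ) + 1)) (mExp w i)) +
        (lam.map fun p => Ee (pref w p) r).sum) 1 := by
  unfold btl _root_.btw
  have h1 : (∏ i : Fin m, Yv (pref w ((i : ℕ) + 1)) ^ mExp w i)
      = monomial (∑ i : Fin m, Ee (pref w ((i : ℕ) + 1)) (mExp w i)) (1 : ℂ) := by
    rw [← prod_monomial_one]
    exact Finset.prod_congr rfl fun i _ => Yv_pow_eq _ _
  have h2 : ((lam.map fun p => Yv (pref w p) ^ r).prod)
      = monomial ((lam.map fun p => Ee (pref w p) r).sum) (1 : ℂ) := by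
    rw [← list_prod_monomial_one, List.map_map]
    congr 1
    exact List.map_congr_left fun p _ => Yv_pow_eq _ _
  rw [h1, h2, monomial_mul, one_mul]

/-- The key telescoping identity: `∑ mExp = c₀ + r·des`. -/
lemma sum_mExp {n r : ℕ} (hr : 1 ≤ r) (hn : 0 < n) (g : CPerm n r) :
    ∑ i : Fin n, mExp g i = (g.color ⟨0, hn⟩ : ℕ) + r * desNum g := by
  set a : ℕ → ℤ := fun t => if h : t < n then (g.color ⟨t, h⟩ : ℤ) else 0 with ha
  have ha_nonneg : ∀ t, (0 : ℤ) ≤ a t := by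
    intro t; simp only [ha]; split
    · exact Int.natCast_nonneg _
    · exact le_refl 0
  have ha_lt : ∀ t, a t < (r : ℤ) := by
    intro t; simp only [ha]; split
    · exact_mod_cast Fin.is_lt _
    · exact_mod_cast hr
  have hmono : ∀ i : Fin n, i ∉ DesSet g → a ((i : ℕ) + 1) ≤ a (i : ℕ) := by
    intro i hd
    by_cases h : (i : ℕ) + 1 < n
    · have hnc : ¬ colLt (g.letter ⟨(i : ℕ) + 1, h⟩, g.color ⟨(i : ℕ) + 1, h⟩)
          (g.letter i, g.color i) := by
        intro hc
        exact hd (by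
          simp only [DesSet, mem_filter, mem_univ, true_and]
          exact ⟨⟨(i : ℕ) + 1, h⟩, rfl, hc⟩)
      rw [colLt] at hnc
      push_neg at hnc
      have hle : g.color ⟨(i : ℕ) + 1, h⟩ ≤ g.color i := hnc.1
      have e1 : a ((i : ℕ) + 1) = (g.color ⟨(i : ℕ) + 1, h⟩ : ℤ) := by
        simp only [ha]; rw [dif_pos h]
      have e2 : a (i : ℕ) = (g.color i : ℤ) := by
        simp only [ha]; rw [dif_pos i.isLt]
      rw [e1, e2]
      exact_mod_cast hle
    · have e1 : a ((i : ℕ) + 1) = 0 := by simp only [ha]; rw [dif_neg h]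
      rw [e1]; exact ha_nonneg _
  have hnonneg : ∀ i : Fin n,
      (0 : ℤ) ≤ (a i - a ((i : ℕ) + 1)) + (if i ∈ DesSet g then (r : ℤ) else 0) := by
    intro i
    by_cases hd : i ∈ DesSet g
    · have h1 := ha_lt ((i : ℕ) + 1)
      have h2 := ha_nonneg (i : ℕ)
      simp only [if_pos hd]
      linarith
    · have h1 := hmono i hd
      simp only [if_neg hd]
      linarith
  have hcast : ∀ i : Fin n, ((mExp g i : ℕ) : ℤ) =
      (a i - a ((i : ℕ) + 1)) + (if i ∈ DesSet g then (r : ℤ) else 0) := by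
    intro i
    have e2 : a (i : ℕ) = (g.color i : ℤ) := by
      simp only [ha]; rw [dif_pos i.isLt]
    have e1 : a ((i : ℕ) + 1) =
        (if h : (i : ℕ) + 1 < n then (g.color ⟨(i : ℕ) + 1, h⟩ : ℤ) else 0) := by
      simp only [ha]
    unfold mExp
    rw [Int.toNat_of_nonneg]
    · rw [e2, e1]
    · have h := hnonneg i
      rw [e2, e1] at h
      exact h
  have key : ((∑ i : Fin n, mExp g i : ℕ) : ℤ) =
      ((g.color ⟨0, hn⟩ : ℕ) : ℤ) + (r : ℤ) * (desNum g : ℤ) := by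
    push_cast
    rw [Finset.sum_congr rfl fun i _ => hcast i, Finset.sum_add_distrib]
    have htel : (∑ i : Fin n, (a (i : ℕ) - a ((i : ℕ) + 1))) = a 0 - a n := by
      rw [Fin.sum_univ_eq_sum_range (fun t => a t - a (t + 1)) n]
      exact Finset.sum_range_sub' a n
    have hdes : (∑ i : Fin n, (if i ∈ DesSet g then (r : ℤ) else 0))
        = (r : ℤ) * (desNum g : ℤ) := by
      rw [Finset.sum_ite_mem, Finset.univ_inter, Finset.sum_const, desNum]
      push_cast
      ring
    rw [htel, hdes]
    have h0 : a 0 = ((g.color ⟨0, hn⟩ : ℕ) : ℤ) := by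
      simp only [ha]; rw [dif_pos hn]
    have hnn : a n = 0 := by simp only [ha]; rw [dif_neg (lt_irrefl n)]
    rw [h0, hnn]
    ring
  exact_mod_cast key

/-- For `g ∈ G_n` and a partition `λ` with `m` parts, each at most `n - k`,
the total degree of `b̃_{(g,λ)}` equals `c_1 + r·(m + des(g))`; consequently
`deg b̃_{(g,λ)} < kr` if and only if `m ≤ k - des(g) - 1`. -/
theorem totalDegree_btl (n k r : ℕ) (hr : 1 ≤ r) (hn : 0 < n) (hk : k ≤ n)
    (g : CPerm n r) (lam : List ℕ) (hsort : lam.Pairwise (· ≥ ·))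
    (hpos : ∀ p ∈ lam, 1 ≤ p) (hle : ∀ p ∈ lam, p ≤ n - k) :
    (btl g lam).totalDegree = (g.color ⟨0, hn⟩ : ℕ) + r * (lam.length + desNum g) ∧
    ((btl g lam).totalDegree < k * r ↔ lam.length + desNum g + 1 ≤ k) := by
  have hdeg : (btl g lam).totalDegree
      = (g.color ⟨0, hn⟩ : ℕ) + r * (lam.length + desNum g) := by
    rw [btl_eq_monomial g lam, totalDegree_monomial _ (one_ne_zero)]
    show degE _ = _
    rw [degE_add, degE_finset_sum, degE_list_sum, List.map_map]
    have h1 : (∑ i : Fin n, degE (Ee (pref g ((i : ℕ) + 1)) (mExp g i)))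
        = ∑ i : Fin n, mExp g i :=
      Finset.sum_congr rfl fun i _ =>
        degE_Ee _ _ (pref_nonempty g hn (Nat.le_add_left 1 _))
    have h2 : (lam.map (degE ∘ fun p => Ee (pref g p) r)) = lam.map (fun _ => r) :=
      List.map_congr_left fun p hp => degE_Ee _ _ (pref_nonempty g hn (hpos p hp))
    rw [h1, h2, sum_mExp hr hn g]
    have h3 : (lam.map fun _ => r).sum = lam.length * r := by
      rw [List.map_const', List.sum_replicate, smul_eq_mul]
    rw [h3]
    ring
  refine ⟨hdeg, ?_⟩
  rw [hdeg]
  have hc : (g.color ⟨0, hn⟩ : ℕ) < r := Fin.is_lt _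
  set c := (g.color ⟨0, hn⟩ : ℕ)
  set L := lam.length + desNum g with hL
  constructor
  · intro h2
    have h3 : r * L < r * k :=
      lt_of_le_of_lt (Nat.le_add_left _ _) (by rw [mul_comm k r] at h2; exact h2)
    have := Nat.lt_of_mul_lt_mul_left h3
    omega
  · intro h2
    calc c + r * L < r + r * L := by omega
      _ = r * (L + 1) := by ring
      _ ≤ r * k := Nat.mul_le_mul_left r h2
      _ = k * r := mul_comm r k

end
end
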